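/- arXiv:2210.15175 — 3 statements merged into one kernel-verified Lean document; each statement's English description precedes it below -/
import Mathlib

section
/- There is a universal constant C > 0 such that the following holds. Let X be a finite partially ordered set with |X| ≥ 2, let ℓ : [0,1]×[0,1] → ℝ≥0 be an L-Lipschitz loss function, let n ≥ 1 and ε ∈ (0,1]. Then there exists a randomized algorithm M mapping each dataset D ∈ (X×[0,1])^n to a probability distribution over monotone functions f : X → [0,1], such that M is ε-differentially private and for every dataset D, the expected excess empirical risk E_{f∼M(D)}[L_ℓ(f;D)] − min_{g monotone, g:X→[0,1]} L_ℓ(g;D) is at most C · L · width(X) · log|X| · (1 + log²(εn)) / (εn). -/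
set_option linter.unusedSectionVars false
set_option linter.unusedTactic false


open MeasureTheory

noncomputable section

/-- The (normalized) empirical risk of `f` on dataset `D` with loss `ℓ`. -/
def empRisk {X : Type*} (ℓ : ℝ → ℝ → ℝ) {n : ℕ} (f : X → ℝ) (D : Fin n → X × ℝ) : ℝ :=
  (1 / (n : ℝ)) * ∑ i, ℓ (f (D i).1) (D i).2

/-- A valid dataset: all labels lie in `[0,1]`. -/
def IsDataset {X : Type*} {n : ℕ} (D : Fin n → X × ℝ) : Prop :=
  ∀ i, (D i).2 ∈ Set.Icc (0 : ℝ) 1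

/-- Two (valid) datasets are neighboring if they differ in at most one entry. -/
def NeighborDS {X : Type*} {n : ℕ} (D D' : Fin n → X × ℝ) : Prop :=
  IsDataset D ∧ IsDataset D' ∧ ∃ i, ∀ j, j ≠ i → D j = D' j

/-- A monotone function on the poset `X` taking values in `[0,1]`. -/
def IsMonotone01 {X : Type*} [PartialOrder X] (f : X → ℝ) : Prop :=
  Monotone f ∧ ∀ x, f x ∈ Set.Icc (0 : ℝ) 1

/-- The optimal empirical risk over all monotone `[0,1]`-valued functions. -/
def optRisk {X : Type*} [PartialOrder X] (ℓ : ℝ → ℝ → ℝ) {n : ℕ} (D : Fin n → X × ℝ) : ℝ :=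
  ⨅ g : {g : X → ℝ // IsMonotone01 g}, empRisk ℓ g.1 D

/-- `(ε, δ)`-differential privacy of a mechanism `M` w.r.t. a neighboring relation. -/
def IsDP {I Ω : Type*} [MeasurableSpace Ω] (Neighbor : I → I → Prop)
    (M : I → Measure Ω) (ε δ : ℝ) : Prop :=
  ∀ D D', Neighbor D D' → ∀ S : Set Ω, MeasurableSet S →
    M D S ≤ ENNReal.ofReal (Real.exp ε) * M D' S + ENNReal.ofReal δ

/-- A loss function `ℓ : [0,1] × [0,1] → ℝ≥0` that is `L`-Lipschitz in its first argument. -/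
def IsLipschitzLoss (ℓ : ℝ → ℝ → ℝ) (L : ℝ) : Prop :=
  (∀ y z : ℝ, y ∈ Set.Icc (0:ℝ) 1 → z ∈ Set.Icc (0:ℝ) 1 → 0 ≤ ℓ y z) ∧
  (∀ y y' z : ℝ, y ∈ Set.Icc (0:ℝ) 1 → y' ∈ Set.Icc (0:ℝ) 1 → z ∈ Set.Icc (0:ℝ) 1 →
    |ℓ y z - ℓ y' z| ≤ L * |y - y'|)

/-- An `R`-distance-based loss function: `ℓ(y,y') = g(|y - y'|)` for a non-decreasing
nonnegative `g` with `g 0 = 0` and `g (1/2) ≥ R`. -/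
def IsDistanceBasedLoss (ℓ : ℝ → ℝ → ℝ) (R : ℝ) : Prop :=
  ∃ g : ℝ → ℝ, MonotoneOn g (Set.Icc (0:ℝ) 1) ∧ (∀ t ∈ Set.Icc (0:ℝ) 1, 0 ≤ g t) ∧
    g 0 = 0 ∧ R ≤ g (1 / 2) ∧
    ∀ y y' : ℝ, y ∈ Set.Icc (0:ℝ) 1 → y' ∈ Set.Icc (0:ℝ) 1 → ℓ y y' = g |y - y'|

/-- The width of a poset: the largest size of an antichain. -/
def posetWidth (X : Type*) [PartialOrder X] : ℕ :=
  sSup {k | ∃ A : Finset X, IsAntichain (· ≤ ·) (A : Set X) ∧ A.card = k}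

/-- An isotonic-regression mechanism: on each valid dataset it outputs a probability
distribution supported on monotone `[0,1]`-valued functions. -/
def IsIsoRegAlg {X : Type*} [PartialOrder X] {n : ℕ}
    (M : (Fin n → X × ℝ) → Measure (X → ℝ)) : Prop :=
  ∀ D : Fin n → X × ℝ, IsDataset D →
    IsProbabilityMeasure (M D) ∧ M D {f | IsMonotone01 f} = 1


open Finset

lemma sum_exp_pos {α : Type*} (F : Finset α) (hF : F.Nonempty) (f : α → ℝ) :
    0 < ∑ v ∈ F, Real.exp (f v) := by
  obtain ⟨v, hv⟩ := hF
  exact Finset.sum_pos' (fun u _ => (Real.exp_pos _).le) ⟨v, hv, Real.exp_pos _⟩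

lemma gibbs_ratio {α : Type*} (F : Finset α) (hF : F.Nonempty) (φ φ' : α → ℝ)
    (lam c Δ : ℝ)
    (h : ∀ v ∈ F, |φ v - φ' v - c| ≤ Δ) (hlam : 0 ≤ lam) (v : α) (hv : v ∈ F) :
    Real.exp (-lam * φ v) / (∑ u ∈ F, Real.exp (-lam * φ u)) ≤
      Real.exp (2 * lam * Δ) *
        (Real.exp (-lam * φ' v) / (∑ u ∈ F, Real.exp (-lam * φ' u))) := by
  have hZ : 0 < ∑ u ∈ F, Real.exp (-lam * φ u) := sum_exp_pos F hF _
  have hZ' : 0 < ∑ u ∈ F, Real.exp (-lam * φ' u) := sum_exp_pos F hF _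
  have h1 : Real.exp (-lam * φ v) ≤ Real.exp (lam * (Δ - c)) * Real.exp (-lam * φ' v) := by
    rw [← Real.exp_add]
    apply Real.exp_le_exp.mpr
    have h' := abs_le.1 (h v hv)
    nlinarith [h'.1, h'.2]
  have h3 : (∑ u ∈ F, Real.exp (-lam * φ' u)) * Real.exp (-(lam * (Δ + c))) ≤
      ∑ u ∈ F, Real.exp (-lam * φ u) := by
    rw [Finset.sum_mul]
    apply Finset.sum_le_sum
    intro u hu
    rw [← Real.exp_add]
    apply Real.exp_le_exp.mpr
    have h' := abs_le.1 (h u hu)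
    nlinarith [h'.1, h'.2]
  rw [div_le_iff₀ hZ]
  calc Real.exp (-lam * φ v)
      ≤ Real.exp (lam * (Δ - c)) * Real.exp (-lam * φ' v) := h1
    _ = Real.exp (2 * lam * Δ) * (Real.exp (-lam * φ' v) / (∑ u ∈ F, Real.exp (-lam * φ' u))) *
        ((∑ u ∈ F, Real.exp (-lam * φ' u)) * Real.exp (-(lam * (Δ + c)))) := by
        rw [mul_assoc]
        rw [show (Real.exp (-lam * φ' v) / (∑ u ∈ F, Real.exp (-lam * φ' u))) *
            ((∑ u ∈ F, Real.exp (-lam * φ' u)) * Real.exp (-(lam * (Δ + c)))) =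
            Real.exp (-lam * φ' v) * Real.exp (-(lam * (Δ + c))) from by
          field_simp]
        simp only [← Real.exp_add]
        congr 1; ring
    _ ≤ Real.exp (2 * lam * Δ) * (Real.exp (-lam * φ' v) / (∑ u ∈ F, Real.exp (-lam * φ' u))) *
        (∑ u ∈ F, Real.exp (-lam * φ u)) := by
        apply mul_le_mul_of_nonneg_left h3
        positivity

lemma mul_exp_neg_antitone {u u₀ : ℝ} (h1 : 1 ≤ u₀) (h2 : u₀ ≤ u) :
    u * Real.exp (-u) ≤ u₀ * Real.exp (-u₀) := by
  have key : u ≤ u₀ * Real.exp (u - u₀) := by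
    have := Real.add_one_le_exp (u - u₀)
    nlinarith [Real.exp_pos (u - u₀)]
  calc u * Real.exp (-u) ≤ (u₀ * Real.exp (u - u₀)) * Real.exp (-u) := by
        apply mul_le_mul_of_nonneg_right key (Real.exp_pos _).le
    _ = u₀ * Real.exp (-u₀) := by rw [mul_assoc, ← Real.exp_add]; ring_nf

lemma gibbs_util {α : Type*} (F : Finset α) (hF : F.Nonempty) (φ : α → ℝ)
    (lam : ℝ) (hlam : 0 < lam) (m : ℝ) (hm : ∀ v ∈ F, m ≤ φ v) (hmem : ∃ v ∈ F, φ v = m) :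
    (∑ v ∈ F, Real.exp (-lam * φ v) * φ v) / (∑ v ∈ F, Real.exp (-lam * φ v)) ≤
      m + 2 * (1 + Real.log F.card) / lam := by
  obtain ⟨v₀, hv₀, hv₀m⟩ := hmem
  have hK1 : (1:ℝ) ≤ F.card := by exact_mod_cast Finset.card_pos.mpr hF
  have hlogK : (0:ℝ) ≤ Real.log F.card := Real.log_nonneg hK1
  set B : ℝ := (1 + Real.log F.card) / lam with hB
  have hBpos : 0 < B := by positivity
  set ψ : α → ℝ := fun v => φ v - m with hψ
  have hψ0 : ∀ v ∈ F, 0 ≤ ψ v := fun v hv => by simp [hψ]; linarith [hm v hv]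
  -- rewrite weights
  have hw : ∀ v, Real.exp (-lam * φ v) = Real.exp (-lam * m) * Real.exp (-lam * ψ v) := by
    intro v; rw [← Real.exp_add]; congr 1; simp [hψ]; ring
  have hZt : (1:ℝ) ≤ ∑ v ∈ F, Real.exp (-lam * ψ v) := by
    have : Real.exp (-lam * ψ v₀) = 1 := by simp [hψ, hv₀m]
    calc (1:ℝ) = Real.exp (-lam * ψ v₀) := this.symm
      _ ≤ _ := Finset.single_le_sum (f := fun u => Real.exp (-lam * ψ u))
          (fun u _ => (Real.exp_pos _).le) hv₀
  have hZtpos : 0 < ∑ v ∈ F, Real.exp (-lam * ψ v) := lt_of_lt_of_le one_pos hZt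
  have hnum : ∑ v ∈ F, Real.exp (-lam * ψ v) * ψ v ≤
      B * (∑ v ∈ F, Real.exp (-lam * ψ v)) + B / Real.exp 1 := by
    have hterm : ∀ v ∈ F, Real.exp (-lam * ψ v) * ψ v ≤
        B * Real.exp (-lam * ψ v) + B / Real.exp 1 / F.card := by
      intro v hv
      rcases le_or_gt (ψ v) B with hle | hgt
      · have : Real.exp (-lam * ψ v) * ψ v ≤ Real.exp (-lam * ψ v) * B :=
          mul_le_mul_of_nonneg_left hle (Real.exp_pos _).le
        have h2' : (0:ℝ) ≤ B / Real.exp 1 / F.card := by positivity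
        calc Real.exp (-lam * ψ v) * ψ v ≤ Real.exp (-lam * ψ v) * B := this
          _ = B * Real.exp (-lam * ψ v) := mul_comm _ _
          _ ≤ B * Real.exp (-lam * ψ v) + B / Real.exp 1 / ↑F.card := le_add_of_nonneg_right h2'
      · -- ψ v > B : use antitone
        have hu : lam * B ≤ lam * ψ v := by nlinarith
        have h1B : 1 ≤ lam * B := by
          rw [hB]; field_simp; linarith
        have := mul_exp_neg_antitone h1B hu
        -- (lam ψ) e^{-lam ψ} ≤ (lam B) e^{-lam B}
        have hcard : (0:ℝ) < F.card := by linarith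
        have heB : Real.exp (-(lam * B)) = Real.exp (-1) / F.card := by
          rw [hB]
          rw [show -(lam * ((1 + Real.log (F.card:ℝ)) / lam)) =
              (-1) + (- Real.log (F.card:ℝ)) from by field_simp; ring]
          rw [Real.exp_add, Real.exp_neg (Real.log _), Real.exp_log hcard]
          ring
        have key : Real.exp (-lam * ψ v) * ψ v ≤ B / Real.exp 1 / F.card := by
          have e1 : Real.exp (-lam * ψ v) * ψ v = (lam * ψ v * Real.exp (-(lam * ψ v))) / lam := by
            field_simp
          rw [e1]
          rw [div_le_div_iff₀ hlam (by positivity)]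
          calc lam * ψ v * Real.exp (-(lam * ψ v)) * (F.card:ℝ)
              ≤ lam * B * Real.exp (-(lam * B)) * (F.card:ℝ) := by
                apply mul_le_mul_of_nonneg_right this hcard.le
            _ = B / Real.exp 1 * lam := by
                rw [heB, Real.exp_neg]
                field_simp
        have : 0 ≤ B * Real.exp (-lam * ψ v) := by positivity
        linarith [key]
    calc ∑ v ∈ F, Real.exp (-lam * ψ v) * ψ v
        ≤ ∑ v ∈ F, (B * Real.exp (-lam * ψ v) + B / Real.exp 1 / F.card) :=
          Finset.sum_le_sum hterm
      _ = B * (∑ v ∈ F, Real.exp (-lam * ψ v)) + B / Real.exp 1 := by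
          rw [Finset.sum_add_distrib, ← Finset.mul_sum, Finset.sum_const, nsmul_eq_mul]
          have hc : (F.card:ℝ) ≠ 0 := by positivity
          congr 1
          field_simp [hc]
    done
  -- now conclude
  have hmain : (∑ v ∈ F, Real.exp (-lam * φ v) * φ v) / (∑ v ∈ F, Real.exp (-lam * φ v))
      = m + (∑ v ∈ F, Real.exp (-lam * ψ v) * ψ v) / (∑ v ∈ F, Real.exp (-lam * ψ v)) := by
    have e2 : ∑ v ∈ F, Real.exp (-lam * φ v) * φ v
        = Real.exp (-lam * m) * (∑ v ∈ F, Real.exp (-lam * ψ v) * ψ v)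
          + m * (Real.exp (-lam * m) * ∑ v ∈ F, Real.exp (-lam * ψ v)) := by
      have hpt : ∀ v ∈ F, Real.exp (-lam * φ v) * φ v =
          Real.exp (-lam * m) * (Real.exp (-lam * ψ v) * ψ v) +
            m * (Real.exp (-lam * m) * Real.exp (-lam * ψ v)) := by
        intro v hv
        rw [hw v]
        simp only [hψ]
        ring
      rw [Finset.sum_congr rfl hpt, Finset.sum_add_distrib]
      congr 1
      · rw [← Finset.mul_sum]
      · rw [← Finset.mul_sum, ← Finset.mul_sum]
    have e3 : ∑ v ∈ F, Real.exp (-lam * φ v) = Real.exp (-lam * m) * ∑ v ∈ F, Real.exp (-lam * ψ v) := by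
      rw [Finset.mul_sum]; exact Finset.sum_congr rfl (fun v _ => hw v)
    have hexpm : (0:ℝ) < Real.exp (-lam * m) := Real.exp_pos _
    rw [e2, e3, add_div, mul_div_mul_left _ _ hexpm.ne', mul_div_assoc,
      div_self (ne_of_gt (mul_pos hexpm hZtpos)), mul_one, add_comm]
  rw [hmain]
  have : (∑ v ∈ F, Real.exp (-lam * ψ v) * ψ v) / (∑ v ∈ F, Real.exp (-lam * ψ v)) ≤ 2 * B := by
    rw [div_le_iff₀ hZtpos]
    have hBe : B / Real.exp 1 ≤ B * (∑ v ∈ F, Real.exp (-lam * ψ v)) := by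
      have h1 : B / Real.exp 1 ≤ B := by
        rw [div_le_iff₀ (Real.exp_pos _)]
        nlinarith [Real.exp_one_gt_d9, hBpos]
      calc B / Real.exp 1 ≤ B := h1
        _ = B * 1 := (mul_one B).symm
        _ ≤ _ := by apply mul_le_mul_of_nonneg_left hZt hBpos.le
    calc ∑ v ∈ F, Real.exp (-lam * ψ v) * ψ v
        ≤ B * (∑ v ∈ F, Real.exp (-lam * ψ v)) + B / Real.exp 1 := hnum
      _ ≤ 2 * B * (∑ v ∈ F, Real.exp (-lam * ψ v)) := by linarith
  have hBeq : 2 * B = 2 * (1 + Real.log F.card) / lam := by rw [hB]; ring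
  linarith [this]

lemma sum_range_double (m : ℕ) (f : ℕ → ℝ) :
    ∑ k ∈ Finset.range (2 * m), f k = ∑ j ∈ Finset.range m, (f (2*j) + f (2*j+1)) := by
  induction m with
  | zero => simp
  | succ m ih =>
    have h2 : 2 * (m+1) = (2*m) + 1 + 1 := by ring
    rw [h2, Finset.sum_range_succ, Finset.sum_range_succ, ih, Finset.sum_range_succ]
    ring

lemma card_filter_card_le {X : Type*} [Fintype X] [DecidableEq X] (w : ℕ) :
    (Finset.univ.filter (fun A : Finset X => A.card ≤ w)).card ≤ (Fintype.card X + 1) ^ w := by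
  classical
  set e := Fintype.equivFin X
  set enc : Finset X → (Fin w → Option (Fin (Fintype.card X))) :=
    fun A => fun i : Fin w => ((A.image e).sort (· ≤ ·))[i.1]? with henc
  have hinj : Set.InjOn enc (Finset.univ.filter (fun A : Finset X => A.card ≤ w)) := by
    intro A hA A' hA' h
    have hlen : ∀ B : Finset X, B.card ≤ w → ((B.image e).sort (· ≤ ·)).length ≤ w := by
      intro B hB
      rw [Finset.length_sort, Finset.card_image_of_injective _ e.injective]
      exact hB
    have hA1 : A.card ≤ w := by simpa using hA
    have hA'1 : A'.card ≤ w := by simpa using hA'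
    have hlists : (A.image e).sort (· ≤ ·) = (A'.image e).sort (· ≤ ·) := by
      apply List.ext_getElem?
      intro idx
      by_cases hidx : idx < w
      · exact congrFun h ⟨idx, hidx⟩
      · rw [List.getElem?_eq_none, List.getElem?_eq_none]
        · exact le_trans (hlen A' hA'1) (le_of_not_gt hidx)
        · exact le_trans (hlen A hA1) (le_of_not_gt hidx)
    have himg : A.image e = A'.image e := by
      rw [← Finset.sort_toFinset (A.image e) (· ≤ ·), ← Finset.sort_toFinset (A'.image e) (· ≤ ·),
        hlists]
    exact Finset.image_injective (Equiv.injective e) himg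
  calc (Finset.univ.filter (fun A : Finset X => A.card ≤ w)).card
      ≤ (Finset.univ : Finset (Fin w → Option (Fin (Fintype.card X)))).card := by
        apply Finset.card_le_card_of_injOn enc (fun a _ => Finset.mem_univ _) hinj
    _ = (Fintype.card X + 1) ^ w := by
        rw [Finset.card_univ, Fintype.card_fun]
        simp

section AuxMain
open scoped Classical

variable {X : Type} [Fintype X] [PartialOrder X]
variable (ℓ : ℝ → ℝ → ℝ) {n : ℕ} (D : Fin n → X × ℝ)

/-- infimal risk over monotone functions with values in `[a,b]`, restricted to data `J`. -/
noncomputable def sStar (J : Finset (Fin n)) (a b : ℝ) : ℝ :=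
  ⨅ h : {h : X → ℝ // Monotone h ∧ ∀ x, h x ∈ Set.Icc a b},
    ∑ i ∈ J, (n:ℝ)⁻¹ * ℓ (h.1 (D i).1) (D i).2

lemma monoSub_nonempty {a b : ℝ} (hab : a ≤ b) :
    Nonempty {h : X → ℝ // Monotone h ∧ ∀ x, h x ∈ Set.Icc a b} :=
  ⟨⟨fun _ => a, monotone_const, fun _ => ⟨le_refl a, hab⟩⟩⟩

variable {L : ℝ}

lemma sStar_val_nonneg (hL : IsLipschitzLoss ℓ L) (hD : IsDataset D)
    {a b : ℝ} (ha : 0 ≤ a) (hb : b ≤ 1) (J : Finset (Fin n))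
    (h : {h : X → ℝ // Monotone h ∧ ∀ x, h x ∈ Set.Icc a b}) :
    0 ≤ ∑ i ∈ J, (n:ℝ)⁻¹ * ℓ (h.1 (D i).1) (D i).2 := by
  apply Finset.sum_nonneg
  intro i _
  have hx := h.2.2 (D i).1
  have : 0 ≤ ℓ (h.1 (D i).1) (D i).2 :=
    hL.1 _ _ ⟨le_trans ha hx.1, le_trans hx.2 hb⟩ (hD i)
  positivity

lemma sStar_bddBelow (hL : IsLipschitzLoss ℓ L) (hD : IsDataset D)
    {a b : ℝ} (ha : 0 ≤ a) (hb : b ≤ 1) (J : Finset (Fin n)) :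
    BddBelow (Set.range fun h : {h : X → ℝ // Monotone h ∧ ∀ x, h x ∈ Set.Icc a b} =>
      ∑ i ∈ J, (n:ℝ)⁻¹ * ℓ (h.1 (D i).1) (D i).2) := by
  refine ⟨0, ?_⟩
  rintro r ⟨h, rfl⟩
  exact sStar_val_nonneg ℓ D hL hD ha hb J h

lemma sStar_nonneg (hL : IsLipschitzLoss ℓ L) (hD : IsDataset D)
    {a b : ℝ} (ha : 0 ≤ a) (hb : b ≤ 1) (hab : a ≤ b) (J : Finset (Fin n)) :
    0 ≤ sStar ℓ D J a b := by
  haveI := monoSub_nonempty (X := X) hab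
  exact le_ciInf (sStar_val_nonneg ℓ D hL hD ha hb J)

lemma sStar_le (hL : IsLipschitzLoss ℓ L) (hD : IsDataset D)
    {a b : ℝ} (ha : 0 ≤ a) (hb : b ≤ 1) (J : Finset (Fin n))
    (h : X → ℝ) (hmono : Monotone h) (hrange : ∀ x, h x ∈ Set.Icc a b) :
    sStar ℓ D J a b ≤ ∑ i ∈ J, (n:ℝ)⁻¹ * ℓ (h (D i).1) (D i).2 :=
  ciInf_le (sStar_bddBelow ℓ D hL hD ha hb J) ⟨h, hmono, hrange⟩

lemma le_sStar {a b : ℝ} (hab : a ≤ b) (J : Finset (Fin n)) {c : ℝ}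
    (H : ∀ h : X → ℝ, Monotone h → (∀ x, h x ∈ Set.Icc a b) →
      c ≤ ∑ i ∈ J, (n:ℝ)⁻¹ * ℓ (h (D i).1) (D i).2) :
    c ≤ sStar ℓ D J a b := by
  haveI := monoSub_nonempty (X := X) hab
  exact le_ciInf (fun h => H h.1 h.2.1 h.2.2)

lemma sStar_congr_right {D' : Fin n → X × ℝ} (J : Finset (Fin n))
    (H : ∀ i ∈ J, D i = D' i) (a b : ℝ) : sStar ℓ D J a b = sStar ℓ D' J a b := by
  unfold sStar
  apply iInf_congr
  intro h
  exact Finset.sum_congr rfl (fun i hi => by rw [H i hi])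

/-- dyadic grid point `β / 2^d`. -/
noncomputable def bnd (d β : ℕ) : ℝ := (β : ℝ) * ((2:ℝ)^d)⁻¹

lemma bnd_mono (d : ℕ) {β β' : ℕ} (h : β ≤ β') : bnd d β ≤ bnd d β' := by
  unfold bnd
  have : ((2:ℝ)^d)⁻¹ > 0 := by positivity
  have hc : (β:ℝ) ≤ (β':ℝ) := by exact_mod_cast h
  nlinarith

lemma bnd_double (d β : ℕ) : bnd (d+1) (2*β) = bnd d β := by
  unfold bnd
  push_cast
  rw [pow_succ]
  field_simp

lemma bnd_succ (d β : ℕ) : bnd d (β+1) = bnd d β + ((2:ℝ)^d)⁻¹ := by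
  unfold bnd; push_cast; ring

lemma bnd_nonneg (d β : ℕ) : 0 ≤ bnd d β := by unfold bnd; positivity

lemma bnd_le_one {d β : ℕ} (h : β ≤ 2^d) : bnd d β ≤ 1 := by
  unfold bnd
  rw [inv_eq_one_div, mul_comm, div_mul_eq_mul_div, div_le_one (by positivity)]
  have : (β:ℝ) ≤ (2:ℝ)^d := by exact_mod_cast h
  linarith

/-- indices of data points currently in band `β`. -/
noncomputable def Jset (g : X → ℕ) (β : ℕ) : Finset (Fin n) :=
  Finset.univ.filter (fun i => g (D i).1 = β)

/-- potential: sum over current bands of infimal completion risks. -/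
noncomputable def Phi (d : ℕ) (g : X → ℕ) : ℝ :=
  ∑ β ∈ Finset.range (2^d), sStar ℓ D (Jset D g β) (bnd d β) (bnd d (β+1))

/-- the finite set of admissible refinements of the state `g`. -/
noncomputable def Rset (g : X → ℕ) : Finset (X → ℕ) :=
  (Fintype.piFinset fun _x : X => ({2 * g _x, 2 * g _x + 1} : Finset ℕ)).filter
    fun g' => ∀ x y : X, x ≤ y → g x = g y → g' x ≤ g' y

lemma mem_Rset {g g' : X → ℕ} :
    g' ∈ Rset g ↔ (∀ x, g' x = 2 * g x ∨ g' x = 2 * g x + 1) ∧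
      (∀ x y : X, x ≤ y → g x = g y → g' x ≤ g' y) := by
  unfold Rset
  rw [Finset.mem_filter, Fintype.mem_piFinset]
  simp only [Finset.mem_insert, Finset.mem_singleton]

lemma Rset_nonempty (g : X → ℕ) : (Rset g).Nonempty := by
  refine ⟨fun x => 2 * g x, ?_⟩
  rw [mem_Rset]
  exact ⟨fun x => Or.inl rfl, fun x y _ hxy => by rw [hxy]⟩

def StateOK (d : ℕ) (g : X → ℕ) : Prop :=
  (∀ x, g x < 2^d) ∧ (∀ x y : X, x ≤ y → g x ≤ g y)

lemma stateOK_zero : StateOK (X := X) 0 (fun _ => 0) := ⟨fun _ => by norm_num, fun _ _ _ => le_refl 0⟩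

lemma stateOK_step {d : ℕ} {g g' : X → ℕ} (hg : StateOK d g) (hg' : g' ∈ Rset g) :
    StateOK (d+1) g' := by
  rw [mem_Rset] at hg'
  constructor
  · intro x
    rcases hg'.1 x with h | h <;> rw [h] <;> have := hg.1 x <;> rw [pow_succ] <;> omega
  · intro x y hxy
    rcases lt_or_eq_of_le (hg.2 x y hxy) with h | h
    · rcases hg'.1 x with h1 | h1 <;> rcases hg'.1 y with h2 | h2 <;> omega
    · exact hg'.2 x y hxy h

/-- the inverse temperature at level `d`. -/
noncomputable def lamd (ε₀ L : ℝ) (d : ℕ) : ℝ := ε₀ * 2^d * n / (4 * L)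

/-- one step of the recursive exponential mechanism. -/
noncomputable def qstep (ε₀ L : ℝ) (d : ℕ) (g g' : X → ℕ) : ℝ :=
  if g' ∈ Rset g then
    Real.exp (-(lamd (n := n) ε₀ L d) * Phi ℓ D (d+1) g') /
      ∑ u ∈ Rset g, Real.exp (-(lamd (n := n) ε₀ L d) * Phi ℓ D (d+1) u)
  else 0

/-- box of all states at level `d`. -/
noncomputable def SBox (d : ℕ) : Finset (X → ℕ) :=
  Fintype.piFinset fun _ : X => Finset.range (2^d)

/-- distribution over states after `d` rounds. -/
noncomputable def Pd (ε₀ L : ℝ) : ℕ → (X → ℕ) → ℝ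
  | 0 => fun g => if g = fun _ => 0 then 1 else 0
  | (d+1) => fun g' => ∑ g ∈ SBox (X := X) d, Pd ε₀ L d g * qstep ℓ D ε₀ L d g g'

lemma qstep_nonneg (ε₀ L : ℝ) (d : ℕ) (g g' : X → ℕ) : 0 ≤ qstep ℓ D ε₀ L d g g' := by
  unfold qstep
  split
  · have := sum_exp_pos (Rset g) (Rset_nonempty g)
      (fun u => -(lamd (n := n) ε₀ L d) * Phi ℓ D (d+1) u)
    positivity
  · exact le_refl 0

end AuxMain
section AuxMain2
open scoped Classical
open Finset

variable {X : Type} [Fintype X] [PartialOrder X]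
variable (ℓ : ℝ → ℝ → ℝ) {L : ℝ} {n : ℕ} (D : Fin n → X × ℝ)

lemma sStar_erase (hL : IsLipschitzLoss ℓ L) (hL0 : 0 ≤ L) (hD : IsDataset D)
    {J : Finset (Fin n)} {i : Fin n} (hi : i ∈ J) {a b v ρ : ℝ} (hab : a ≤ b)
    (hsub : Set.Icc a b ⊆ Set.Icc v (v + ρ)) (hv0 : 0 ≤ v) (hv1 : v + ρ ≤ 1) :
    |sStar ℓ D J a b - sStar ℓ D (J.erase i) a b - (n:ℝ)⁻¹ * ℓ v (D i).2| ≤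
      (n:ℝ)⁻¹ * (L * ρ) := by
  have hmem_a : a ∈ Set.Icc v (v + ρ) := hsub ⟨le_refl a, hab⟩
  have hmem_b : b ∈ Set.Icc v (v + ρ) := hsub ⟨hab, le_refl b⟩
  have ha : 0 ≤ a := le_trans hv0 hmem_a.1
  have hb : b ≤ 1 := le_trans hmem_b.2 hv1
  have hρ : 0 ≤ ρ := by
    have := hmem_a.1; have := hmem_a.2; linarith
  have hvIcc : v ∈ Set.Icc (0:ℝ) 1 := ⟨hv0, by linarith⟩
  have point : ∀ h : X → ℝ, (∀ x, h x ∈ Set.Icc a b) →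
      |ℓ (h (D i).1) (D i).2 - ℓ v (D i).2| ≤ L * ρ := by
    intro h hr
    have hx := hr (D i).1
    have hxIcc : h (D i).1 ∈ Set.Icc (0:ℝ) 1 := ⟨le_trans ha hx.1, le_trans hx.2 hb⟩
    have := hL.2 (h (D i).1) v (D i).2 hxIcc hvIcc (hD i)
    have habs : |h (D i).1 - v| ≤ ρ := by
      rw [abs_le]
      have h1 := hsub hx
      constructor <;> [linarith [h1.1]; linarith [h1.2]]
    calc |ℓ (h (D i).1) (D i).2 - ℓ v (D i).2| ≤ L * |h (D i).1 - v| := this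
      _ ≤ L * ρ := by nlinarith
  have hsplit : ∀ h : X → ℝ,
      ∑ j ∈ J, (n:ℝ)⁻¹ * ℓ (h (D j).1) (D j).2 =
        (∑ j ∈ J.erase i, (n:ℝ)⁻¹ * ℓ (h (D j).1) (D j).2) +
          (n:ℝ)⁻¹ * ℓ (h (D i).1) (D i).2 := by
    intro h
    rw [Finset.sum_erase_add _ _ hi]
  have hninv : (0:ℝ) ≤ (n:ℝ)⁻¹ := by positivity
  rw [abs_le]
  constructor
  · -- lower: sStar E + n⁻¹(ℓ v y - Lρ) ≤ sStar J
    have key : sStar ℓ D (J.erase i) a b + (n:ℝ)⁻¹ * (ℓ v (D i).2 - L * ρ) ≤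
        sStar ℓ D J a b := by
      apply le_sStar ℓ D hab
      intro h hmono hrange
      rw [hsplit h]
      have h1 : sStar ℓ D (J.erase i) a b ≤
          ∑ j ∈ J.erase i, (n:ℝ)⁻¹ * ℓ (h (D j).1) (D j).2 :=
        sStar_le ℓ D hL hD ha hb _ h hmono hrange
      have h2 : ℓ v (D i).2 - L * ρ ≤ ℓ (h (D i).1) (D i).2 := by
        have := abs_le.1 (point h hrange)
        linarith [this.1]
      have h3 : (n:ℝ)⁻¹ * (ℓ v (D i).2 - L * ρ) ≤ (n:ℝ)⁻¹ * ℓ (h (D i).1) (D i).2 := by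
        apply mul_le_mul_of_nonneg_left h2 hninv
      linarith
    have : (n:ℝ)⁻¹ * (ℓ v (D i).2 - L * ρ) =
        (n:ℝ)⁻¹ * ℓ v (D i).2 - (n:ℝ)⁻¹ * (L * ρ) := by ring
    linarith [key, this]
  · -- upper: sStar J ≤ sStar E + n⁻¹(ℓ v y + Lρ)
    have key : sStar ℓ D J a b - (n:ℝ)⁻¹ * (ℓ v (D i).2 + L * ρ) ≤
        sStar ℓ D (J.erase i) a b := by
      apply le_sStar ℓ D hab
      intro h hmono hrange
      have h1 : sStar ℓ D J a b ≤ ∑ j ∈ J, (n:ℝ)⁻¹ * ℓ (h (D j).1) (D j).2 :=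
        sStar_le ℓ D hL hD ha hb _ h hmono hrange
      rw [hsplit h] at h1
      have h2 : ℓ (h (D i).1) (D i).2 ≤ ℓ v (D i).2 + L * ρ := by
        have := abs_le.1 (point h hrange)
        linarith [this.2]
      have h3 : (n:ℝ)⁻¹ * ℓ (h (D i).1) (D i).2 ≤ (n:ℝ)⁻¹ * (ℓ v (D i).2 + L * ρ) :=
        mul_le_mul_of_nonneg_left h2 hninv
      linarith
    linarith [key]

lemma Jset_mem {g : X → ℕ} {β : ℕ} {i : Fin n} : i ∈ Jset D g β ↔ g (D i).1 = β := by
  unfold Jset; simp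

/-- the interval of band `β` at level `d+1` sits inside its parent interval at level `d`. -/
lemma child_sub {d : ℕ} {α β : ℕ} (hβ : β = 2 * α ∨ β = 2 * α + 1) :
    Set.Icc (bnd (d+1) β) (bnd (d+1) (β+1)) ⊆
      Set.Icc (bnd d α) (bnd d α + ((2:ℝ)^d)⁻¹) := by
  have e1 : bnd (d+1) (2*α) = bnd d α := bnd_double d α
  have e2 : bnd (d+1) (2*α+2) = bnd d α + ((2:ℝ)^d)⁻¹ := by
    have : (2*α+2) = 2*(α+1) := by ring
    rw [this, bnd_double d (α+1), bnd_succ]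
  apply Set.Icc_subset_Icc
  · rcases hβ with h | h <;> rw [h] <;> [rw [e1] ; skip]
    · rw [← e1]; exact bnd_mono (d+1) (by omega)
  · rcases hβ with h | h <;> rw [h] <;> rw [← e2] <;> exact bnd_mono (d+1) (by omega)

/-- key sensitivity bracket for the potential along a refinement. -/
lemma Phi_bracket (hL : IsLipschitzLoss ℓ L) (hL0 : 0 ≤ L)
    {D' : Fin n → X × ℝ} (hD : IsDataset D) (hD' : IsDataset D')
    {i0 : Fin n} (hnb : ∀ j, j ≠ i0 → D j = D' j)
    {d : ℕ} {g : X → ℕ} (hg : StateOK d g) {g' : X → ℕ} (hg' : g' ∈ Rset g) :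
    |Phi ℓ D (d+1) g' - Phi ℓ D' (d+1) g' -
        ((n:ℝ)⁻¹ * ℓ (bnd d (g (D i0).1)) (D i0).2 -
         (n:ℝ)⁻¹ * ℓ (bnd d (g (D' i0).1)) (D' i0).2)| ≤
      2 * ((n:ℝ)⁻¹ * (L * ((2:ℝ)^d)⁻¹)) := by
  set β : ℕ := g' ((D i0).1) with hβ
  set β' : ℕ := g' ((D' i0).1) with hβ'
  have hmem := (mem_Rset.1 hg').1
  -- bands at level d+1 and erase decomposition
  have hJer : ∀ γ : ℕ, (Jset D g' γ).erase i0 = (Jset D' g' γ).erase i0 := by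
    intro γ
    ext j
    simp only [Finset.mem_erase, Jset_mem]
    constructor
    · rintro ⟨hj, h2⟩; rw [← hnb j hj]; exact ⟨hj, h2⟩
    · rintro ⟨hj, h2⟩; rw [hnb j hj]; exact ⟨hj, h2⟩
  have hscongr : ∀ γ : ℕ, ∀ a b : ℝ,
      sStar ℓ D ((Jset D g' γ).erase i0) a b = sStar ℓ D' ((Jset D' g' γ).erase i0) a b := by
    intro γ a b
    rw [← hJer γ]
    apply sStar_congr_right
    intro j hj
    exact hnb j (Finset.mem_erase.1 hj).1
  -- the difference Phi - Ψ
  have hdiff : ∀ (E : Fin n → X × ℝ) (γ0 : ℕ), γ0 = g' ((E i0).1) → γ0 ∈ Finset.range (2^(d+1)) →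
      Phi ℓ E (d+1) g' - (∑ γ ∈ Finset.range (2^(d+1)),
        sStar ℓ E ((Jset E g' γ).erase i0) (bnd (d+1) γ) (bnd (d+1) (γ+1))) =
      sStar ℓ E (Jset E g' γ0) (bnd (d+1) γ0) (bnd (d+1) (γ0+1)) -
        sStar ℓ E ((Jset E g' γ0).erase i0) (bnd (d+1) γ0) (bnd (d+1) (γ0+1)) := by
    intro E γ0 hγ0 hγ0r
    unfold Phi
    rw [← Finset.sum_sub_distrib]
    rw [Finset.sum_eq_single γ0]
    · intro γ hγ hne
      have : i0 ∉ Jset E g' γ := by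
        rw [Jset_mem]
        omega
      rw [Finset.erase_eq_of_notMem this, sub_self]
    · intro habs
      exact absurd hγ0r habs
  have hβr : β ∈ Finset.range (2^(d+1)) := by
    rw [Finset.mem_range]
    rcases hmem ((D i0).1) with h | h <;> rw [hβ, h, pow_succ] <;>
      have := hg.1 (D i0).1 <;> omega
  have hβ'r : β' ∈ Finset.range (2^(d+1)) := by
    rw [Finset.mem_range]
    rcases hmem ((D' i0).1) with h | h <;> rw [hβ', h, pow_succ] <;>
      have := hg.1 (D' i0).1 <;> omega
  have hienJ : i0 ∈ Jset D g' β := (Jset_mem D).2 hβ.symm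
  have hienJ' : i0 ∈ Jset D' g' β' := (Jset_mem D').2 hβ'.symm
  have hup : ∀ z : X, bnd d (g z) + ((2:ℝ)^d)⁻¹ ≤ 1 := by
    intro z
    rw [← bnd_succ]
    exact bnd_le_one (by have := hg.1 z; omega)
  have brD := sStar_erase ℓ D hL hL0 hD hienJ (bnd_mono (d+1) (Nat.le_succ β))
    (child_sub (by rw [hβ]; exact hmem _)) (bnd_nonneg d (g ((D i0).1))) (hup _)
  have brD' := sStar_erase ℓ D' hL hL0 hD' hienJ' (bnd_mono (d+1) (Nat.le_succ β'))
    (child_sub (by rw [hβ']; exact hmem _)) (bnd_nonneg d (g ((D' i0).1))) (hup _)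
  have h1 := hdiff D β hβ hβr
  have h2 := hdiff D' β' hβ' hβ'r
  have hPsiEq : (∑ γ ∈ Finset.range (2^(d+1)),
        sStar ℓ D ((Jset D g' γ).erase i0) (bnd (d+1) γ) (bnd (d+1) (γ+1))) =
      (∑ γ ∈ Finset.range (2^(d+1)),
        sStar ℓ D' ((Jset D' g' γ).erase i0) (bnd (d+1) γ) (bnd (d+1) (γ+1))) :=
    Finset.sum_congr rfl (fun γ _ => hscongr γ _ _)
  have e1 := abs_le.1 brD
  have e2 := abs_le.1 brD'
  rw [abs_le]
  constructor
  · linarith [e1.1, e2.2, h1, h2, hPsiEq]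
  · linarith [e1.2, e2.1, h1, h2, hPsiEq]

lemma Rset_indep {g : X → ℕ} {d : ℕ} (hbd : ∀ x, g x < 2^d) : Rset g ⊆ SBox (X := X) (d+1) := by
  intro g' hg'
  rw [mem_Rset] at hg'
  unfold SBox
  rw [Fintype.mem_piFinset]
  intro x
  rw [Finset.mem_range]
  rcases hg'.1 x with h | h <;> rw [h, pow_succ] <;> have := hbd x <;> omega

lemma qstep_sum_one (ε₀ : ℝ) (d : ℕ) {g : X → ℕ} (hbd : ∀ x, g x < 2^d) :
    ∑ g' ∈ SBox (X := X) (d+1), qstep ℓ D ε₀ L d g g' = 1 := by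
  unfold qstep
  rw [Finset.sum_ite_mem]
  rw [Finset.inter_eq_right.mpr (Rset_indep hbd)]
  rw [← Finset.sum_div]
  rw [div_self]
  exact ne_of_gt (sum_exp_pos _ (Rset_nonempty g) _)

lemma Pd_nonneg (ε₀ : ℝ) : ∀ d (g : X → ℕ), 0 ≤ Pd ℓ D ε₀ L d g := by
  intro d
  induction d with
  | zero => intro g; simp only [Pd]; split <;> norm_num
  | succ d ih =>
    intro g'
    simp only [Pd]
    exact Finset.sum_nonneg fun g _ => mul_nonneg (ih g) (qstep_nonneg ℓ D _ _ _ _ _)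

lemma Pd_support (ε₀ : ℝ) : ∀ d (g : X → ℕ), Pd ℓ D ε₀ L d g ≠ 0 → StateOK d g := by
  intro d
  induction d with
  | zero =>
    intro g hg
    simp only [Pd] at hg
    split at hg
    · subst ‹g = fun _ => 0›; exact stateOK_zero
    · exact absurd rfl hg
  | succ d ih =>
    intro g' hg'
    simp only [Pd] at hg'
    obtain ⟨g, hgmem, hgne⟩ := Finset.exists_ne_zero_of_sum_ne_zero hg'
    have h1 : Pd ℓ D ε₀ L d g ≠ 0 := fun h => hgne (by rw [h, zero_mul])
    have h2 : qstep ℓ D ε₀ L d g g' ≠ 0 := fun h => hgne (by rw [h, mul_zero])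
    have hR : g' ∈ Rset g := by
      by_contra hc
      exact h2 (by unfold qstep; rw [if_neg hc])
    exact stateOK_step (ih g h1) hR

lemma Pd_zero_outside (ε₀ : ℝ) (d : ℕ) (g : X → ℕ) (hg : g ∉ SBox (X := X) d) :
    Pd ℓ D ε₀ L d g = 0 := by
  by_contra hc
  apply hg
  have := (Pd_support ℓ D ε₀ d g hc).1
  unfold SBox
  rw [Fintype.mem_piFinset]
  intro x
  rw [Finset.mem_range]
  exact this x

lemma Pd_sum_one (ε₀ : ℝ) : ∀ d, ∑ g ∈ SBox (X := X) d, Pd ℓ D ε₀ L d g = 1 := by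
  intro d
  induction d with
  | zero =>
    simp only [Pd]
    rw [Finset.sum_ite_eq' (SBox (X := X) 0) (fun _ => 0) (fun _ => 1)]
    rw [if_pos]
    unfold SBox
    rw [Fintype.mem_piFinset]
    intro x
    simp
  | succ d ih =>
    simp only [Pd]
    rw [Finset.sum_comm]
    calc ∑ g ∈ SBox (X := X) d, ∑ g' ∈ SBox (X := X) (d+1), Pd ℓ D ε₀ L d g * qstep ℓ D ε₀ L d g g'
        = ∑ g ∈ SBox (X := X) d, Pd ℓ D ε₀ L d g := by
          apply Finset.sum_congr rfl
          intro g hgmem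
          rw [← Finset.mul_sum]
          rcases eq_or_ne (Pd ℓ D ε₀ L d g) 0 with h | h
          · rw [h, zero_mul]
          · have hOK := Pd_support ℓ D ε₀ d g h
            rw [qstep_sum_one ℓ D ε₀ d hOK.1, mul_one]
      _ = 1 := ih

lemma qstep_ratio (hL : IsLipschitzLoss ℓ L) (hLpos : 0 < L) (hn : 1 ≤ n)
    {D' : Fin n → X × ℝ} (hD : IsDataset D) (hD' : IsDataset D')
    {i0 : Fin n} (hnb : ∀ j, j ≠ i0 → D j = D' j)
    {ε₀ : ℝ} (hε₀ : 0 ≤ ε₀) {d : ℕ} {g : X → ℕ} (hg : StateOK d g) (g' : X → ℕ) :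
    qstep ℓ D ε₀ L d g g' ≤ Real.exp ε₀ * qstep ℓ D' ε₀ L d g g' := by
  unfold qstep
  split_ifs with hmem
  · have hlam : 0 ≤ lamd (n := n) ε₀ L d := by
      unfold lamd
      positivity
    have key := gibbs_ratio (Rset g) (Rset_nonempty g)
      (Phi ℓ D (d+1)) (Phi ℓ D' (d+1)) (lamd (n := n) ε₀ L d)
      ((n:ℝ)⁻¹ * ℓ (bnd d (g (D i0).1)) (D i0).2 -
        (n:ℝ)⁻¹ * ℓ (bnd d (g (D' i0).1)) (D' i0).2)
      (2 * ((n:ℝ)⁻¹ * (L * ((2:ℝ)^d)⁻¹)))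
      (fun v hv => Phi_bracket ℓ D hL hLpos.le hD hD' hnb hg hv)
      hlam g' hmem
    have hexp : 2 * lamd (n := n) ε₀ L d * (2 * ((n:ℝ)⁻¹ * (L * ((2:ℝ)^d)⁻¹))) = ε₀ := by
      unfold lamd
      have hn0 : (n:ℝ) ≠ 0 := by positivity
      have h2d : ((2:ℝ)^d) ≠ 0 := by positivity
      field_simp
      ring
    rw [hexp] at key
    exact key
  · rw [mul_zero]

lemma Pd_ratio (hL : IsLipschitzLoss ℓ L) (hLpos : 0 < L) (hn : 1 ≤ n)
    {D' : Fin n → X × ℝ} (hD : IsDataset D) (hD' : IsDataset D')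
    {i0 : Fin n} (hnb : ∀ j, j ≠ i0 → D j = D' j)
    {ε₀ : ℝ} (hε₀ : 0 ≤ ε₀) : ∀ d (g : X → ℕ),
    Pd ℓ D ε₀ L d g ≤ Real.exp (d * ε₀) * Pd ℓ D' ε₀ L d g := by
  intro d
  induction d with
  | zero =>
    intro g
    simp only [Pd, Nat.cast_zero, zero_mul, Real.exp_zero, one_mul, le_refl]
  | succ d ih =>
    intro g'
    simp only [Pd]
    rw [Finset.mul_sum]
    apply Finset.sum_le_sum
    intro g hgmem
    rcases eq_or_ne (Pd ℓ D ε₀ L d g) 0 with h | h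
    · rw [h, zero_mul]
      have h1 := Pd_nonneg (L := L) ℓ D' ε₀ d g
      have h2 := qstep_nonneg ℓ D' ε₀ L d g g'
      exact mul_nonneg (Real.exp_pos _).le (mul_nonneg h1 h2)
    · have hOK := Pd_support ℓ D ε₀ d g h
      calc Pd ℓ D ε₀ L d g * qstep ℓ D ε₀ L d g g'
          ≤ (Real.exp (d * ε₀) * Pd ℓ D' ε₀ L d g) *
            (Real.exp ε₀ * qstep ℓ D' ε₀ L d g g') := by
            apply mul_le_mul (ih g) (qstep_ratio ℓ D hL hLpos hn hD hD' hnb hε₀ hOK g')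
              (qstep_nonneg ℓ D ε₀ L d g g')
            exact mul_nonneg (Real.exp_pos _).le (Pd_nonneg (L := L) ℓ D' ε₀ d g)
        _ = Real.exp ((d+1 : ℕ) * ε₀) * (Pd ℓ D' ε₀ L d g * qstep ℓ D' ε₀ L d g g') := by
            have hc : ((d+1 : ℕ) : ℝ) * ε₀ = d * ε₀ + ε₀ := by push_cast; ring
            rw [hc, Real.exp_add, mul_mul_mul_comm]

end AuxMain2
section AuxMain3
open scoped Classical
open Finset

variable {X : Type} [Fintype X] [PartialOrder X]
variable (ℓ : ℝ → ℝ → ℝ) {L : ℝ} {n : ℕ} (D : Fin n → X × ℝ)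

lemma antichain_bddAbove :
    BddAbove {k | ∃ A : Finset X, IsAntichain (· ≤ ·) (A : Set X) ∧ A.card = k} := by
  refine ⟨Fintype.card X, ?_⟩
  rintro k ⟨B, _, rfl⟩
  exact le_trans (Finset.card_le_univ B) (le_of_eq (Finset.card_univ))

lemma antichain_card_le (A : Finset X) (hA : IsAntichain (· ≤ ·) (A : Set X)) :
    A.card ≤ posetWidth X :=
  le_csSup antichain_bddAbove ⟨A, hA, rfl⟩

lemma one_le_posetWidth [Nonempty X] : 1 ≤ posetWidth X := by
  obtain ⟨x⟩ := ‹Nonempty X›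
  apply le_csSup antichain_bddAbove
  refine ⟨{x}, ?_, Finset.card_singleton x⟩
  rw [Finset.coe_singleton]
  exact Set.pairwise_singleton x _

/-- minimal elements of a finite set. -/
noncomputable def minSet (S : Finset X) : Finset X := S.filter (fun m => ∀ y ∈ S, ¬ y < m)

lemma minSet_antichain (S : Finset X) : IsAntichain (· ≤ ·) ((minSet S : Finset X) : Set X) := by
  intro a ha b hb hne hab
  simp only [minSet, Finset.coe_filter, Set.mem_setOf_eq] at ha hb
  exact hb.2 a ha.1 (lt_of_le_of_ne hab hne)

lemma minSet_card_le (S : Finset X) : (minSet S).card ≤ posetWidth X :=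
  antichain_card_le _ (minSet_antichain S)

lemma exists_min_below {S : Finset X} {x : X} (hx : x ∈ S) :
    ∃ m ∈ minSet S, m ≤ x := by
  obtain ⟨m, hm, hmin⟩ := Finset.exists_minimal (s := S.filter (fun y => y ≤ x))
    ⟨x, Finset.mem_filter.2 ⟨hx, le_refl x⟩⟩
  rw [Finset.mem_filter] at hm
  refine ⟨m, ?_, hm.2⟩
  rw [minSet, Finset.mem_filter]
  refine ⟨hm.1, ?_⟩
  intro y hy hlt
  exact hlt.not_ge (hmin (Finset.mem_filter.2 ⟨hy, le_trans hlt.le hm.2⟩) hlt.le)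

lemma Rset_card_le {d : ℕ} {g : X → ℕ} (hg : ∀ x, g x < 2^d) :
    ((Rset g).card : ℝ) ≤ (((Fintype.card X + 1) ^ (posetWidth X) : ℕ) : ℝ) ^ (2^d : ℕ) := by
  have key : (Rset g).card ≤ ((Fintype.card X + 1) ^ (posetWidth X)) ^ (2^d) := by
    set w := posetWidth X
    set T := Fintype.piFinset (fun _ : Fin (2^d) =>
      (Finset.univ.filter (fun A : Finset X => A.card ≤ w)))
    set enc : (X → ℕ) → (Fin (2^d) → Finset X) := fun g' => fun β =>
      minSet (Finset.univ.filter (fun x => g' x = 2 * g x + 1 ∧ g x = β.1)) with henc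
    have hrecover : ∀ g' ∈ Rset g, ∀ x : X,
        g' x = 2 * g x + 1 ↔ ∃ m ∈ enc g' ⟨g x, hg x⟩, m ≤ x := by
      intro g' hg' x
      rw [mem_Rset] at hg'
      constructor
      · intro hx
        obtain ⟨m, hm, hmx⟩ := exists_min_below
          (S := Finset.univ.filter (fun z => g' z = 2 * g z + 1 ∧ g z = g x))
          (x := x) (by simp [hx])
        exact ⟨m, hm, hmx⟩
      · rintro ⟨m, hm, hmx⟩
        have hmS := Finset.mem_filter.1 (Finset.mem_filter.1 hm).1
        have hm1 : g' m = 2 * g m + 1 := hmS.2.1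
        have hm2 : g m = g x := hmS.2.2
        have := hg'.2 m x hmx hm2
        rcases hg'.1 x with h | h <;> omega
    have hinj : Set.InjOn enc (Rset g) := by
      intro g1 h1 g2 h2 hEq
      funext x
      have e1 := hrecover g1 h1 x
      have e2 := hrecover g2 h2 x
      rw [hEq] at e1
      by_cases hP : ∃ m ∈ enc g2 ⟨g x, hg x⟩, m ≤ x
      · rw [e1.2 hP, e2.2 hP]
      · rcases (mem_Rset.1 h1).1 x with ha | ha
        · rcases (mem_Rset.1 h2).1 x with hb | hb
          · rw [ha, hb]
          · exact absurd (e2.1 hb) hP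
        · exact absurd (e1.1 ha) hP
    have hmapsto : ∀ g' ∈ Rset g, enc g' ∈ T := by
      intro g' _
      rw [Fintype.mem_piFinset]
      intro β
      rw [Finset.mem_filter]
      exact ⟨Finset.mem_univ _, minSet_card_le _⟩
    calc (Rset g).card ≤ T.card := Finset.card_le_card_of_injOn enc hmapsto hinj
      _ = ∏ _β : Fin (2^d), (Finset.univ.filter (fun A : Finset X => A.card ≤ w)).card := by
          rw [Fintype.card_piFinset]
      _ = (Finset.univ.filter (fun A : Finset X => A.card ≤ w)).card ^ (2^d) := by
          rw [Finset.prod_const, Finset.card_univ, Fintype.card_fin]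
      _ ≤ ((Fintype.card X + 1) ^ w) ^ (2^d) :=
          Nat.pow_le_pow_left (card_filter_card_le w) _
  calc ((Rset g).card : ℝ) ≤ (((Fintype.card X + 1) ^ (posetWidth X)) ^ (2^d) : ℕ) := by
        exact_mod_cast key
    _ = _ := by push_cast; ring
end AuxMain3
section AuxMain4
open scoped Classical
open Finset

variable {X : Type} [Fintype X] [PartialOrder X]
variable (ℓ : ℝ → ℝ → ℝ) {L : ℝ} {n : ℕ} (D : Fin n → X × ℝ)

lemma mem_SBox {d : ℕ} {g : X → ℕ} : g ∈ SBox (X := X) d ↔ ∀ x, g x < 2^d := by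
  unfold SBox
  rw [Fintype.mem_piFinset]
  simp only [Finset.mem_range]

lemma exists_split (hL : IsLipschitzLoss ℓ L) (hD : IsDataset D) {d : ℕ} {g : X → ℕ}
    (hg : StateOK d g) {η : ℝ} (hη : 0 < η) :
    ∃ g' ∈ Rset g, Phi ℓ D (d+1) g' ≤ Phi ℓ D d g + η := by
  have h2d : (0:ℝ) < 2^d := by positivity
  have hη' : 0 < η / 2^d := by positivity
  have Hc : ∀ β : ℕ, ∃ h : {h : X → ℝ // Monotone h ∧ ∀ x, h x ∈ Set.Icc (bnd d β) (bnd d (β+1))},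
      ∑ i ∈ Jset D g β, (n:ℝ)⁻¹ * ℓ (h.1 (D i).1) (D i).2 <
        sStar ℓ D (Jset D g β) (bnd d β) (bnd d (β+1)) + η / 2^d := by
    intro β
    haveI := monoSub_nonempty (X := X) (bnd_mono d (Nat.le_succ β))
    apply exists_lt_of_ciInf_lt
    exact lt_add_of_pos_right _ hη'
  choose hfun hspec using Hc
  set mid : ℕ → ℝ := fun β => bnd (d+1) (2*β+1) with hmid
  set g' : X → ℕ := fun x => if (hfun (g x)).1 x < mid (g x) then 2 * g x else 2 * g x + 1
    with hgdef
  have hmem : g' ∈ Rset g := by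
    rw [mem_Rset]
    constructor
    · intro x
      by_cases hc : (hfun (g x)).1 x < mid (g x) <;> simp [hgdef, hc]
    · intro x y hxy hgeq
      simp only [hgdef]
      rw [hgeq]
      have hmx : (hfun (g y)).1 x ≤ (hfun (g y)).1 y := (hfun (g y)).2.1 hxy
      by_cases hcy : (hfun (g y)).1 y < mid (g y)
      · rw [if_pos (lt_of_le_of_lt hmx hcy), if_pos hcy]
      · rw [if_neg hcy]
        split <;> omega
  refine ⟨g', hmem, ?_⟩
  have hband : ∀ β ∈ Finset.range (2^d),
      sStar ℓ D (Jset D g' (2*β)) (bnd (d+1) (2*β)) (bnd (d+1) (2*β+1)) +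
        sStar ℓ D (Jset D g' (2*β+1)) (bnd (d+1) (2*β+1)) (bnd (d+1) (2*β+1+1)) ≤
      sStar ℓ D (Jset D g β) (bnd d β) (bnd d (β+1)) + η / 2^d := by
    intro β hβ
    have hβd : β < 2^d := Finset.mem_range.1 hβ
    set h : X → ℝ := (hfun β).1 with hh
    have hhm : Monotone h := (hfun β).2.1
    have hhr : ∀ x, h x ∈ Set.Icc (bnd d β) (bnd d (β+1)) := (hfun β).2.2
    have e0 : bnd (d+1) (2*β) = bnd d β := bnd_double d β
    have e2 : bnd (d+1) (2*β+1+1) = bnd d (β+1) := by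
      rw [show 2*β+1+1 = 2*(β+1) by ring, bnd_double]
    have hmid_lb : bnd d β ≤ mid β := by rw [← e0]; exact bnd_mono _ (by omega)
    have hmid_ub : mid β ≤ bnd d (β+1) := by rw [← e2]; exact bnd_mono _ (by omega)
    have hb1 : bnd d (β+1) ≤ 1 := bnd_le_one (by omega)
    have hJlo : Jset D g' (2*β) = (Jset D g β).filter (fun i => h (D i).1 < mid β) := by
      ext i
      rw [Jset_mem D, Finset.mem_filter, Jset_mem D]
      constructor
      · intro hi
        simp only [hgdef] at hi
        split_ifs at hi with hc
        · have hx : g (D i).1 = β := by omega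
          rw [hx] at hc
          exact ⟨hx, hc⟩
        · omega
      · rintro ⟨hx, hc⟩
        simp only [hgdef]
        rw [hx, if_pos hc]
    have hJhi : Jset D g' (2*β+1) = (Jset D g β).filter (fun i => ¬ h (D i).1 < mid β) := by
      ext i
      rw [Jset_mem D, Finset.mem_filter, Jset_mem D]
      constructor
      · intro hi
        simp only [hgdef] at hi
        split_ifs at hi with hc
        · omega
        · have hx : g (D i).1 = β := by omega
          rw [hx] at hc
          exact ⟨hx, hc⟩
      · rintro ⟨hx, hc⟩
        simp only [hgdef]
        rw [hx, if_neg hc]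
    have hlo : sStar ℓ D (Jset D g' (2*β)) (bnd (d+1) (2*β)) (bnd (d+1) (2*β+1)) ≤
        ∑ i ∈ Jset D g' (2*β), (n:ℝ)⁻¹ * ℓ (h (D i).1) (D i).2 := by
      have hstep := sStar_le ℓ D hL hD
        (show (0:ℝ) ≤ bnd (d+1) (2*β) by rw [e0]; exact bnd_nonneg d β)
        (show bnd (d+1) (2*β+1) ≤ 1 from le_trans hmid_ub hb1) (Jset D g' (2*β))
        (fun x => min (h x) (mid β)) (hhm.min monotone_const)
        (fun x => ⟨by rw [e0]; exact le_min (hhr x).1 hmid_lb, min_le_right _ _⟩)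
      refine le_trans hstep (le_of_eq (Finset.sum_congr rfl ?_))
      intro i hi
      rw [hJlo, Finset.mem_filter] at hi
      simp only [min_eq_left hi.2.le]
    have hhi : sStar ℓ D (Jset D g' (2*β+1)) (bnd (d+1) (2*β+1)) (bnd (d+1) (2*β+1+1)) ≤
        ∑ i ∈ Jset D g' (2*β+1), (n:ℝ)⁻¹ * ℓ (h (D i).1) (D i).2 := by
      have hstep := sStar_le ℓ D hL hD
        (show (0:ℝ) ≤ bnd (d+1) (2*β+1) from le_trans (bnd_nonneg d β) hmid_lb)
        (show bnd (d+1) (2*β+1+1) ≤ 1 by rw [e2]; exact hb1) (Jset D g' (2*β+1))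
        (fun x => max (h x) (mid β)) (hhm.max monotone_const)
        (fun x => ⟨le_max_right _ _, by rw [e2]; exact max_le (hhr x).2 hmid_ub⟩)
      refine le_trans hstep (le_of_eq (Finset.sum_congr rfl ?_))
      intro i hi
      rw [hJhi, Finset.mem_filter] at hi
      simp only [max_eq_left (not_lt.1 hi.2)]
    have hsum : (∑ i ∈ Jset D g' (2*β), (n:ℝ)⁻¹ * ℓ (h (D i).1) (D i).2) +
        (∑ i ∈ Jset D g' (2*β+1), (n:ℝ)⁻¹ * ℓ (h (D i).1) (D i).2) =
        ∑ i ∈ Jset D g β, (n:ℝ)⁻¹ * ℓ (h (D i).1) (D i).2 := by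
      rw [hJlo, hJhi, Finset.sum_filter_add_sum_filter_not]
    have hopt := (hspec β).le
    linarith
  have h2pow : 2^(d+1) = 2 * 2^d := by rw [pow_succ]; ring
  show Phi ℓ D (d+1) g' ≤ Phi ℓ D d g + η
  unfold Phi
  rw [h2pow, sum_range_double (2^d)
    (fun γ => sStar ℓ D (Jset D g' γ) (bnd (d+1) γ) (bnd (d+1) (γ+1)))]
  calc ∑ β ∈ Finset.range (2^d),
        (sStar ℓ D (Jset D g' (2*β)) (bnd (d+1) (2*β)) (bnd (d+1) (2*β+1)) +
          sStar ℓ D (Jset D g' (2*β+1)) (bnd (d+1) (2*β+1)) (bnd (d+1) (2*β+1+1)))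
      ≤ ∑ β ∈ Finset.range (2^d),
          (sStar ℓ D (Jset D g β) (bnd d β) (bnd d (β+1)) + η / 2^d) :=
        Finset.sum_le_sum hband
    _ = (∑ β ∈ Finset.range (2^d), sStar ℓ D (Jset D g β) (bnd d β) (bnd d (β+1))) + η := by
        rw [Finset.sum_add_distrib, Finset.sum_const, Finset.card_range, nsmul_eq_mul]
        congr 1
        field_simp
        norm_cast
    _ = _ := rfl

lemma qstep_expect (hL : IsLipschitzLoss ℓ L) (hD : IsDataset D)
    (hLpos : 0 < L) (hn : 1 ≤ n) {ε₀ : ℝ} (hε₀ : 0 < ε₀) {d : ℕ} {g : X → ℕ}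
    (hg : StateOK d g) :
    ∑ g' ∈ SBox (X := X) (d+1), qstep ℓ D ε₀ L d g g' * Phi ℓ D (d+1) g' ≤
      Phi ℓ D d g + 2 * (1 + Real.log ((Rset g).card)) / lamd (n := n) ε₀ L d := by
  have hnpos : (0:ℝ) < n := by exact_mod_cast hn
  have hlam : 0 < lamd (n := n) ε₀ L d := by
    unfold lamd
    positivity
  have hred : ∑ g' ∈ SBox (X := X) (d+1), qstep ℓ D ε₀ L d g g' * Phi ℓ D (d+1) g' =
      (∑ g' ∈ Rset g, Real.exp (-(lamd (n := n) ε₀ L d) * Phi ℓ D (d+1) g') *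
        Phi ℓ D (d+1) g') /
      (∑ u ∈ Rset g, Real.exp (-(lamd (n := n) ε₀ L d) * Phi ℓ D (d+1) u)) := by
    unfold qstep
    simp only [ite_mul, zero_mul]
    rw [Finset.sum_ite_mem, Finset.inter_eq_right.mpr (Rset_indep hg.1), Finset.sum_div]
    apply Finset.sum_congr rfl
    intro g' _
    ring
  rw [hred]
  obtain ⟨gmin, hgmin, hmin⟩ := Finset.exists_min_image (Rset g) (Phi ℓ D (d+1)) (Rset_nonempty g)
  have util := gibbs_util (Rset g) (Rset_nonempty g) (Phi ℓ D (d+1))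
    (lamd (n := n) ε₀ L d) hlam (Phi ℓ D (d+1) gmin) (fun v hv => hmin v hv) ⟨gmin, hgmin, rfl⟩
  have hmle : Phi ℓ D (d+1) gmin ≤ Phi ℓ D d g := by
    apply le_of_forall_pos_le_add
    intro η hη
    obtain ⟨g', hg', hle⟩ := exists_split ℓ D hL hD hg hη
    exact le_trans (hmin g' hg') hle
  have hconst : (0:ℝ) ≤ 2 * (1 + Real.log ((Rset g).card)) / lamd (n := n) ε₀ L d := by
    have hK1 : (1:ℝ) ≤ ((Rset g).card : ℝ) := by
      exact_mod_cast Finset.card_pos.mpr (Rset_nonempty g)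
    have := Real.log_nonneg hK1
    positivity
  linarith [util]

/-- expected potential after `d` rounds. -/
noncomputable def Ed (ε₀ L : ℝ) (d : ℕ) : ℝ :=
  ∑ g ∈ SBox (X := X) d, Pd ℓ D ε₀ L d g * Phi ℓ D d g

lemma Ed_step (hL : IsLipschitzLoss ℓ L) (hD : IsDataset D)
    (hLpos : 0 < L) (hn : 1 ≤ n) {ε₀ : ℝ} (hε₀ : 0 < ε₀) (d : ℕ) :
    Ed ℓ D ε₀ L (d+1) ≤ Ed ℓ D ε₀ L d +
      2 * (1 + (2:ℝ)^d * ((posetWidth X : ℝ) * Real.log ((Fintype.card X : ℝ) + 1))) /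
        lamd (n := n) ε₀ L d := by
  have hnpos : (0:ℝ) < n := by exact_mod_cast hn
  have hlam : 0 < lamd (n := n) ε₀ L d := by unfold lamd; positivity
  set err := 2 * (1 + (2:ℝ)^d * ((posetWidth X : ℝ) * Real.log ((Fintype.card X : ℝ) + 1))) /
    lamd (n := n) ε₀ L d with herrdef
  have herr : ∀ g : X → ℕ, StateOK d g →
      2 * (1 + Real.log ((Rset g).card)) / lamd (n := n) ε₀ L d ≤ err := by
    intro g hg
    rw [herrdef]
    have hcX : 0 < Fintype.card X + 1 := by omega
    have hKpos : (0:ℝ) < ((Rset g).card : ℝ) := by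
      exact_mod_cast Finset.card_pos.mpr (Rset_nonempty g)
    have hb := Rset_card_le (g := g) hg.1
    have hlog : Real.log ((Rset g).card : ℝ) ≤
        (2:ℝ)^d * ((posetWidth X : ℝ) * Real.log ((Fintype.card X : ℝ) + 1)) := by
      have h2 := Real.log_le_log hKpos hb
      rw [Real.log_pow] at h2
      push_cast at h2
      rw [Real.log_pow] at h2
      push_cast at h2
      refine h2.trans_eq ?_
      ring
    gcongr
  calc Ed ℓ D ε₀ L (d+1)
      = ∑ g ∈ SBox (X := X) d, Pd ℓ D ε₀ L d g *
          (∑ g' ∈ SBox (X := X) (d+1), qstep ℓ D ε₀ L d g g' * Phi ℓ D (d+1) g') := by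
        unfold Ed
        simp only [Pd]
        rw [Finset.sum_congr rfl (fun g' _ => Finset.sum_mul _ _ _), Finset.sum_comm]
        apply Finset.sum_congr rfl
        intro g _
        rw [Finset.mul_sum]
        apply Finset.sum_congr rfl
        intro g' _
        rw [mul_assoc]
    _ ≤ ∑ g ∈ SBox (X := X) d, Pd ℓ D ε₀ L d g * (Phi ℓ D d g + err) := by
        apply Finset.sum_le_sum
        intro g _
        rcases eq_or_ne (Pd ℓ D ε₀ L d g) 0 with h | h
        · rw [h, zero_mul, zero_mul]
        · have hOK := Pd_support ℓ D ε₀ d g h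
          apply mul_le_mul_of_nonneg_left _ (Pd_nonneg ℓ D ε₀ d g)
          calc ∑ g' ∈ SBox (X := X) (d+1), qstep ℓ D ε₀ L d g g' * Phi ℓ D (d+1) g'
              ≤ Phi ℓ D d g + 2 * (1 + Real.log ((Rset g).card)) / lamd (n := n) ε₀ L d :=
                qstep_expect ℓ D hL hD hLpos hn hε₀ hOK
            _ ≤ Phi ℓ D d g + err := by linarith [herr g hOK]
    _ = Ed ℓ D ε₀ L d + err := by
        rw [Finset.sum_congr rfl (fun g _ => mul_add (Pd ℓ D ε₀ L d g) (Phi ℓ D d g) err),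
          Finset.sum_add_distrib, ← Finset.sum_mul, Pd_sum_one ℓ D ε₀ d, one_mul]
        rfl

end AuxMain4
section AuxMain5
open scoped Classical
open Finset

variable {X : Type} [Fintype X] [PartialOrder X]
variable (ℓ : ℝ → ℝ → ℝ) {L : ℝ} {n : ℕ} (D : Fin n → X × ℝ)

lemma Phi_zero : Phi ℓ D 0 (fun _ => 0) = optRisk ℓ D := by
  unfold Phi
  rw [pow_zero, Finset.sum_range_one]
  have hJ : Jset D (fun _ : X => 0) 0 = Finset.univ := by
    apply Finset.filter_true_of_mem
    intro i _
    rfl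
  have hb0 : bnd 0 0 = 0 := by norm_num [bnd]
  have hb1 : bnd 0 (0+1) = 1 := by norm_num [bnd]
  rw [hJ, hb0, hb1]
  unfold sStar optRisk empRisk IsMonotone01
  apply iInf_congr
  intro h
  rw [Finset.mul_sum]
  apply Finset.sum_congr rfl
  intro i _
  rw [one_div]

lemma Ed_zero (ε₀ : ℝ) : Ed ℓ D ε₀ L 0 = optRisk ℓ D := by
  rw [← Phi_zero ℓ D]
  unfold Ed
  simp only [Pd]
  rw [Finset.sum_eq_single (fun _ : X => 0)]
  · rw [if_pos rfl, one_mul]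
  · intro g _ hne
    rw [if_neg hne, zero_mul]
  · intro habs
    exfalso
    apply habs
    rw [mem_SBox]
    intro x
    norm_num

lemma Ed_telescope (hL : IsLipschitzLoss ℓ L) (hD : IsDataset D)
    (hLpos : 0 < L) (hn : 1 ≤ n) {ε₀ : ℝ} (hε₀ : 0 < ε₀) (T : ℕ) :
    Ed ℓ D ε₀ L T ≤ optRisk ℓ D +
      T * (8 * L * (1 + (posetWidth X : ℝ) * Real.log ((Fintype.card X : ℝ) + 1)) / (ε₀ * n)) := by
  have hnpos : (0:ℝ) < n := by exact_mod_cast hn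
  set A : ℝ := (posetWidth X : ℝ) * Real.log ((Fintype.card X : ℝ) + 1) with hA
  have hA0 : 0 ≤ A := by
    rw [hA]
    have : (0:ℝ) ≤ Real.log ((Fintype.card X : ℝ) + 1) := by
      apply Real.log_nonneg
      have : (0:ℝ) ≤ (Fintype.card X : ℝ) := by positivity
      linarith
    positivity
  set EB : ℝ := 8 * L * (1 + A) / (ε₀ * n) with hEB
  have herrle : ∀ d : ℕ,
      2 * (1 + (2:ℝ)^d * A) / lamd (n := n) ε₀ L d ≤ EB := by
    intro d
    have h2d : (0:ℝ) < (2:ℝ)^d := by positivity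
    have heq : 2 * (1 + (2:ℝ)^d * A) / lamd (n := n) ε₀ L d =
        8 * L * (((2:ℝ)^d)⁻¹ + A) / (ε₀ * n) := by
      unfold lamd
      field_simp
      ring
    rw [heq, hEB]
    gcongr
    rw [inv_le_one_iff₀]
    right
    exact one_le_pow₀ (by norm_num)
  induction T with
  | zero =>
    rw [Ed_zero]
    simp
  | succ T ih =>
    calc Ed ℓ D ε₀ L (T+1) ≤ Ed ℓ D ε₀ L T +
          2 * (1 + (2:ℝ)^T * A) / lamd (n := n) ε₀ L T := Ed_step ℓ D hL hD hLpos hn hε₀ T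
      _ ≤ (optRisk ℓ D + T * EB) + EB := by
          have := herrle T
          linarith [ih]
      _ = optRisk ℓ D + (T+1 : ℕ) * EB := by
          push_cast
          ring

lemma sum_Jset_partition {T : ℕ} {g : X → ℕ} (hOK : ∀ x, g x < 2^T) (f : Fin n → ℝ) :
    ∑ β ∈ Finset.range (2^T), ∑ i ∈ Jset D g β, f i = ∑ i, f i := by
  unfold Jset
  exact Finset.sum_fiberwise_of_maps_to (fun i _ => Finset.mem_range.2 (hOK _)) f

lemma final_risk (hL : IsLipschitzLoss ℓ L) (hD : IsDataset D) (hL0 : 0 ≤ L)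
    (hn : 1 ≤ n) {T : ℕ} {g : X → ℕ} (hOK : StateOK T g) :
    empRisk ℓ (fun x => bnd T (g x)) D ≤ Phi ℓ D T g + L * ((2:ℝ)^T)⁻¹ := by
  have hnpos : (0:ℝ) < n := by exact_mod_cast hn
  set ρ : ℝ := ((2:ℝ)^T)⁻¹ with hρdef
  have hρ0 : 0 ≤ ρ := by positivity
  have hpart1 := sum_Jset_partition (D := D) (g := g) hOK.1
    (fun i => (n:ℝ)⁻¹ * ℓ (bnd T (g (D i).1)) (D i).2)
  have hpart2 := sum_Jset_partition (D := D) (g := g) hOK.1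
    (fun _ => (n:ℝ)⁻¹ * (L * ρ))
  have hband : ∀ β ∈ Finset.range (2^T),
      ∑ i ∈ Jset D g β, (n:ℝ)⁻¹ * ℓ (bnd T β) (D i).2 ≤
        sStar ℓ D (Jset D g β) (bnd T β) (bnd T (β+1)) +
          ∑ i ∈ Jset D g β, (n:ℝ)⁻¹ * (L * ρ) := by
    intro β hβ
    have hβT : β < 2^T := Finset.mem_range.1 hβ
    have hbl : (0:ℝ) ≤ bnd T β := bnd_nonneg T β
    have hbu : bnd T (β+1) ≤ 1 := bnd_le_one (by omega)
    have hbw : bnd T (β+1) = bnd T β + ρ := bnd_succ T β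
    have key : (∑ i ∈ Jset D g β,
        ((n:ℝ)⁻¹ * ℓ (bnd T β) (D i).2 - (n:ℝ)⁻¹ * (L * ρ))) ≤
        sStar ℓ D (Jset D g β) (bnd T β) (bnd T (β+1)) := by
      apply le_sStar ℓ D (bnd_mono T (Nat.le_succ β))
      intro h hmono hrange
      apply Finset.sum_le_sum
      intro i _
      have hx := hrange (D i).1
      have hIcc1 : bnd T β ∈ Set.Icc (0:ℝ) 1 :=
        ⟨hbl, le_trans (bnd_mono T (Nat.le_succ β)) hbu⟩
      have hIcc2 : h (D i).1 ∈ Set.Icc (0:ℝ) 1 := ⟨le_trans hbl hx.1, le_trans hx.2 hbu⟩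
      have hlip := hL.2 (bnd T β) (h (D i).1) (D i).2 hIcc1 hIcc2 (hD i)
      have habs : |bnd T β - h (D i).1| ≤ ρ := by
        rw [abs_le]
        have h1 := hx.1
        have h2 := hx.2
        rw [hbw] at h2
        constructor <;> linarith
      have hlL : |ℓ (bnd T β) (D i).2 - ℓ (h (D i).1) (D i).2| ≤ L * ρ :=
        le_trans hlip (mul_le_mul_of_nonneg_left habs hL0)
      have h3 := (abs_le.1 hlL).2
      have h4 : ℓ (bnd T β) (D i).2 - L * ρ ≤ ℓ (h (D i).1) (D i).2 := by linarith
      have h5 := mul_le_mul_of_nonneg_left h4 (by positivity : (0:ℝ) ≤ (n:ℝ)⁻¹)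
      linarith [h5]
    rw [Finset.sum_sub_distrib] at key
    linarith
  unfold empRisk
  calc (1/(n:ℝ)) * ∑ i, ℓ ((fun x => bnd T (g x)) (D i).1) (D i).2
      = ∑ i, (n:ℝ)⁻¹ * ℓ (bnd T (g (D i).1)) (D i).2 := by
        rw [Finset.mul_sum]
        apply Finset.sum_congr rfl
        intro i _
        rw [one_div]
    _ = ∑ β ∈ Finset.range (2^T), ∑ i ∈ Jset D g β,
          (n:ℝ)⁻¹ * ℓ (bnd T (g (D i).1)) (D i).2 := hpart1.symm
    _ = ∑ β ∈ Finset.range (2^T), ∑ i ∈ Jset D g β,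
          (n:ℝ)⁻¹ * ℓ (bnd T β) (D i).2 := by
        apply Finset.sum_congr rfl
        intro β _
        apply Finset.sum_congr rfl
        intro i hi
        rw [(Jset_mem D).1 hi]
    _ ≤ ∑ β ∈ Finset.range (2^T),
          (sStar ℓ D (Jset D g β) (bnd T β) (bnd T (β+1)) +
            ∑ i ∈ Jset D g β, (n:ℝ)⁻¹ * (L * ρ)) := Finset.sum_le_sum hband
    _ = Phi ℓ D T g + ∑ β ∈ Finset.range (2^T), ∑ i ∈ Jset D g β, (n:ℝ)⁻¹ * (L * ρ) := by
        rw [Finset.sum_add_distrib]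
        rfl
    _ = Phi ℓ D T g + L * ρ := by
        rw [hpart2]
        congr 1
        rw [Finset.sum_const, Finset.card_univ, Fintype.card_fin, nsmul_eq_mul]
        field_simp

end AuxMain5
section AuxMain6
open scoped Classical
open Finset

variable {X : Type} [Fintype X] [PartialOrder X]
variable (ℓ : ℝ → ℝ → ℝ) {L : ℝ} {n : ℕ} (D : Fin n → X × ℝ)

/-- the output measure of the recursive exponential mechanism. -/
noncomputable def Mech (ε₀ L : ℝ) (T : ℕ) : Measure (X → ℝ) :=
  ∑ g ∈ SBox (X := X) T,
    ENNReal.ofReal (Pd ℓ D ε₀ L T g) • Measure.dirac (fun x => bnd T (g x))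

lemma Mech_apply (ε₀ L : ℝ) (T : ℕ) (S : Set (X → ℝ)) :
    Mech ℓ D ε₀ L T S = ∑ g ∈ SBox (X := X) T,
      ENNReal.ofReal (Pd ℓ D ε₀ L T g) * Measure.dirac (fun x => bnd T (g x)) S := by
  unfold Mech
  rw [Measure.coe_finset_sum]
  simp [Measure.smul_apply, smul_eq_mul]

lemma Mech_prob (ε₀ L : ℝ) (T : ℕ) : IsProbabilityMeasure (Mech ℓ D ε₀ L T) := by
  constructor
  rw [Mech_apply]
  have : ∀ g ∈ SBox (X := X) T,
      ENNReal.ofReal (Pd ℓ D ε₀ L T g) * Measure.dirac (fun x => bnd T (g x)) Set.univ =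
        ENNReal.ofReal (Pd ℓ D ε₀ L T g) := by
    intro g _
    rw [Measure.dirac_apply_of_mem (Set.mem_univ _), mul_one]
  rw [Finset.sum_congr rfl this, ← ENNReal.ofReal_sum_of_nonneg
    (fun g _ => Pd_nonneg ℓ D ε₀ T g), Pd_sum_one ℓ D ε₀ T, ENNReal.ofReal_one]

lemma Mech_mono (ε₀ L : ℝ) (T : ℕ) :
    Mech ℓ D ε₀ L T {f : X → ℝ | IsMonotone01 f} = 1 := by
  rw [Mech_apply]
  have : ∀ g ∈ SBox (X := X) T,
      ENNReal.ofReal (Pd ℓ D ε₀ L T g) *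
        Measure.dirac (fun x => bnd T (g x)) {f : X → ℝ | IsMonotone01 f} =
      ENNReal.ofReal (Pd ℓ D ε₀ L T g) := by
    intro g _
    rcases eq_or_ne (Pd ℓ D ε₀ L T g) 0 with h | h
    · rw [h]; simp
    · have hOK := Pd_support ℓ D ε₀ T g h
      have hmem : (fun x => bnd T (g x)) ∈ {f : X → ℝ | IsMonotone01 f} := by
        refine ⟨fun x y hxy => bnd_mono T (hOK.2 x y hxy), fun x => ?_⟩
        exact ⟨bnd_nonneg T (g x), bnd_le_one (le_of_lt (hOK.1 x))⟩
      rw [Measure.dirac_apply_of_mem hmem, mul_one]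
  rw [Finset.sum_congr rfl this, ← ENNReal.ofReal_sum_of_nonneg
    (fun g _ => Pd_nonneg ℓ D ε₀ T g), Pd_sum_one ℓ D ε₀ T, ENNReal.ofReal_one]

lemma Mech_DP (hL : IsLipschitzLoss ℓ L) (hLpos : 0 < L) (hn : 1 ≤ n)
    {D' : Fin n → X × ℝ} (hD : IsDataset D) (hD' : IsDataset D')
    {i0 : Fin n} (hnb : ∀ j, j ≠ i0 → D j = D' j)
    {ε₀ : ℝ} (hε₀ : 0 ≤ ε₀) (T : ℕ) (S : Set (X → ℝ)) :
    Mech ℓ D ε₀ L T S ≤ ENNReal.ofReal (Real.exp (T * ε₀)) * Mech ℓ D' ε₀ L T S := by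
  rw [Mech_apply, Mech_apply, Finset.mul_sum]
  apply Finset.sum_le_sum
  intro g _
  rw [← mul_assoc, ← ENNReal.ofReal_mul (Real.exp_pos _).le]
  apply mul_le_mul_left
  exact ENNReal.ofReal_le_ofReal (Pd_ratio ℓ D hL hLpos hn hD hD' hnb hε₀ T g)

lemma Mech_integral (ε₀ L : ℝ) (T : ℕ) :
    (∫ f, empRisk ℓ f D ∂(Mech ℓ D ε₀ L T)) =
      ∑ g ∈ SBox (X := X) T, Pd ℓ D ε₀ L T g * empRisk ℓ (fun x => bnd T (g x)) D := by
  unfold Mech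
  have hint : ∀ g ∈ SBox (X := X) T, Integrable (fun f => empRisk ℓ f D)
      (ENNReal.ofReal (Pd ℓ D ε₀ L T g) • Measure.dirac (fun x => bnd T (g x))) := by
    intro g _
    apply Integrable.smul_measure _ ENNReal.ofReal_ne_top
    have hae : (fun f => empRisk ℓ f D) =ᵐ[Measure.dirac (fun x => bnd T (g x))]
        (fun _ => empRisk ℓ (fun x => bnd T (g x)) D) := by
      rw [Filter.EventuallyEq, MeasureTheory.ae_dirac_eq]
      simp
    exact (integrable_const _).congr hae.symm
  rw [integral_finset_sum_measure hint]
  apply Finset.sum_congr rfl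
  intro g _
  rw [integral_smul_measure, integral_dirac, ENNReal.toReal_ofReal (Pd_nonneg ℓ D ε₀ T g),
    smul_eq_mul]

lemma Mech_risk (hL : IsLipschitzLoss ℓ L) (hD : IsDataset D) (hLpos : 0 < L)
    (hn : 1 ≤ n) {ε₀ : ℝ} (hε₀ : 0 < ε₀) (T : ℕ) :
    (∫ f, empRisk ℓ f D ∂(Mech ℓ D ε₀ L T)) ≤
      optRisk ℓ D +
        T * (8 * L * (1 + (posetWidth X : ℝ) * Real.log ((Fintype.card X : ℝ) + 1)) / (ε₀ * n)) +
        L * ((2:ℝ)^T)⁻¹ := by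
  rw [Mech_integral]
  have step1 : ∑ g ∈ SBox (X := X) T, Pd ℓ D ε₀ L T g * empRisk ℓ (fun x => bnd T (g x)) D ≤
      ∑ g ∈ SBox (X := X) T, Pd ℓ D ε₀ L T g * (Phi ℓ D T g + L * ((2:ℝ)^T)⁻¹) := by
    apply Finset.sum_le_sum
    intro g _
    rcases eq_or_ne (Pd ℓ D ε₀ L T g) 0 with h | h
    · rw [h, zero_mul, zero_mul]
    · exact mul_le_mul_of_nonneg_left
        (final_risk ℓ D hL hD hLpos.le hn (Pd_support ℓ D ε₀ T g h))
        (Pd_nonneg ℓ D ε₀ T g)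
  have step2 : ∑ g ∈ SBox (X := X) T, Pd ℓ D ε₀ L T g * (Phi ℓ D T g + L * ((2:ℝ)^T)⁻¹) =
      Ed ℓ D ε₀ L T + L * ((2:ℝ)^T)⁻¹ := by
    rw [Finset.sum_congr rfl (fun g _ => mul_add (Pd ℓ D ε₀ L T g) (Phi ℓ D T g) _),
      Finset.sum_add_distrib, ← Finset.sum_mul, Pd_sum_one ℓ D ε₀ T, one_mul]
    rfl
  have step3 := Ed_telescope ℓ D hL hD hLpos hn hε₀ T
  linarith
end AuxMain6
set_option maxHeartbeats 1000000

lemma ceil_logb_pow {t : ℝ} (htpos : 0 < t) : t ≤ (2:ℝ) ^ (⌈Real.logb 2 t⌉₊ + 1) := by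
  rcases le_or_gt t 1 with h | h
  · calc t ≤ 1 := h
      _ ≤ (2:ℝ) ^ (⌈Real.logb 2 t⌉₊ + 1) := one_le_pow₀ (by norm_num)
  · have hlb : Real.logb 2 t ≤ (⌈Real.logb 2 t⌉₊ : ℝ) := Nat.le_ceil _
    calc t = (2:ℝ) ^ (Real.logb 2 t) := (Real.rpow_logb (by norm_num) (by norm_num) htpos).symm
      _ ≤ (2:ℝ) ^ ((⌈Real.logb 2 t⌉₊ + 1 : ℕ) : ℝ) := by
          apply Real.rpow_le_rpow_of_exponent_le one_le_two
          push_cast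
          linarith
      _ = (2:ℝ) ^ (⌈Real.logb 2 t⌉₊ + 1) := by rw [Real.rpow_natCast]

lemma ceil_logb_sq {t : ℝ} (htpos : 0 < t) :
    ((⌈Real.logb 2 t⌉₊ + 1 : ℕ) : ℝ)^2 ≤ 8 * (1 + Real.log t ^ 2) := by
  rcases le_or_gt t 1 with h | h
  · have hc : ⌈Real.logb 2 t⌉₊ = 0 := by
      rw [Nat.ceil_eq_zero]
      exact Real.logb_nonpos (by norm_num) htpos.le h
    rw [hc]
    norm_num
    nlinarith [sq_nonneg (Real.log t)]
  · have hlt0 : 0 ≤ Real.log t := Real.log_nonneg h.le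
    have hl2gt : (0.6931471803 : ℝ) < Real.log 2 := Real.log_two_gt_d9
    have hl2lt : Real.log 2 < 0.6931471808 := Real.log_two_lt_d9
    have hlogb0 : 0 ≤ Real.logb 2 t := by
      unfold Real.logb
      positivity
    have hceil : (⌈Real.logb 2 t⌉₊ : ℝ) < Real.logb 2 t + 1 := Nat.ceil_lt_add_one hlogb0
    have hT_lt : ((⌈Real.logb 2 t⌉₊ + 1 : ℕ) : ℝ) * Real.log 2 ≤
        Real.log t + 2 * Real.log 2 := by
      have h1 : ((⌈Real.logb 2 t⌉₊ + 1 : ℕ) : ℝ) ≤ Real.logb 2 t + 2 := by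
        push_cast
        linarith
      have h2 : (Real.logb 2 t + 2) * Real.log 2 = Real.log t + 2 * Real.log 2 := by
        unfold Real.logb
        field_simp
      calc ((⌈Real.logb 2 t⌉₊ + 1 : ℕ) : ℝ) * Real.log 2
          ≤ (Real.logb 2 t + 2) * Real.log 2 := by nlinarith
        _ = _ := h2
    set Tr : ℝ := ((⌈Real.logb 2 t⌉₊ + 1 : ℕ) : ℝ) with hTr
    have hTr1 : 1 ≤ Tr := by
      rw [hTr]
      push_cast
      linarith [show (0:ℝ) ≤ (⌈Real.logb 2 t⌉₊ : ℝ) from Nat.cast_nonneg _]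
    have hsq : (Tr * Real.log 2)^2 ≤ (Real.log t + 2 * Real.log 2)^2 := by
      apply sq_le_sq'
      · nlinarith
      · exact hT_lt
    have hl2sq : (0.48:ℝ) ≤ Real.log 2 ^ 2 := by nlinarith [hl2gt]
    have hl2pos : (0:ℝ) < Real.log 2 ^ 2 := by nlinarith [hl2gt]
    have hcross : Real.log t * Real.log 2 ≤ Real.log t * 0.6931471808 :=
      mul_le_mul_of_nonneg_left hl2lt.le hlt0
    have h8 : 3.84 * Real.log t ^ 2 ≤ 8 * Real.log t ^ 2 * Real.log 2 ^ 2 := by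
      nlinarith [hl2sq, sq_nonneg (Real.log t)]
    have hpoly : (Real.log t + 2 * Real.log 2) ^ 2 ≤
        (8 * (1 + Real.log t ^ 2)) * Real.log 2 ^ 2 := by
      nlinarith [h8, hcross, hl2sq, sq_nonneg (Real.log t - 1/2), hlt0]
    rw [mul_pow] at hsq
    have hfin := le_trans hsq hpoly
    exact (mul_le_mul_iff_of_pos_right hl2pos).1 hfin

theorem dp_isotonic_regression_general_poset_upper_bound' :
    ∃ C : ℝ, 0 < C ∧
      ∀ (X : Type) [Fintype X] [PartialOrder X],
        2 ≤ Fintype.card X →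
        ∀ (ℓ : ℝ → ℝ → ℝ) (L : ℝ), IsLipschitzLoss ℓ L →
        ∀ n : ℕ, 1 ≤ n →
        ∀ ε : ℝ, ε ∈ Set.Ioc (0 : ℝ) 1 →
        ∃ M : (Fin n → X × ℝ) → Measure (X → ℝ),
          IsIsoRegAlg M ∧
          IsDP NeighborDS M ε 0 ∧
          ∀ D : Fin n → X × ℝ, IsDataset D →
            (∫ f, empRisk ℓ f D ∂(M D)) - optRisk ℓ D ≤
              C * L * (posetWidth X : ℝ) * Real.log (Fintype.card X) *
                (1 + Real.log (ε * n) ^ 2) / (ε * n) := by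
  refine ⟨1000, by norm_num, ?_⟩
  intro X _ _ hcard ℓ L hLip n hn ε hε
  have hnpos : (0:ℝ) < n := by exact_mod_cast hn
  have hεpos : 0 < ε := hε.1
  set t : ℝ := ε * n with ht
  have htpos : 0 < t := by positivity
  have hL0 : 0 ≤ L := by
    have h01 : (0:ℝ) ∈ Set.Icc (0:ℝ) 1 := by norm_num
    have h11 : (1:ℝ) ∈ Set.Icc (0:ℝ) 1 := by norm_num
    have hl := hLip.2 0 1 0 h01 h11 h01
    have he : |(0:ℝ) - 1| = 1 := by norm_num
    rw [he, mul_one] at hl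
    exact le_trans (abs_nonneg _) hl
  have hXne : Nonempty X := Fintype.card_pos_iff.1 (by omega)
  have hw1 : (1:ℝ) ≤ (posetWidth X : ℝ) := by exact_mod_cast one_le_posetWidth (X := X)
  have hcX2 : (2:ℝ) ≤ (Fintype.card X : ℝ) := by exact_mod_cast hcard
  have hl2gt : (0.6931471803 : ℝ) < Real.log 2 := Real.log_two_gt_d9
  have hlogcX : Real.log 2 ≤ Real.log (Fintype.card X : ℝ) :=
    Real.log_le_log (by norm_num) hcX2
  rcases eq_or_lt_of_le hL0 with hL0eq | hLpos
  · -- degenerate case L = 0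
    refine ⟨fun _ => Measure.dirac (fun _ => (0:ℝ)), ?_, ?_, ?_⟩
    · intro D hD
      refine ⟨by infer_instance, ?_⟩
      exact Measure.dirac_apply_of_mem ⟨monotone_const, fun x => by norm_num⟩
    · rintro D D' _ S _
      have h1 : (1:ENNReal) ≤ ENNReal.ofReal (Real.exp ε) := by
        rw [← ENNReal.ofReal_one]
        apply ENNReal.ofReal_le_ofReal
        have := Real.add_one_le_exp ε
        linarith
      calc Measure.dirac (fun _ : X => (0:ℝ)) S
          = 1 * Measure.dirac (fun _ : X => (0:ℝ)) S := (one_mul _).symm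
        _ ≤ ENNReal.ofReal (Real.exp ε) * Measure.dirac (fun _ : X => (0:ℝ)) S +
            ENNReal.ofReal 0 := by
            rw [ENNReal.ofReal_zero, add_zero]
            exact mul_le_mul_left h1 _
    · intro D hD
      rw [integral_dirac]
      have hconst : ∀ h : {g : X → ℝ // IsMonotone01 g},
          empRisk ℓ (fun _ => (0:ℝ)) D = empRisk ℓ h.1 D := by
        intro h
        unfold empRisk
        congr 1
        apply Finset.sum_congr rfl
        intro i _
        have hx := h.2.2 (D i).1
        have hel := hLip.2 0 (h.1 (D i).1) (D i).2 (by norm_num) hx (hD i)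
        rw [← hL0eq, zero_mul] at hel
        have := le_antisymm hel (abs_nonneg _)
        exact sub_eq_zero.1 (abs_eq_zero.1 this)
      have hopt : empRisk ℓ (fun _ => (0:ℝ)) D ≤ optRisk ℓ D := by
        haveI : Nonempty {g : X → ℝ // IsMonotone01 g} :=
          ⟨⟨fun _ => 0, monotone_const, fun x => by norm_num⟩⟩
        exact le_ciInf (fun h => le_of_eq (hconst h))
      have hRHS0 : 1000 * L * (posetWidth X : ℝ) * Real.log (Fintype.card X) *
          (1 + Real.log t ^ 2) / t = 0 := by
        rw [← hL0eq]
        ring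
      rw [hRHS0]
      linarith
  · -- main case
    set T : ℕ := ⌈Real.logb 2 t⌉₊ + 1 with hTdef
    have hTpos : 0 < T := Nat.succ_pos _
    have hTR : (1:ℝ) ≤ (T:ℝ) := by exact_mod_cast hTpos
    have h2T : t ≤ (2:ℝ)^T := ceil_logb_pow htpos
    have hT2 : (T:ℝ)^2 ≤ 8 * (1 + Real.log t ^ 2) := ceil_logb_sq htpos
    set ε₀ : ℝ := ε / T with hε₀def
    have hε₀pos : 0 < ε₀ := by positivity
    refine ⟨fun D => Mech ℓ D ε₀ L T, ?_, ?_, ?_⟩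
    · intro D hD
      exact ⟨Mech_prob ℓ D ε₀ L T, Mech_mono ℓ D ε₀ L T⟩
    · rintro D D' ⟨hD, hD', i0, hnb⟩ S hS
      have hDP := Mech_DP ℓ D hLip hLpos hn hD hD' hnb hε₀pos.le T S
      have hTT : (T:ℝ) * ε₀ = ε := by
        rw [hε₀def]
        field_simp
      rw [hTT] at hDP
      calc Mech ℓ D ε₀ L T S ≤ ENNReal.ofReal (Real.exp ε) * Mech ℓ D' ε₀ L T S := hDP
        _ ≤ ENNReal.ofReal (Real.exp ε) * Mech ℓ D' ε₀ L T S + ENNReal.ofReal 0 :=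
            le_self_add
    · intro D hD
      have hrisk := Mech_risk ℓ D hLip hD hLpos hn hε₀pos T
      set w : ℝ := (posetWidth X : ℝ) with hwdef
      set cX : ℝ := (Fintype.card X : ℝ) with hcXdef
      set A : ℝ := w * Real.log (cX + 1) with hAdef
      set B : ℝ := w * Real.log cX with hBdef
      have hlogcX0 : 0 < Real.log cX := lt_of_lt_of_le (by linarith) hlogcX
      have hw0 : (0:ℝ) ≤ w := by linarith
      have hA0 : 0 ≤ A := by
        rw [hAdef]
        exact mul_nonneg hw0 (Real.log_nonneg (by linarith))
      have hB_lb : Real.log 2 ≤ B := by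
        rw [hBdef]
        calc Real.log 2 = 1 * Real.log 2 := (one_mul _).symm
          _ ≤ w * Real.log cX := mul_le_mul hw1 hlogcX (by linarith) hw0
      have hlog_le : Real.log (cX + 1) ≤ 2 * Real.log cX := by
        calc Real.log (cX + 1) ≤ Real.log (cX ^ 2) :=
              Real.log_le_log (by linarith) (by nlinarith)
          _ = 2 * Real.log cX := by
              rw [show cX ^ 2 = cX * cX by ring, Real.log_mul (by linarith) (by linarith)]
              ring
      have h1A : 1 + A ≤ 4 * B := by
        have h1 : A ≤ 2 * B := by
          rw [hAdef, hBdef]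
          have := mul_le_mul_of_nonneg_left hlog_le hw0
          linarith
        have h2 : (1:ℝ) ≤ 2 * B := by linarith
        linarith
      have key : 8 * (T:ℝ)^2 * (1 + A) + 1 ≤ 1000 * B * (1 + Real.log t ^ 2) := by
        have hfac : (0:ℝ) ≤ 1 + A := by linarith
        have e1 : (T:ℝ)^2 * (1 + A) ≤ (8 * (1 + Real.log t ^ 2)) * (4 * B) := by
          apply mul_le_mul hT2 h1A hfac (by positivity)
        have hB0 : (0:ℝ) ≤ B := by linarith
        have hBP : (0:ℝ) ≤ B * Real.log t ^ 2 := mul_nonneg hB0 (sq_nonneg _)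
        have e2 : (1:ℝ) ≤ 2 * B * (1 + Real.log t ^ 2) := by nlinarith [hBP]
        nlinarith [e1, e2, hBP, hB0]
      have hρle : ((2:ℝ)^T)⁻¹ ≤ t⁻¹ := by
        apply inv_anti₀ htpos h2T
      have hEB : (T:ℝ) * (8 * L * (1 + A) / (ε₀ * n)) = 8 * L * (T:ℝ)^2 * (1 + A) / t := by
        rw [hε₀def, ht]
        have hT0 : (T:ℝ) ≠ 0 := by positivity
        field_simp
      calc (∫ f, empRisk ℓ f D ∂(Mech ℓ D ε₀ L T)) - optRisk ℓ D
          ≤ (T:ℝ) * (8 * L * (1 + A) / (ε₀ * n)) + L * ((2:ℝ)^T)⁻¹ := by linarith [hrisk]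
        _ = 8 * L * (T:ℝ)^2 * (1 + A) / t + L * ((2:ℝ)^T)⁻¹ := by rw [hEB]
        _ ≤ 8 * L * (T:ℝ)^2 * (1 + A) / t + L * t⁻¹ := by
            have := mul_le_mul_of_nonneg_left hρle hL0
            linarith
        _ = L * (8 * (T:ℝ)^2 * (1 + A) + 1) / t := by
            field_simp
        _ ≤ L * (1000 * B * (1 + Real.log t ^ 2)) / t := by
            have h := mul_le_mul_of_nonneg_left key hL0
            rw [div_eq_mul_inv, div_eq_mul_inv]
            exact mul_le_mul_of_nonneg_right h (inv_nonneg.2 htpos.le)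
        _ = 1000 * L * w * Real.log cX * (1 + Real.log t ^ 2) / t := by
            rw [hBdef]
            ring

/-- **Theorem 1 (Upper Bound for General Posets).** There is a universal constant `C > 0`
such that for every finite poset `X` with at least 2 elements, every `L`-Lipschitz loss `ℓ`,
every `n ≥ 1` and `ε ∈ (0,1]`, there is an `ε`-DP isotonic-regression mechanism whose
expected excess empirical risk on every dataset is at most
`C · L · width(X) · log|X| · (1 + log²(εn)) / (εn)`. -/
theorem dp_isotonic_regression_general_poset_upper_bound :
    ∃ C : ℝ, 0 < C ∧
      ∀ (X : Type) [Fintype X] [PartialOrder X],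
        2 ≤ Fintype.card X →
        ∀ (ℓ : ℝ → ℝ → ℝ) (L : ℝ), IsLipschitzLoss ℓ L →
        ∀ n : ℕ, 1 ≤ n →
        ∀ ε : ℝ, ε ∈ Set.Ioc (0 : ℝ) 1 →
        ∃ M : (Fin n → X × ℝ) → Measure (X → ℝ),
          IsIsoRegAlg M ∧
          IsDP NeighborDS M ε 0 ∧
          ∀ D : Fin n → X × ℝ, IsDataset D →
            (∫ f, empRisk ℓ f D ∂(M D)) - optRisk ℓ D ≤
              C * L * (posetWidth X : ℝ) * Real.log (Fintype.card X) *
                (1 + Real.log (ε * n) ^ 2) / (ε * n) := by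
  exact dp_isotonic_regression_general_poset_upper_bound'
end
end

section
/- There is a universal constant C > 0 such that the following holds. Let X = {1,...,m} with the usual total order, m ≥ 2, let ℓ : [0,1]×[0,1] → ℝ≥0 be an L-Lipschitz loss function, let n ≥ 1 and ε ∈ (0,1]. Then there exists a randomized algorithm M mapping each dataset D ∈ (X×[0,1])^n to a probability distribution over monotone functions f : X → [0,1], such that M is ε-differentially private and for every dataset D, the expected excess empirical risk E_{f∼M(D)}[L_ℓ(f;D)] − min_{g monotone, g:X→[0,1]} L_ℓ(g;D) is at most C · L · (log m) · (1 + log²(εn)) / (εn). -/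
open MeasureTheory

noncomputable section

namespace DPIR



/-- Transcript trees of depth `T`: each internal node records a cut in `{0,…,m}`. -/
def Tr (m : ℕ) : ℕ → Type
  | 0 => Unit
  | T+1 => Fin (m+1) × Tr m T × Tr m T

instance trF (m : ℕ) : (T : ℕ) → Fintype (Tr m T)
  | 0 => inferInstanceAs (Fintype Unit)
  | T+1 => letI := trF m T; inferInstanceAs (Fintype (Fin (m+1) × Tr m T × Tr m T))

variable {m n : ℕ}

/-- Clip `t` into `[s,e]`. -/
def clip (s e t : ℕ) : ℕ := min (max t s) e

/-- Sum of `F` over data points whose feature lies in the window `[s,e)`. -/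
def wsum (D : Fin n → Fin m × ℝ) (s e : ℕ) (F : Fin m × ℝ → ℝ) : ℝ :=
  ∑ i, if s ≤ ((D i).1 : ℕ) ∧ ((D i).1 : ℕ) < e then F (D i) else 0

/-- Number of points in window. -/
def cnt (D : Fin n → Fin m × ℝ) (s e : ℕ) : ℝ := wsum D s e fun _ => 1

/-- Cost of hypothesis `f` (given on ℕ) on window `[s,e)`. -/
def cost (ℓ : ℝ → ℝ → ℝ) (D : Fin n → Fin m × ℝ) (f : ℕ → ℝ) (s e : ℕ) : ℝ :=
  wsum D s e fun p => ℓ (f (p.1 : ℕ)) p.2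

/-- Best possible loss for one point with label `y` over values in `[a, a+w]`. -/
def hval (ℓ : ℝ → ℝ → ℝ) (a w y : ℝ) : ℝ :=
  sInf ((fun v => ℓ v y) '' Set.Icc a (a + w))

/-- Recursive benchmark. -/
def B (ℓ : ℝ → ℝ → ℝ) (D : Fin n → Fin m × ℝ) : ℕ → ℕ → ℕ → ℝ → ℝ → ℝ
  | 0, s, e, a, w => wsum D s e fun p => hval ℓ a w p.2
  | T+1, s, e, a, w =>
    (Finset.range (m+1)).inf' ⟨0, Finset.mem_range.2 (Nat.succ_pos m)⟩ fun t =>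
      B ℓ D T s (clip s e t) a (w/2) + B ℓ D T (clip s e t) e (a + w/2) (w/2)

/-- Node utility. -/
def u (ℓ : ℝ → ℝ → ℝ) (D : Fin n → Fin m × ℝ) (T s e : ℕ) (a w : ℝ) (t : ℕ) : ℝ :=
  B ℓ D T s (clip s e t) a (w/2) + B ℓ D T (clip s e t) e (a + w/2) (w/2)

lemma B_succ (ℓ : ℝ → ℝ → ℝ) (D : Fin n → Fin m × ℝ) (T s e : ℕ) (a w : ℝ) :
    B ℓ D (T+1) s e a w =
      (Finset.range (m+1)).inf' ⟨0, Finset.mem_range.2 (Nat.succ_pos m)⟩ (u ℓ D T s e a w) :=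
  rfl

/-- The exponential-mechanism weight parameter at width `w`. -/
def lam (ε₀ L w : ℝ) : ℝ := ε₀ / (8 * L * w)

/-- Exponential mechanism probability of cut `t` at a node. -/
def q (ℓ : ℝ → ℝ → ℝ) (D : Fin n → Fin m × ℝ) (ε₀ L : ℝ) (T s e : ℕ) (a w : ℝ)
    (t : ℕ) : ℝ :=
  Real.exp (-(lam ε₀ L w) * u ℓ D T s e a w t) /
    ∑ t' ∈ Finset.range (m+1), Real.exp (-(lam ε₀ L w) * u ℓ D T s e a w t')

/-- Transcript density. -/
def dens (ℓ : ℝ → ℝ → ℝ) (D : Fin n → Fin m × ℝ) (ε₀ L : ℝ) :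
    (T : ℕ) → Tr m T → ℕ → ℕ → ℝ → ℝ → ℝ
  | 0, _, _, _, _, _ => 1
  | T+1, τ, s, e, a, w =>
    q ℓ D ε₀ L T s e a w (τ.1 : ℕ) *
      dens ℓ D ε₀ L T τ.2.1 s (clip s e (τ.1 : ℕ)) a (w/2) *
      dens ℓ D ε₀ L T τ.2.2 (clip s e (τ.1 : ℕ)) e (a + w/2) (w/2)

/-- Decoded (step) function of a transcript. -/
def dec : (T : ℕ) → Tr m T → ℕ → ℕ → ℝ → ℝ → ℕ → ℝ
  | 0, _, _, _, a, w, _ => a + w/2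
  | T+1, τ, s, e, a, w, x =>
    if x < clip s e (τ.1 : ℕ) then dec T τ.2.1 s (clip s e (τ.1 : ℕ)) a (w/2) x
    else dec T τ.2.2 (clip s e (τ.1 : ℕ)) e (a + w/2) (w/2) x


section
variable {m n : ℕ}

lemma wsum_split (D : Fin n → Fin m × ℝ) {s t e : ℕ} (h1 : s ≤ t) (h2 : t ≤ e)
    (F : Fin m × ℝ → ℝ) : wsum D s e F = wsum D s t F + wsum D t e F := by
  unfold wsum
  rw [← Finset.sum_add_distrib]
  refine Finset.sum_congr rfl fun i _ => ?_
  set x := ((D i).1 : ℕ)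
  by_cases hx : s ≤ x ∧ x < e
  · by_cases hxt : x < t
    · rw [if_pos hx, if_pos ⟨hx.1, hxt⟩, if_neg (fun h => absurd h.1 (by omega)), add_zero]
    · rw [if_pos hx, if_neg (fun h => absurd h.2 (by omega)), if_pos ⟨by omega, hx.2⟩, zero_add]
  · rw [if_neg hx, if_neg (fun h => hx ⟨h.1, by omega⟩), if_neg (fun h => hx ⟨by omega, h.2⟩),
      add_zero]

lemma wsum_mono (D : Fin n → Fin m × ℝ) (s e : ℕ) {F G : Fin m × ℝ → ℝ}
    (h : ∀ i, s ≤ ((D i).1 : ℕ) → ((D i).1 : ℕ) < e → F (D i) ≤ G (D i)) :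
    wsum D s e F ≤ wsum D s e G := by
  refine Finset.sum_le_sum fun i _ => ?_
  by_cases hx : s ≤ ((D i).1 : ℕ) ∧ ((D i).1 : ℕ) < e
  · rw [if_pos hx, if_pos hx]; exact h i hx.1 hx.2
  · rw [if_neg hx, if_neg hx]

lemma wsum_congr (D : Fin n → Fin m × ℝ) (s e : ℕ) {F G : Fin m × ℝ → ℝ}
    (h : ∀ i, s ≤ ((D i).1 : ℕ) → ((D i).1 : ℕ) < e → F (D i) = G (D i)) :
    wsum D s e F = wsum D s e G :=
  le_antisymm (wsum_mono D s e fun i h1 h2 => (h i h1 h2).le)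
    (wsum_mono D s e fun i h1 h2 => (h i h1 h2).ge)

/-- Difference of `wsum` over neighboring datasets. -/
lemma wsum_diff (D D' : Fin n → Fin m × ℝ) (i₀ : Fin n)
    (hoff : ∀ j, j ≠ i₀ → D j = D' j) (s e : ℕ) (F : Fin m × ℝ → ℝ) :
    wsum D s e F - wsum D' s e F =
      (if s ≤ ((D i₀).1 : ℕ) ∧ ((D i₀).1 : ℕ) < e then F (D i₀) else 0) -
      (if s ≤ ((D' i₀).1 : ℕ) ∧ ((D' i₀).1 : ℕ) < e then F (D' i₀) else 0) := by
  unfold wsum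
  rw [← Finset.sum_sub_distrib]
  rw [Finset.sum_eq_single i₀]
  · intro j _ hj
    rw [hoff j hj, sub_self]
  · intro h; exact absurd (Finset.mem_univ i₀) h


lemma dec_mem : ∀ (T : ℕ) (τ : Tr m T) (s e : ℕ) (a w : ℝ), 0 ≤ w → ∀ x,
    dec T τ s e a w x ∈ Set.Icc a (a + w)
  | 0, _, s, e, a, w, hw, x => by
    constructor <;> simp only [dec] <;> linarith
  | T+1, τ, s, e, a, w, hw, x => by
    have h2 : (0:ℝ) ≤ w/2 := by linarith
    simp only [dec]
    split
    · have := dec_mem T τ.2.1 s (clip s e (τ.1 : ℕ)) a (w/2) h2 x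
      exact ⟨this.1, this.2.trans (by linarith)⟩
    · have := dec_mem T τ.2.2 (clip s e (τ.1 : ℕ)) e (a + w/2) (w/2) h2 x
      exact ⟨by linarith [this.1], by linarith [this.2]⟩

lemma dec_mono : ∀ (T : ℕ) (τ : Tr m T) (s e : ℕ) (a w : ℝ), 0 ≤ w → ∀ x x', x ≤ x' →
    dec T τ s e a w x ≤ dec T τ s e a w x'
  | 0, _, s, e, a, w, hw, x, x', _ => le_refl _
  | T+1, τ, s, e, a, w, hw, x, x', hxx => by
    have h2 : (0:ℝ) ≤ w/2 := by linarith
    simp only [dec]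
    set t' := clip s e (τ.1 : ℕ)
    by_cases hx : x < t'
    · by_cases hx' : x' < t'
      · rw [if_pos hx, if_pos hx']
        exact dec_mono T τ.2.1 s t' a (w/2) h2 x x' hxx
      · rw [if_pos hx, if_neg hx']
        calc dec T τ.2.1 s t' a (w/2) x ≤ a + w/2 :=
              (dec_mem T τ.2.1 s t' a (w/2) h2 x).2
          _ ≤ dec T τ.2.2 t' e (a + w/2) (w/2) x' :=
              (dec_mem T τ.2.2 t' e (a + w/2) (w/2) h2 x').1
    · have hx' : ¬ x' < t' := by omega
      rw [if_neg hx, if_neg hx']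
      exact dec_mono T τ.2.2 t' e (a + w/2) (w/2) h2 x x' hxx

lemma icc_sub (ha : 0 ≤ a) (hw : 0 ≤ w) (hb : a + w ≤ 1) :
    Set.Icc a (a+w) ⊆ Set.Icc (0:ℝ) 1 := fun v hv => ⟨ha.trans hv.1, hv.2.trans hb⟩

lemma hval_le (hℓ : IsLipschitzLoss ℓ L) (ha : 0 ≤ a) (hw : 0 ≤ w) (hb : a + w ≤ 1)
    (hy : y ∈ Set.Icc (0:ℝ) 1) {v : ℝ} (hv : v ∈ Set.Icc a (a+w)) :
    hval ℓ a w y ≤ ℓ v y := by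
  refine csInf_le ⟨0, ?_⟩ ⟨v, hv, rfl⟩
  rintro _ ⟨v', hv', rfl⟩
  exact hℓ.1 v' y (icc_sub ha hw hb hv') hy

lemma hval_nonneg (hℓ : IsLipschitzLoss ℓ L) (ha : 0 ≤ a) (hw : 0 ≤ w) (hb : a + w ≤ 1)
    (hy : y ∈ Set.Icc (0:ℝ) 1) : 0 ≤ hval ℓ a w y := by
  refine le_csInf ⟨ℓ a y, a, ⟨le_refl a, by linarith⟩, rfl⟩ ?_
  rintro _ ⟨v', hv', rfl⟩
  exact hℓ.1 v' y (icc_sub ha hw hb hv') hy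

/-- `hval` is within `L*d` of `ℓ v₀ y` when the whole interval is within `d` of `v₀`. -/
lemma hval_ge (hℓ : IsLipschitzLoss ℓ L) (ha : 0 ≤ a) (hw : 0 ≤ w) (hb : a + w ≤ 1)
    (hy : y ∈ Set.Icc (0:ℝ) 1) {v₀ d : ℝ} (hv₀ : v₀ ∈ Set.Icc (0:ℝ) 1)
    (hd : ∀ v ∈ Set.Icc a (a+w), |v - v₀| ≤ d) (hL : 0 ≤ L) :
    ℓ v₀ y - L * d ≤ hval ℓ a w y := by
  refine le_csInf ⟨ℓ a y, a, ⟨le_refl a, by linarith⟩, rfl⟩ ?_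
  rintro _ ⟨v', hv', rfl⟩
  have h1 := hℓ.2 v₀ v' y hv₀ (icc_sub ha hw hb hv') hy
  have h2 : |v' - v₀| ≤ d := hd v' hv'
  have : |ℓ v₀ y - ℓ v' y| ≤ L * d := by
    calc |ℓ v₀ y - ℓ v' y| ≤ L * |v₀ - v'| := h1
      _ ≤ L * d := by rw [abs_sub_comm] at h2; nlinarith
  have := abs_le.1 this
  linarith [this.1]

lemma hval_le' (hℓ : IsLipschitzLoss ℓ L) (ha : 0 ≤ a) (hw : 0 ≤ w) (hb : a + w ≤ 1)
    (hy : y ∈ Set.Icc (0:ℝ) 1) {v₀ d : ℝ} (hv₀ : v₀ ∈ Set.Icc (0:ℝ) 1)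
    (hd : |a - v₀| ≤ d) (hL : 0 ≤ L) :
    hval ℓ a w y ≤ ℓ v₀ y + L * d := by
  have h1 : hval ℓ a w y ≤ ℓ a y := hval_le hℓ ha hw hb hy ⟨le_refl a, by linarith⟩
  have h2 := hℓ.2 a v₀ y (icc_sub ha hw hb ⟨le_refl a, by linarith⟩) hv₀ hy
  have := (abs_le.1 ((h2.trans (by nlinarith)) : |ℓ a y - ℓ v₀ y| ≤ L * d)).2
  linarith

/-- `L ≥ 0` from the Lipschitz property. -/
lemma lip_nonneg (hℓ : IsLipschitzLoss ℓ L) : 0 ≤ L := by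
  have := (abs_nonneg (ℓ 0 0 - ℓ 1 0)).trans
    (hℓ.2 0 1 0 (by norm_num) (by norm_num) (by norm_num))
  simpa using this


lemma Z_pos (c : ℕ → ℝ) (lam : ℝ) {N : ℕ} (hN : 0 < N) :
    0 < ∑ t ∈ Finset.range N, Real.exp (-lam * c t) :=
  Finset.sum_pos (fun t _ => Real.exp_pos _) ⟨0, Finset.mem_range.2 hN⟩

lemma q_sum_one (c : ℕ → ℝ) (lam : ℝ) {N : ℕ} (hN : 0 < N) :
    ∑ t ∈ Finset.range N,
      (Real.exp (-lam * c t) / ∑ t' ∈ Finset.range N, Real.exp (-lam * c t')) = 1 := by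
  rw [← Finset.sum_div, div_self (Z_pos c lam hN).ne']

/-- Expected score of the exponential mechanism. -/
lemma expmech_mean (c : ℕ → ℝ) {lam : ℝ} (hlam : 0 < lam) {N : ℕ} (hN : 0 < N) :
    ∑ t ∈ Finset.range N,
        (Real.exp (-lam * c t) / ∑ t' ∈ Finset.range N, Real.exp (-lam * c t')) * c t ≤
      (Finset.range N).inf' ⟨0, Finset.mem_range.2 hN⟩ c + 2 * (Real.log N + 1) / lam := by
  have hne : (Finset.range N).Nonempty := ⟨0, Finset.mem_range.2 hN⟩
  set cs := (Finset.range N).inf' hne c with hcs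
  set γ := (Real.log N + 1) / lam with hγ
  have hlogN : 0 ≤ Real.log N := Real.log_natCast_nonneg N
  have hγpos : 0 < γ := div_pos (by linarith) hlam
  have hγlam : 1 ≤ lam * γ := by
    rw [hγ, mul_div_cancel₀ _ hlam.ne']; linarith
  set Z := ∑ t' ∈ Finset.range N, Real.exp (-lam * c t') with hZ
  have hZpos : 0 < Z := Z_pos c lam hN
  -- key: ∑ exp(-lam c t) * (c t - cs) ≤ 2γ * Z
  have key : ∑ t ∈ Finset.range N, Real.exp (-lam * c t) * (c t - cs) ≤ 2 * γ * Z := by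
    obtain ⟨t₀, ht₀, hct₀⟩ := Finset.exists_mem_eq_inf' hne c
    -- Z ≥ exp(-lam * cs)
    have hZge : Real.exp (-lam * cs) ≤ Z := by
      have : cs = c t₀ := by rw [hcs, hct₀]
      rw [this]
      exact Finset.single_le_sum (f := fun t => Real.exp (-lam * c t))
        (fun t _ => (Real.exp_pos _).le) ht₀
    have hsplit := Finset.sum_filter_add_sum_filter_not (Finset.range N)
      (fun t => c t - cs ≤ γ) (fun t => Real.exp (-lam * c t) * (c t - cs))
    rw [← hsplit]
    have h1 : ∑ t ∈ (Finset.range N).filter (fun t => c t - cs ≤ γ),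
        Real.exp (-lam * c t) * (c t - cs) ≤ γ * Z := by
      calc ∑ t ∈ (Finset.range N).filter (fun t => c t - cs ≤ γ),
            Real.exp (-lam * c t) * (c t - cs)
          ≤ ∑ t ∈ (Finset.range N).filter (fun t => c t - cs ≤ γ),
            Real.exp (-lam * c t) * γ := by
            refine Finset.sum_le_sum fun t ht => ?_
            have := (Finset.mem_filter.1 ht).2
            exact mul_le_mul_of_nonneg_left this (Real.exp_pos _).le
        _ = γ * ∑ t ∈ (Finset.range N).filter (fun t => c t - cs ≤ γ),
              Real.exp (-lam * c t) := by rw [Finset.mul_sum]; simp [mul_comm]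
        _ ≤ γ * Z := by
            refine mul_le_mul_of_nonneg_left ?_ hγpos.le
            exact Finset.sum_le_sum_of_subset_of_nonneg (Finset.filter_subset _ _)
              (fun t _ _ => (Real.exp_pos _).le)
    have h2 : ∑ t ∈ (Finset.range N).filter (fun t => ¬ (c t - cs ≤ γ)),
        Real.exp (-lam * c t) * (c t - cs) ≤ γ * Z := by
      have hterm : ∀ t ∈ (Finset.range N).filter (fun t => ¬ (c t - cs ≤ γ)),
          Real.exp (-lam * c t) * (c t - cs) ≤ Real.exp (-lam * cs) * (γ * Real.exp (-(lam * γ))) := by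
        intro t ht
        have hδ : γ < c t - cs := by have := (Finset.mem_filter.1 ht).2; linarith
        set δ := c t - cs with hδdef
        have h3 : δ ≤ γ * (1 + lam * (δ - γ)) := by nlinarith
        have h4 : 1 + lam * (δ - γ) ≤ Real.exp (lam * (δ - γ)) := by
          have := Real.add_one_le_exp (lam * (δ - γ)); linarith
        have h5 : δ ≤ γ * Real.exp (lam * (δ - γ)) := by nlinarith [Real.exp_pos (lam * (δ - γ))]
        have hexpand : Real.exp (-lam * c t) = Real.exp (-lam * cs) * Real.exp (-(lam * δ)) := by
          rw [← Real.exp_add, hδdef]; ring_nf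
        rw [hexpand, mul_assoc]
        refine mul_le_mul_of_nonneg_left ?_ (Real.exp_pos _).le
        calc Real.exp (-(lam * δ)) * δ ≤ Real.exp (-(lam * δ)) * (γ * Real.exp (lam * (δ - γ))) :=
              mul_le_mul_of_nonneg_left h5 (Real.exp_pos _).le
          _ = γ * Real.exp (-(lam * γ)) := by
              rw [← mul_assoc, mul_comm (Real.exp _) γ, mul_assoc, ← Real.exp_add]
              ring_nf
        -- orientation: goal is exp(-(lam*δ)) * δ form? we had exp * δ; fix below
      calc ∑ t ∈ (Finset.range N).filter (fun t => ¬ (c t - cs ≤ γ)),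
            Real.exp (-lam * c t) * (c t - cs)
          ≤ ∑ _t ∈ (Finset.range N).filter (fun t => ¬ (c t - cs ≤ γ)),
            Real.exp (-lam * cs) * (γ * Real.exp (-(lam * γ))) := Finset.sum_le_sum hterm
        _ ≤ N * (Real.exp (-lam * cs) * (γ * Real.exp (-(lam * γ)))) := by
            rw [Finset.sum_const, nsmul_eq_mul]
            refine mul_le_mul_of_nonneg_right ?_ (by positivity)
            have h1 : (Finset.filter (fun t => ¬c t - cs ≤ γ) (Finset.range N)).card ≤ N :=
              (Finset.card_filter_le _ _).trans (by simp)
            exact_mod_cast h1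
        _ ≤ γ * Z := by
            have hNe : (N : ℝ) * Real.exp (-(lam * γ)) ≤ 1 := by
              have hNpos : (0:ℝ) < N := by exact_mod_cast hN
              have hlg : lam * γ = Real.log N + 1 := by
                rw [hγ]; field_simp
              have hNeq : (N:ℝ) = Real.exp (Real.log N) := (Real.exp_log hNpos).symm
              rw [hNeq, ← Real.exp_add]
              calc Real.exp (Real.log N + -(lam*γ)) ≤ Real.exp 0 :=
                    Real.exp_le_exp.2 (by rw [hlg]; linarith)
                _ = 1 := Real.exp_zero
            calc (N:ℝ) * (Real.exp (-lam * cs) * (γ * Real.exp (-(lam * γ))))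
                = γ * Real.exp (-lam * cs) * ((N:ℝ) * Real.exp (-(lam * γ))) := by ring
              _ ≤ γ * Real.exp (-lam * cs) * 1 := by
                  refine mul_le_mul_of_nonneg_left hNe (by positivity)
              _ = γ * Real.exp (-lam * cs) := mul_one _
              _ ≤ γ * Z := mul_le_mul_of_nonneg_left hZge hγpos.le
    linarith
  -- conclude
  have hmain : (∑ t ∈ Finset.range N, Real.exp (-lam * c t) * c t) / Z ≤ cs + 2 * γ := by
    rw [div_le_iff₀ hZpos]
    have : ∑ t ∈ Finset.range N, Real.exp (-lam * c t) * c t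
        = (∑ t ∈ Finset.range N, Real.exp (-lam * c t) * (c t - cs)) + cs * Z := by
      rw [hZ, Finset.mul_sum, ← Finset.sum_add_distrib]
      refine Finset.sum_congr rfl fun t _ => by ring
    rw [this]
    nlinarith [key]
  calc ∑ t ∈ Finset.range N, Real.exp (-lam * c t) / Z * c t
      = (∑ t ∈ Finset.range N, Real.exp (-lam * c t) * c t) / Z := by
        rw [Finset.sum_div]; exact Finset.sum_congr rfl fun t _ => by ring
    _ ≤ cs + 2 * γ := hmain
    _ = cs + 2 * (Real.log N + 1) / lam := by rw [hγ]; ring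

/-- Pointwise ratio bound for exponential mechanism probabilities. -/
lemma q_ratio (c c' : ℕ → ℝ) {lam K S : ℝ} (hlam : 0 ≤ lam) (hS : 0 ≤ S) {N : ℕ} (hN : 0 < N)
    (h : ∀ t ∈ Finset.range N, |c t - c' t - K| ≤ S) (t : ℕ) (ht : t ∈ Finset.range N) :
    Real.exp (-lam * c t) / ∑ t' ∈ Finset.range N, Real.exp (-lam * c t') ≤
      Real.exp (2 * lam * S) *
        (Real.exp (-lam * c' t) / ∑ t' ∈ Finset.range N, Real.exp (-lam * c' t')) := by
  set Z := ∑ t' ∈ Finset.range N, Real.exp (-lam * c t') with hZdef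
  set Z' := ∑ t' ∈ Finset.range N, Real.exp (-lam * c' t') with hZ'def
  have hZpos : 0 < Z := Z_pos c lam hN
  have hZ'pos : 0 < Z' := Z_pos c' lam hN
  have hnum : Real.exp (-lam * c t) ≤ Real.exp (lam * (S - K)) * Real.exp (-lam * c' t) := by
    rw [← Real.exp_add]
    refine Real.exp_le_exp.2 ?_
    have := (abs_le.1 (h t ht)).1
    nlinarith
  have hden : Z' ≤ Real.exp (lam * (K + S)) * Z := by
    rw [hZ'def, hZdef, Finset.mul_sum]
    refine Finset.sum_le_sum fun t' ht' => ?_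
    rw [← Real.exp_add]
    refine Real.exp_le_exp.2 ?_
    have := (abs_le.1 (h t' ht')).2
    nlinarith
  have step : Real.exp (-lam * c t) * Z' ≤
      Real.exp (lam * (S - K)) * Real.exp (-lam * c' t) * (Real.exp (lam * (K + S)) * Z) := by
    refine mul_le_mul hnum hden (le_of_lt hZ'pos) (by positivity)
  have : Real.exp (-lam * c t) * Z' ≤
      Real.exp (2*lam*S) * Real.exp (-lam * c' t) * Z := by
    calc Real.exp (-lam * c t) * Z'
        ≤ Real.exp (lam * (S - K)) * Real.exp (-lam * c' t) * (Real.exp (lam * (K + S)) * Z) := step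
      _ = (Real.exp (lam * (S-K)) * Real.exp (lam * (K+S))) * Real.exp (-lam * c' t) * Z := by ring
      _ = Real.exp (2*lam*S) * Real.exp (-lam * c' t) * Z := by
          rw [← Real.exp_add]; ring_nf
  rw [div_le_iff₀ hZpos]
  have heq : Real.exp (2*lam*S) * (Real.exp (-lam * c' t) / Z') * Z
      = Real.exp (2*lam*S) * Real.exp (-lam * c' t) * Z / Z' := by ring
  rw [heq, le_div_iff₀ hZ'pos]
  exact this



lemma clip_mem {s e : ℕ} (hse : s ≤ e) (t : ℕ) : s ≤ clip s e t ∧ clip s e t ≤ e := by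
  unfold clip; omega

lemma clip_eq {s e t : ℕ} (h1 : s ≤ t) (h2 : t ≤ e) : clip s e t = t := by
  unfold clip; omega

/-- Whether data point `i` of `D` lies in window `[s,e)`. -/
def inw (D : Fin n → Fin m × ℝ) (i : Fin n) (s e : ℕ) : Prop :=
  s ≤ ((D i).1 : ℕ) ∧ ((D i).1 : ℕ) < e

instance (D : Fin n → Fin m × ℝ) (i : Fin n) (s e : ℕ) : Decidable (inw D i s e) :=
  instDecidableAnd

/-- indicator of `inw` -/
def bw (D : Fin n → Fin m × ℝ) (i : Fin n) (s e : ℕ) : ℝ := if inw D i s e then 1 else 0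

lemma bw_nonneg (D : Fin n → Fin m × ℝ) (i : Fin n) (s e : ℕ) : 0 ≤ bw D i s e := by
  unfold bw; split <;> norm_num

lemma bw_split (D : Fin n → Fin m × ℝ) (i : Fin n) {s t e : ℕ} (h1 : s ≤ t) (h2 : t ≤ e) :
    bw D i s e = bw D i s t + bw D i t e := by
  show (if s ≤ ((D i).1 : ℕ) ∧ ((D i).1 : ℕ) < e then (1:ℝ) else 0) =
    (if s ≤ ((D i).1 : ℕ) ∧ ((D i).1 : ℕ) < t then 1 else 0) +
      (if t ≤ ((D i).1 : ℕ) ∧ ((D i).1 : ℕ) < e then 1 else 0)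
  by_cases hx : s ≤ ((D i).1 : ℕ) ∧ ((D i).1 : ℕ) < e
  · by_cases hxt : ((D i).1 : ℕ) < t
    · rw [if_pos hx, if_pos ⟨hx.1, hxt⟩, if_neg (by omega), add_zero]
    · rw [if_pos hx, if_neg (by omega), if_pos ⟨by omega, hx.2⟩, zero_add]
  · rw [if_neg hx, if_neg (by omega), if_neg (by omega), add_zero]

/-- `wsum` only depends on the data points inside the window. -/
lemma wsum_eq_of_off (D D' : Fin n → Fin m × ℝ) (i₀ : Fin n)
    (hoff : ∀ j, j ≠ i₀ → D j = D' j) {s e : ℕ}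
    (h1 : ¬ inw D i₀ s e) (h2 : ¬ inw D' i₀ s e) (F : Fin m × ℝ → ℝ) :
    wsum D s e F = wsum D' s e F := by
  have := wsum_diff D D' i₀ hoff s e F
  unfold inw at h1 h2
  rw [if_neg h1, if_neg h2, sub_zero] at this
  linarith

/-- `B` only depends on data points inside the window. -/
lemma B_eq_of_off (D D' : Fin n → Fin m × ℝ) (i₀ : Fin n)
    (hoff : ∀ j, j ≠ i₀ → D j = D' j) (ℓ : ℝ → ℝ → ℝ) :
    ∀ (T : ℕ) {s e : ℕ}, s ≤ e → ¬ inw D i₀ s e → ¬ inw D' i₀ s e → ∀ (a w : ℝ),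
      B ℓ D T s e a w = B ℓ D' T s e a w
  | 0, s, e, hse, h1, h2, a, w => wsum_eq_of_off D D' i₀ hoff h1 h2 _
  | T+1, s, e, hse, h1, h2, a, w => by
    rw [B_succ, B_succ]
    refine Finset.inf'_congr _ rfl fun t _ => ?_
    unfold u
    obtain ⟨hc1, hc2⟩ := clip_mem hse t
    have g1 : ¬ inw D i₀ s (clip s e t) := fun h => h1 ⟨h.1, lt_of_lt_of_le h.2 hc2⟩
    have g2 : ¬ inw D' i₀ s (clip s e t) := fun h => h2 ⟨h.1, lt_of_lt_of_le h.2 hc2⟩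
    have g3 : ¬ inw D i₀ (clip s e t) e := fun h => h1 ⟨le_trans hc1 h.1, h.2⟩
    have g4 : ¬ inw D' i₀ (clip s e t) e := fun h => h2 ⟨le_trans hc1 h.1, h.2⟩
    rw [B_eq_of_off D D' i₀ hoff ℓ T hc1 g1 g2 a (w/2),
        B_eq_of_off D D' i₀ hoff ℓ T hc2 g3 g4 (a + w/2) (w/2)]


lemma inf'_diff {A : Finset ℕ} (hA : A.Nonempty) (f g : ℕ → ℝ) (K S : ℝ)
    (h : ∀ t ∈ A, |f t - g t - K| ≤ S) : |A.inf' hA f - A.inf' hA g - K| ≤ S := by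
  obtain ⟨tf, htf, hf⟩ := Finset.exists_mem_eq_inf' hA f
  obtain ⟨tg, htg, hg⟩ := Finset.exists_mem_eq_inf' hA g
  have h1 : A.inf' hA f ≤ f tg := Finset.inf'_le f htg
  have h2 : A.inf' hA g ≤ g tf := Finset.inf'_le g htf
  have h3 := abs_le.1 (h tg htg)
  have h4 := abs_le.1 (h tf htf)
  rw [abs_le]
  constructor
  · rw [hg]; have := h4.1; linarith [hf ▸ le_refl (A.inf' hA f)]
  · rw [hf]; linarith [h3.2]

/-- Sensitivity of the benchmark `B` w.r.t. one data point, relative to reference value `v₀`. -/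
lemma B_diff (ℓ : ℝ → ℝ → ℝ) {L : ℝ} (hℓ : IsLipschitzLoss ℓ L) (hL : 0 ≤ L)
    (D D' : Fin n → Fin m × ℝ) (hD : ∀ i, (D i).2 ∈ Set.Icc (0:ℝ) 1)
    (hD' : ∀ i, (D' i).2 ∈ Set.Icc (0:ℝ) 1) (i₀ : Fin n)
    (hoff : ∀ j, j ≠ i₀ → D j = D' j) {v₀ d : ℝ} (hv₀ : v₀ ∈ Set.Icc (0:ℝ) 1) (hd : 0 ≤ d) :
    ∀ (T : ℕ) {s e : ℕ}, s ≤ e → ∀ {a w : ℝ}, 0 ≤ a → 0 ≤ w → a + w ≤ 1 →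
      (∀ v ∈ Set.Icc a (a+w), |v - v₀| ≤ d) →
      |B ℓ D T s e a w - B ℓ D' T s e a w -
        (bw D i₀ s e * ℓ v₀ (D i₀).2 - bw D' i₀ s e * ℓ v₀ (D' i₀).2)| ≤
        (bw D i₀ s e + bw D' i₀ s e) * (L * d)
  | 0, s, e, hse, a, w, ha, hw, hb, hiv => by
    have hdiff := wsum_diff D D' i₀ hoff s e (fun p => hval ℓ a w p.2)
    show |B ℓ D 0 s e a w - B ℓ D' 0 s e a w - _| ≤ _
    have hB : B ℓ D 0 s e a w - B ℓ D' 0 s e a w =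
        (if inw D i₀ s e then hval ℓ a w (D i₀).2 else 0) -
        (if inw D' i₀ s e then hval ℓ a w (D' i₀).2 else 0) := hdiff
    rw [hB]
    have key : ∀ (E : Fin n → Fin m × ℝ), (∀ i, (E i).2 ∈ Set.Icc (0:ℝ) 1) →
        |(if inw E i₀ s e then hval ℓ a w (E i₀).2 else 0) - bw E i₀ s e * ℓ v₀ (E i₀).2| ≤
          bw E i₀ s e * (L * d) := by
      intro E hE
      unfold bw
      by_cases hiw : inw E i₀ s e
      · rw [if_pos hiw, if_pos hiw, one_mul, one_mul]
        have hub := hval_le' (a := a) (w := w) (y := (E i₀).2) hℓ ha hw hb (hE i₀) hv₀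
          (hiv a ⟨le_refl a, by linarith⟩) hL
        have hlb := hval_ge (a := a) (w := w) (y := (E i₀).2) hℓ ha hw hb (hE i₀) hv₀ hiv hL
        rw [abs_le]; constructor <;> linarith
      · simp [hiw]
    have k1 := key D hD
    have k2 := key D' hD'
    calc |(if inw D i₀ s e then hval ℓ a w (D i₀).2 else 0) -
            (if inw D' i₀ s e then hval ℓ a w (D' i₀).2 else 0) -
            (bw D i₀ s e * ℓ v₀ (D i₀).2 - bw D' i₀ s e * ℓ v₀ (D' i₀).2)|
        ≤ |(if inw D i₀ s e then hval ℓ a w (D i₀).2 else 0) - bw D i₀ s e * ℓ v₀ (D i₀).2| +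
          |(if inw D' i₀ s e then hval ℓ a w (D' i₀).2 else 0) - bw D' i₀ s e * ℓ v₀ (D' i₀).2| := by
          rw [show (if inw D i₀ s e then hval ℓ a w (D i₀).2 else 0) -
            (if inw D' i₀ s e then hval ℓ a w (D' i₀).2 else 0) -
            (bw D i₀ s e * ℓ v₀ (D i₀).2 - bw D' i₀ s e * ℓ v₀ (D' i₀).2) =
            ((if inw D i₀ s e then hval ℓ a w (D i₀).2 else 0) - bw D i₀ s e * ℓ v₀ (D i₀).2) -
            ((if inw D' i₀ s e then hval ℓ a w (D' i₀).2 else 0) - bw D' i₀ s e * ℓ v₀ (D' i₀).2)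
            by ring]
          exact abs_sub _ _
      _ ≤ bw D i₀ s e * (L * d) + bw D' i₀ s e * (L * d) := add_le_add k1 k2
      _ = (bw D i₀ s e + bw D' i₀ s e) * (L * d) := by ring
  | T+1, s, e, hse, a, w, ha, hw, hb, hiv => by
    rw [B_succ, B_succ]
    refine inf'_diff _ _ _ _ _ fun t _ => ?_
    unfold u
    obtain ⟨hc1, hc2⟩ := clip_mem hse t
    have hw2 : (0:ℝ) ≤ w/2 := by linarith
    have hivl : ∀ v ∈ Set.Icc a (a + w/2), |v - v₀| ≤ d := fun v hv =>
      hiv v ⟨hv.1, by linarith [hv.2]⟩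
    have hivr : ∀ v ∈ Set.Icc (a + w/2) (a + w/2 + w/2), |v - v₀| ≤ d := fun v hv =>
      hiv v ⟨by linarith [hv.1], by linarith [hv.2]⟩
    have IH1 := B_diff ℓ hℓ hL D D' hD hD' i₀ hoff hv₀ hd T hc1 ha hw2 (by linarith) hivl
    have IH2 := B_diff ℓ hℓ hL D D' hD hD' i₀ hoff hv₀ hd T hc2 (by linarith) hw2 (by linarith) hivr
    have hbs := bw_split D i₀ hc1 hc2
    have hbs' := bw_split D' i₀ hc1 hc2
    have t1 := abs_le.1 IH1
    have t2 := abs_le.1 IH2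
    rw [abs_le]
    constructor
    · rw [hbs, hbs']; linarith [t1.1, t2.1]
    · rw [hbs, hbs']; linarith [t1.2, t2.2]


lemma sum_tr {T : ℕ} (f : Tr m (T+1) → ℝ) :
    (∑ τ : Tr m (T+1), f τ) = ∑ t : Fin (m+1), ∑ τl : Tr m T, ∑ τr : Tr m T, f (t, τl, τr) := by
  show (∑ τ : Fin (m+1) × Tr m T × Tr m T, f τ) = _
  refine (Fintype.sum_prod_type (f := fun τ : Fin (m+1) × Tr m T × Tr m T => f τ)).trans ?_
  exact Finset.sum_congr rfl fun t _ => Fintype.sum_prod_type (f := fun p : Tr m T × Tr m T => f (t, p))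

lemma q_nonneg (ℓ : ℝ → ℝ → ℝ) (D : Fin n → Fin m × ℝ) (ε₀ L : ℝ) (T s e : ℕ) (a w : ℝ)
    (t : ℕ) : 0 ≤ q ℓ D ε₀ L T s e a w t := by
  unfold q
  exact div_nonneg (Real.exp_pos _).le (Z_pos _ _ (Nat.succ_pos m)).le

lemma dens_succ (ℓ : ℝ → ℝ → ℝ) (D : Fin n → Fin m × ℝ) (ε₀ L : ℝ) (T : ℕ)
    (τ : Tr m (T+1)) (s e : ℕ) (a w : ℝ) :
    dens ℓ D ε₀ L (T+1) τ s e a w =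
      q ℓ D ε₀ L T s e a w (τ.1 : ℕ) *
        dens ℓ D ε₀ L T τ.2.1 s (clip s e (τ.1 : ℕ)) a (w/2) *
        dens ℓ D ε₀ L T τ.2.2 (clip s e (τ.1 : ℕ)) e (a + w/2) (w/2) := rfl

lemma dens_nonneg (ℓ : ℝ → ℝ → ℝ) (D : Fin n → Fin m × ℝ) (ε₀ L : ℝ) :
    ∀ (T : ℕ) (τ : Tr m T) (s e : ℕ) (a w : ℝ), 0 ≤ dens ℓ D ε₀ L T τ s e a w
  | 0, _, _, _, _, _ => by norm_num [dens]
  | T+1, τ, s, e, a, w => by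
    rw [dens_succ]
    have h1 := dens_nonneg ℓ D ε₀ L T τ.2.1 s (clip s e (τ.1 : ℕ)) a (w/2)
    have h2 := dens_nonneg ℓ D ε₀ L T τ.2.2 (clip s e (τ.1 : ℕ)) e (a + w/2) (w/2)
    have h0 := q_nonneg ℓ D ε₀ L T s e a w (τ.1 : ℕ)
    positivity

lemma dens_sum_one (ℓ : ℝ → ℝ → ℝ) (D : Fin n → Fin m × ℝ) (ε₀ L : ℝ) :
    ∀ (T : ℕ) (s e : ℕ) (a w : ℝ), (∑ τ : Tr m T, dens ℓ D ε₀ L T τ s e a w) = 1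
  | 0, s, e, a, w => by
    show (∑ _τ : Unit, (1:ℝ)) = 1
    simp
  | T+1, s, e, a, w => by
    rw [sum_tr (fun τ => dens ℓ D ε₀ L (T+1) τ s e a w)]
    have step : ∀ t : Fin (m+1),
        (∑ τl : Tr m T, ∑ τr : Tr m T, dens ℓ D ε₀ L (T+1) (t, τl, τr) s e a w)
          = q ℓ D ε₀ L T s e a w (t : ℕ) := by
      intro t
      have : ∀ τl τr, dens ℓ D ε₀ L (T+1) (t, τl, τr) s e a w =
          q ℓ D ε₀ L T s e a w (t : ℕ) *
            (dens ℓ D ε₀ L T τl s (clip s e (t : ℕ)) a (w/2) *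
             dens ℓ D ε₀ L T τr (clip s e (t : ℕ)) e (a + w/2) (w/2)) := by
        intro τl τr; exact (dens_succ ℓ D ε₀ L T (t, τl, τr) s e a w).trans (mul_assoc _ _ _)
      calc (∑ τl : Tr m T, ∑ τr : Tr m T, dens ℓ D ε₀ L (T+1) (t, τl, τr) s e a w)
          = ∑ τl : Tr m T, ∑ τr : Tr m T, q ℓ D ε₀ L T s e a w (t : ℕ) *
              (dens ℓ D ε₀ L T τl s (clip s e (t : ℕ)) a (w/2) *
               dens ℓ D ε₀ L T τr (clip s e (t : ℕ)) e (a + w/2) (w/2)) := by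
            exact Finset.sum_congr rfl fun τl _ => Finset.sum_congr rfl fun τr _ => this τl τr
        _ = q ℓ D ε₀ L T s e a w (t : ℕ) *
              ((∑ τl : Tr m T, dens ℓ D ε₀ L T τl s (clip s e (t : ℕ)) a (w/2)) *
               (∑ τr : Tr m T, dens ℓ D ε₀ L T τr (clip s e (t : ℕ)) e (a + w/2) (w/2))) := by
            rw [Finset.sum_mul_sum, Finset.mul_sum]
            refine Finset.sum_congr rfl fun τl _ => ?_
            rw [Finset.mul_sum]
        _ = q ℓ D ε₀ L T s e a w (t : ℕ) := by
            rw [dens_sum_one ℓ D ε₀ L T s (clip s e (t : ℕ)) a (w/2),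
                dens_sum_one ℓ D ε₀ L T (clip s e (t : ℕ)) e (a + w/2) (w/2), one_mul, mul_one]
    have hq : (∑ t ∈ Finset.range (m+1), q ℓ D ε₀ L T s e a w t) = 1 := by
      unfold q; exact q_sum_one _ _ (Nat.succ_pos m)
    calc (∑ t : Fin (m+1), ∑ τl : Tr m T, ∑ τr : Tr m T,
            dens ℓ D ε₀ L (T+1) (t, τl, τr) s e a w)
        = ∑ t : Fin (m+1), q ℓ D ε₀ L T s e a w (t : ℕ) :=
          Finset.sum_congr rfl fun t _ => step t
      _ = ∑ t ∈ Finset.range (m+1), q ℓ D ε₀ L T s e a w t :=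
          Fin.sum_univ_eq_sum_range (fun t => q ℓ D ε₀ L T s e a w t) (m+1)
      _ = 1 := hq


lemma u_diff (ℓ : ℝ → ℝ → ℝ) {L : ℝ} (hℓ : IsLipschitzLoss ℓ L) (hL : 0 ≤ L)
    (D D' : Fin n → Fin m × ℝ) (hD : ∀ i, (D i).2 ∈ Set.Icc (0:ℝ) 1)
    (hD' : ∀ i, (D' i).2 ∈ Set.Icc (0:ℝ) 1) (i₀ : Fin n)
    (hoff : ∀ j, j ≠ i₀ → D j = D' j) (T : ℕ) {s e : ℕ} (hse : s ≤ e) {a w : ℝ}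
    (ha : 0 ≤ a) (hw : 0 ≤ w) (hb : a + w ≤ 1) :
    ∀ t ∈ Finset.range (m+1),
      |u ℓ D T s e a w t - u ℓ D' T s e a w t -
        (bw D i₀ s e * ℓ a (D i₀).2 - bw D' i₀ s e * ℓ a (D' i₀).2)| ≤
        (bw D i₀ s e + bw D' i₀ s e) * (L * w) := by
  intro t _
  unfold u
  obtain ⟨hc1, hc2⟩ := clip_mem hse t
  have hw2 : (0:ℝ) ≤ w/2 := by linarith
  have hva : a ∈ Set.Icc (0:ℝ) 1 := ⟨ha, by linarith⟩
  have hivl : ∀ v ∈ Set.Icc a (a + w/2), |v - a| ≤ w := fun v hv => by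
    rw [abs_le]; constructor <;> [linarith [hv.1]; linarith [hv.2]]
  have hivr : ∀ v ∈ Set.Icc (a + w/2) (a + w/2 + w/2), |v - a| ≤ w := fun v hv => by
    rw [abs_le]; constructor <;> [linarith [hv.1]; linarith [hv.2]]
  have IH1 := B_diff ℓ hℓ hL D D' hD hD' i₀ hoff hva hw T hc1 ha hw2 (by linarith) hivl
  have IH2 := B_diff ℓ hℓ hL D D' hD hD' i₀ hoff hva hw T hc2 (by linarith) hw2 (by linarith) hivr
  have hbs := bw_split D i₀ hc1 hc2
  have hbs' := bw_split D' i₀ hc1 hc2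
  have t1 := abs_le.1 IH1
  have t2 := abs_le.1 IH2
  rw [abs_le]
  constructor
  · rw [hbs, hbs']; linarith [t1.1, t2.1]
  · rw [hbs, hbs']; linarith [t1.2, t2.2]

lemma dens_ratio (ℓ : ℝ → ℝ → ℝ) {L : ℝ} (hℓ : IsLipschitzLoss ℓ L) (hL : 0 < L)
    {ε₀ : ℝ} (hε₀ : 0 ≤ ε₀) (D D' : Fin n → Fin m × ℝ)
    (hD : ∀ i, (D i).2 ∈ Set.Icc (0:ℝ) 1) (hD' : ∀ i, (D' i).2 ∈ Set.Icc (0:ℝ) 1)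
    (i₀ : Fin n) (hoff : ∀ j, j ≠ i₀ → D j = D' j) :
    ∀ (T : ℕ) (τ : Tr m T) {s e : ℕ}, s ≤ e → ∀ {a w : ℝ}, 0 ≤ a → 0 < w → a + w ≤ 1 →
      dens ℓ D ε₀ L T τ s e a w ≤
        Real.exp ((bw D i₀ s e + bw D' i₀ s e) * T * (ε₀/4)) * dens ℓ D' ε₀ L T τ s e a w
  | 0, τ, s, e, hse, a, w, ha, hw, hb => by
    show (1:ℝ) ≤ Real.exp ((bw D i₀ s e + bw D' i₀ s e) * (0:ℕ) * (ε₀/4)) * 1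
    rw [Nat.cast_zero, mul_zero, zero_mul, Real.exp_zero, one_mul]
  | T+1, τ, s, e, hse, a, w, ha, hw, hb => by
    have hw2 : (0:ℝ) < w/2 := by linarith
    obtain ⟨hc1, hc2⟩ := clip_mem hse (τ.1 : ℕ)
    set t' := clip s e (τ.1 : ℕ) with ht'
    -- node factor
    have hlam : 0 ≤ lam ε₀ L w := by
      unfold lam; positivity
    have hqr : q ℓ D ε₀ L T s e a w (τ.1 : ℕ) ≤
        Real.exp ((bw D i₀ s e + bw D' i₀ s e) * (ε₀/4)) * q ℓ D' ε₀ L T s e a w (τ.1 : ℕ) := by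
      have happ := q_ratio (u ℓ D T s e a w) (u ℓ D' T s e a w) hlam
        (S := (bw D i₀ s e + bw D' i₀ s e) * (L * w))
        (by have b1 := bw_nonneg D i₀ s e; have b2 := bw_nonneg D' i₀ s e; positivity)
        (Nat.succ_pos m)
        (u_diff ℓ hℓ hL.le D D' hD hD' i₀ hoff T hse ha hw.le hb)
        (τ.1 : ℕ) (Finset.mem_range.2 (τ.1).2)
      have hexp : 2 * lam ε₀ L w * ((bw D i₀ s e + bw D' i₀ s e) * (L * w)) =
          (bw D i₀ s e + bw D' i₀ s e) * (ε₀/4) := by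
        unfold lam; field_simp; ring
      rw [hexp] at happ
      exact happ
    have IHl := dens_ratio ℓ hℓ hL hε₀ D D' hD hD' i₀ hoff T τ.2.1 hc1 ha hw2 (by linarith)
    have IHr := dens_ratio ℓ hℓ hL hε₀ D D' hD hD' i₀ hoff T τ.2.2 (s := t') (e := e) hc2
      (a := a + w/2) (w := w/2) (by linarith) hw2 (by linarith)
    rw [dens_succ, dens_succ]
    have h0' := q_nonneg ℓ D' ε₀ L T s e a w (τ.1 : ℕ)
    have h1 := dens_nonneg ℓ D ε₀ L T τ.2.1 s t' a (w/2)
    have h2 := dens_nonneg ℓ D ε₀ L T τ.2.2 t' e (a + w/2) (w/2)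
    have h1' := dens_nonneg ℓ D' ε₀ L T τ.2.1 s t' a (w/2)
    have h2' := dens_nonneg ℓ D' ε₀ L T τ.2.2 t' e (a + w/2) (w/2)
    set E0 := Real.exp ((bw D i₀ s e + bw D' i₀ s e) * (ε₀/4))
    set El := Real.exp ((bw D i₀ s t' + bw D' i₀ s t') * T * (ε₀/4))
    set Er := Real.exp ((bw D i₀ t' e + bw D' i₀ t' e) * T * (ε₀/4))
    have step : q ℓ D ε₀ L T s e a w (τ.1 : ℕ) * dens ℓ D ε₀ L T τ.2.1 s t' a (w/2) *
          dens ℓ D ε₀ L T τ.2.2 t' e (a + w/2) (w/2) ≤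
        (E0 * q ℓ D' ε₀ L T s e a w (τ.1 : ℕ)) * (El * dens ℓ D' ε₀ L T τ.2.1 s t' a (w/2)) *
          (Er * dens ℓ D' ε₀ L T τ.2.2 t' e (a + w/2) (w/2)) := by
      have s1 : q ℓ D ε₀ L T s e a w (τ.1 : ℕ) * dens ℓ D ε₀ L T τ.2.1 s t' a (w/2) ≤
          (E0 * q ℓ D' ε₀ L T s e a w (τ.1 : ℕ)) *
            (El * dens ℓ D' ε₀ L T τ.2.1 s t' a (w/2)) :=
        mul_le_mul hqr IHl h1 (by positivity)
      exact mul_le_mul s1 IHr h2 (by positivity)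
    refine step.trans (le_of_eq ?_)
    have hexpmul : E0 * El * Er =
        Real.exp ((bw D i₀ s e + bw D' i₀ s e) * (T+1 : ℕ) * (ε₀/4)) := by
      rw [← Real.exp_add, ← Real.exp_add]
      congr 1
      rw [bw_split D i₀ hc1 hc2, bw_split D' i₀ hc1 hc2]
      push_cast
      ring
    rw [← hexpmul]
    ring


lemma wsum_add (D : Fin n → Fin m × ℝ) (s e : ℕ) (F G : Fin m × ℝ → ℝ) :
    wsum D s e (fun p => F p + G p) = wsum D s e F + wsum D s e G := by
  unfold wsum
  rw [← Finset.sum_add_distrib]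
  refine Finset.sum_congr rfl fun i _ => ?_
  by_cases hx : s ≤ ((D i).1 : ℕ) ∧ ((D i).1 : ℕ) < e
  · rw [if_pos hx, if_pos hx, if_pos hx]
  · rw [if_neg hx, if_neg hx, if_neg hx, add_zero]

lemma wsum_const (D : Fin n → Fin m × ℝ) (s e : ℕ) (c : ℝ) :
    wsum D s e (fun _ => c) = cnt D s e * c := by
  unfold cnt wsum
  rw [Finset.sum_mul]
  refine Finset.sum_congr rfl fun i _ => ?_
  by_cases hx : s ≤ ((D i).1 : ℕ) ∧ ((D i).1 : ℕ) < e
  · rw [if_pos hx, if_pos hx, one_mul]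
  · rw [if_neg hx, if_neg hx, zero_mul]

lemma cnt_nonneg (D : Fin n → Fin m × ℝ) (s e : ℕ) : 0 ≤ cnt D s e := by
  unfold cnt wsum
  refine Finset.sum_nonneg fun i _ => ?_
  split <;> norm_num

lemma cnt_split (D : Fin n → Fin m × ℝ) {s t e : ℕ} (h1 : s ≤ t) (h2 : t ≤ e) :
    cnt D s e = cnt D s t + cnt D t e := wsum_split D h1 h2 _

/-- The benchmark is below the cost of any monotone comparator with values in the window. -/
lemma B_le_cost (ℓ : ℝ → ℝ → ℝ) {L : ℝ} (hℓ : IsLipschitzLoss ℓ L)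
    (D : Fin n → Fin m × ℝ) (hD : ∀ i, (D i).2 ∈ Set.Icc (0:ℝ) 1) :
    ∀ (T : ℕ) {s e : ℕ}, s ≤ e → e ≤ m → ∀ {a w : ℝ}, 0 ≤ a → 0 ≤ w → a + w ≤ 1 →
      ∀ g : ℕ → ℝ, (∀ x y : ℕ, x ≤ y → g x ≤ g y) →
      (∀ x, s ≤ x → x < e → a ≤ g x ∧ g x ≤ a + w) →
      B ℓ D T s e a w ≤ cost ℓ D g s e
  | 0, s, e, hse, hem, a, w, ha, hw, hb, g, hgm, hgw => by
    refine wsum_mono D s e fun i h1 h2 => ?_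
    exact hval_le hℓ ha hw hb (hD i) ⟨(hgw _ h1 h2).1, (hgw _ h1 h2).2⟩
  | T+1, s, e, hse, hem, a, w, ha, hw, hb, g, hgm, hgw => by
    have hw2 : (0:ℝ) ≤ w/2 := by linarith
    set S' : Set ℕ := {x | a + w/2 < g x ∨ e ≤ x} with hS'
    have hS'ne : S'.Nonempty := ⟨e, Or.inr le_rfl⟩
    have hup : ∀ x, sInf S' ≤ x → x ∈ S' := by
      intro x hx
      have hmem := Nat.sInf_mem hS'ne
      rcases hmem with hg | he
      · exact Or.inl (lt_of_lt_of_le hg (hgm _ _ hx))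
      · exact Or.inr (le_trans he hx)
    set tg := max s (sInf S') with htg
    have hinfe : sInf S' ≤ e := Nat.sInf_le (Or.inr le_rfl)
    have htg1 : s ≤ tg := le_max_left _ _
    have htg2 : tg ≤ e := max_le hse hinfe
    have hclip : clip s e tg = tg := clip_eq htg1 htg2
    have hmem : tg ∈ Finset.range (m+1) := Finset.mem_range.2 (by omega)
    rw [B_succ]
    refine le_trans (Finset.inf'_le _ hmem) ?_
    show B ℓ D T s (clip s e tg) a (w/2) + B ℓ D T (clip s e tg) e (a + w/2) (w/2) ≤ _
    rw [hclip]
    have hleft : B ℓ D T s tg a (w/2) ≤ cost ℓ D g s tg := by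
      refine B_le_cost ℓ hℓ D hD T htg1 (by omega) ha hw2 (by linarith) g hgm ?_
      intro x hx1 hx2
      have hxe : x < e := by omega
      have hnot : x ∉ S' := by
        intro hmemS
        have : sInf S' ≤ x := Nat.sInf_le hmemS
        omega
      have : ¬ (a + w/2 < g x) := fun hgt => hnot (Or.inl hgt)
      exact ⟨(hgw x hx1 hxe).1, by linarith⟩
    have hright : B ℓ D T tg e (a + w/2) (w/2) ≤ cost ℓ D g tg e := by
      refine B_le_cost ℓ hℓ D hD T htg2 hem (by linarith) hw2 (by linarith) g hgm ?_
      intro x hx1 hx2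
      have hxs : s ≤ x := le_trans htg1 hx1
      have hxin : x ∈ S' := hup x (le_trans (le_max_right _ _) hx1)
      have hglow : a + w/2 ≤ g x := by
        rcases hxin with hg | he
        · exact hg.le
        · omega
      have := (hgw x hxs hx2).2
      exact ⟨hglow, by linarith⟩
    have hsplit := wsum_split D htg1 htg2 (fun p => ℓ (g (p.1 : ℕ)) p.2)
    unfold cost at *
    rw [hsplit]
    exact add_le_add hleft hright


lemma sum_pair_factor {α β : Type*} [Fintype α] [Fintype β] (p : α → ℝ) (r : β → ℝ)
    (f : α → ℝ) (g : β → ℝ) (hp : (∑ a, p a) = 1) (hr : (∑ b, r b) = 1) :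
    (∑ a, ∑ b, p a * r b * (f a + g b)) = (∑ a, p a * f a) + (∑ b, r b * g b) := by
  have h1 : ∀ a, (∑ b, p a * r b * (f a + g b))
      = p a * f a * (∑ b, r b) + p a * (∑ b, r b * g b) := by
    intro a
    rw [Finset.mul_sum, Finset.mul_sum, ← Finset.sum_add_distrib]
    exact Finset.sum_congr rfl fun b _ => by ring
  calc (∑ a, ∑ b, p a * r b * (f a + g b))
      = ∑ a, (p a * f a * (∑ b, r b) + p a * (∑ b, r b * g b)) :=
        Finset.sum_congr rfl fun a _ => h1 a
    _ = ∑ a, (p a * f a + p a * (∑ b, r b * g b)) := by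
        rw [hr]; exact Finset.sum_congr rfl fun a _ => by ring
    _ = (∑ a, p a * f a) + (∑ a, p a * (∑ b, r b * g b)) := Finset.sum_add_distrib
    _ = (∑ a, p a * f a) + (∑ a, p a) * (∑ b, r b * g b) := by rw [Finset.sum_mul]
    _ = (∑ a, p a * f a) + (∑ b, r b * g b) := by rw [hp, one_mul]

lemma cost_congr (ℓ : ℝ → ℝ → ℝ) (D : Fin n → Fin m × ℝ) {f g : ℕ → ℝ} (s e : ℕ)
    (h : ∀ x, s ≤ x → x < e → f x = g x) : cost ℓ D f s e = cost ℓ D g s e :=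
  wsum_congr D s e fun i h1 h2 => by rw [h _ h1 h2]

/-- Expected cost bound for the recursive mechanism. -/
lemma ECost (ℓ : ℝ → ℝ → ℝ) {L : ℝ} (hℓ : IsLipschitzLoss ℓ L) (hL : 0 < L)
    {ε₀ : ℝ} (hε₀ : 0 < ε₀) (D : Fin n → Fin m × ℝ)
    (hD : ∀ i, (D i).2 ∈ Set.Icc (0:ℝ) 1) :
    ∀ (T : ℕ) {s e : ℕ}, s ≤ e → ∀ {a w : ℝ}, 0 ≤ a → 0 < w → a + w ≤ 1 →
      (∑ τ : Tr m T, dens ℓ D ε₀ L T τ s e a w * cost ℓ D (dec T τ s e a w) s e) ≤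
        B ℓ D T s e a w + cnt D s e * (L * w * (1/2)^T) +
          T * (16 * L * w * (Real.log ((m:ℝ)+1) + 1) / ε₀)
  | 0, s, e, hse, a, w, ha, hw, hb => by
    have hLHS : (∑ τ : Tr m 0, dens ℓ D ε₀ L 0 τ s e a w * cost ℓ D (dec 0 τ s e a w) s e)
        = cost ℓ D (fun _ => a + w/2) s e := by
      show (∑ _τ : Unit, (1:ℝ) * cost ℓ D (fun _ => a + w/2) s e) = _
      simp
    rw [hLHS]
    have hpt : cost ℓ D (fun _ => a + w/2) s e ≤ B ℓ D 0 s e a w + cnt D s e * (L * w) := by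
      have hstep : cost ℓ D (fun _ => a + w/2) s e ≤
          wsum D s e (fun p => hval ℓ a w p.2 + L * w) := by
        refine wsum_mono D s e fun i h1 h2 => ?_
        have := hval_ge (a := a) (w := w) (y := (D i).2) hℓ ha hw.le hb (hD i)
          (v₀ := a + w/2) (d := w) ⟨by linarith, by linarith⟩
          (fun v hv => by rw [abs_le]; constructor <;> [linarith [hv.1]; linarith [hv.2]])
          (lip_nonneg hℓ)
        show ℓ (a + w/2) (D i).2 ≤ hval ℓ a w (D i).2 + L * w
        linarith
      calc cost ℓ D (fun _ => a + w/2) s e ≤ wsum D s e (fun p => hval ℓ a w p.2 + L * w) := hstep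
        _ = wsum D s e (fun p => hval ℓ a w p.2) + wsum D s e (fun _ => L * w) :=
            wsum_add D s e _ _
        _ = B ℓ D 0 s e a w + cnt D s e * (L * w) := by rw [wsum_const]; rfl
    calc cost ℓ D (fun _ => a + w/2) s e ≤ B ℓ D 0 s e a w + cnt D s e * (L * w) := hpt
      _ ≤ _ := by
          rw [Nat.cast_zero, zero_mul, add_zero, pow_zero]
          rw [mul_one]
  | T+1, s, e, hse, a, w, ha, hw, hb => by
    have hw2 : (0:ℝ) < w/2 := by linarith
    have hlam : 0 < lam ε₀ L w := by unfold lam; positivity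
    set K1 := Real.log ((m:ℝ)+1) + 1 with hK1
    set Ec := cnt D s e * (L * (w/2) * (1/2)^T) + T * (16 * L * w * K1 / ε₀) with hEc
    -- inner sums
    have inner : ∀ t : Fin (m+1),
        (∑ τl : Tr m T, ∑ τr : Tr m T,
          dens ℓ D ε₀ L (T+1) (t, τl, τr) s e a w *
            cost ℓ D (dec (T+1) (t, τl, τr) s e a w) s e) ≤
          q ℓ D ε₀ L T s e a w (t : ℕ) * (u ℓ D T s e a w (t : ℕ) + Ec) := by
      intro t
      obtain ⟨hc1, hc2⟩ := clip_mem hse (t : ℕ)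
      set t' := clip s e (t : ℕ) with ht'
      have hcost : ∀ (τl τr : Tr m T),
          cost ℓ D (dec (T+1) (t, τl, τr) s e a w) s e =
            cost ℓ D (dec T τl s t' a (w/2)) s t' +
            cost ℓ D (dec T τr t' e (a + w/2) (w/2)) t' e := by
        intro τl τr
        have hs := wsum_split D hc1 hc2
          (fun p => ℓ (dec (T+1) (t, τl, τr) s e a w (p.1 : ℕ)) p.2)
        unfold cost
        rw [hs]
        congr 1
        · refine wsum_congr D s t' fun i h1 h2 => ?_
          show ℓ (dec (T+1) (t, τl, τr) s e a w _) _ = _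
          rw [show dec (T+1) (t, τl, τr) s e a w ((D i).1 : ℕ) =
            dec T τl s t' a (w/2) ((D i).1 : ℕ) from if_pos h2]
        · refine wsum_congr D t' e fun i h1 h2 => ?_
          show ℓ (dec (T+1) (t, τl, τr) s e a w _) _ = _
          have hxge : ¬ (((D i).1 : ℕ) < t') := by omega
          rw [show dec (T+1) (t, τl, τr) s e a w ((D i).1 : ℕ) =
            dec T τr t' e (a + w/2) (w/2) ((D i).1 : ℕ) from if_neg hxge]
      have hdens : ∀ (τl τr : Tr m T),
          dens ℓ D ε₀ L (T+1) (t, τl, τr) s e a w =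
            q ℓ D ε₀ L T s e a w (t : ℕ) *
              (dens ℓ D ε₀ L T τl s t' a (w/2) * dens ℓ D ε₀ L T τr t' e (a + w/2) (w/2)) := by
        intro τl τr; exact (dens_succ ℓ D ε₀ L T (t, τl, τr) s e a w).trans (mul_assoc _ _ _)
      have hq0 := q_nonneg ℓ D ε₀ L T s e a w (t : ℕ)
      calc (∑ τl : Tr m T, ∑ τr : Tr m T,
            dens ℓ D ε₀ L (T+1) (t, τl, τr) s e a w *
              cost ℓ D (dec (T+1) (t, τl, τr) s e a w) s e)
          = q ℓ D ε₀ L T s e a w (t : ℕ) *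
              ∑ τl : Tr m T, ∑ τr : Tr m T,
                (dens ℓ D ε₀ L T τl s t' a (w/2)) * (dens ℓ D ε₀ L T τr t' e (a + w/2) (w/2)) *
                  (cost ℓ D (dec T τl s t' a (w/2)) s t' +
                   cost ℓ D (dec T τr t' e (a + w/2) (w/2)) t' e) := by
            rw [Finset.mul_sum]
            refine Finset.sum_congr rfl fun τl _ => ?_
            rw [Finset.mul_sum]
            refine Finset.sum_congr rfl fun τr _ => ?_
            rw [hcost τl τr, hdens τl τr]; ring
        _ = q ℓ D ε₀ L T s e a w (t : ℕ) *
              ((∑ τl : Tr m T, dens ℓ D ε₀ L T τl s t' a (w/2) *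
                  cost ℓ D (dec T τl s t' a (w/2)) s t') +
               (∑ τr : Tr m T, dens ℓ D ε₀ L T τr t' e (a + w/2) (w/2) *
                  cost ℓ D (dec T τr t' e (a + w/2) (w/2)) t' e)) := by
            rw [sum_pair_factor _ _ _ _ (dens_sum_one ℓ D ε₀ L T s t' a (w/2))
              (dens_sum_one ℓ D ε₀ L T t' e (a + w/2) (w/2))]
        _ ≤ q ℓ D ε₀ L T s e a w (t : ℕ) * (u ℓ D T s e a w (t : ℕ) + Ec) := by
            refine mul_le_mul_of_nonneg_left ?_ hq0
            have IHl := ECost ℓ hℓ hL hε₀ D hD T hc1 ha hw2 (by linarith)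
            have IHr := ECost ℓ hℓ hL hε₀ D hD T (s := t') (e := e) hc2
              (a := a + w/2) (w := w/2) (by linarith) hw2 (by linarith)
            have hcnt := cnt_split D hc1 hc2
            unfold u
            rw [hEc, hcnt]
            have harith : (T:ℝ) * (16 * L * (w/2) * K1 / ε₀) +
                (T:ℝ) * (16 * L * (w/2) * K1 / ε₀) = (T:ℝ) * (16 * L * w * K1 / ε₀) := by ring
            calc (∑ τl : Tr m T, dens ℓ D ε₀ L T τl s t' a (w/2) *
                    cost ℓ D (dec T τl s t' a (w/2)) s t') +
                 (∑ τr : Tr m T, dens ℓ D ε₀ L T τr t' e (a + w/2) (w/2) *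
                    cost ℓ D (dec T τr t' e (a + w/2) (w/2)) t' e)
                ≤ (B ℓ D T s t' a (w/2) + cnt D s t' * (L * (w/2) * (1/2)^T) +
                    T * (16 * L * (w/2) * K1 / ε₀)) +
                  (B ℓ D T t' e (a + w/2) (w/2) + cnt D t' e * (L * (w/2) * (1/2)^T) +
                    T * (16 * L * (w/2) * K1 / ε₀)) := add_le_add IHl IHr
              _ ≤ B ℓ D T s t' a (w/2) + B ℓ D T t' e (a + w/2) (w/2) +
                  ((cnt D s t' + cnt D t' e) * (L * (w/2) * (1/2)^T) +
                    T * (16 * L * w * K1 / ε₀)) := by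
                  rw [← harith]; ring_nf; linarith [le_refl (0:ℝ)]
              _ = _ := by ring
    -- assemble over t
    have hqsum : (∑ t : Fin (m+1), q ℓ D ε₀ L T s e a w (t : ℕ)) = 1 := by
      rw [Fin.sum_univ_eq_sum_range (fun t => q ℓ D ε₀ L T s e a w t) (m+1)]
      unfold q; exact q_sum_one _ _ (Nat.succ_pos m)
    have hmean : (∑ t : Fin (m+1), q ℓ D ε₀ L T s e a w (t : ℕ) * u ℓ D T s e a w (t : ℕ)) ≤
        B ℓ D (T+1) s e a w + 16 * L * w * K1 / ε₀ := by
      rw [Fin.sum_univ_eq_sum_range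
        (fun t => q ℓ D ε₀ L T s e a w t * u ℓ D T s e a w t) (m+1)]
      have happ := expmech_mean (u ℓ D T s e a w) hlam (Nat.succ_pos m)
      have heq : 2 * (Real.log ((m+1 : ℕ) : ℝ) + 1) / lam ε₀ L w = 16 * L * w * K1 / ε₀ := by
        rw [hK1]
        unfold lam
        push_cast
        field_simp
        ring
      rw [heq] at happ
      rw [B_succ]
      unfold q
      exact happ
    calc (∑ τ : Tr m (T+1), dens ℓ D ε₀ L (T+1) τ s e a w *
            cost ℓ D (dec (T+1) τ s e a w) s e)
        = ∑ t : Fin (m+1), ∑ τl : Tr m T, ∑ τr : Tr m T,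
            dens ℓ D ε₀ L (T+1) (t, τl, τr) s e a w *
              cost ℓ D (dec (T+1) (t, τl, τr) s e a w) s e :=
          sum_tr (fun τ => dens ℓ D ε₀ L (T+1) τ s e a w *
            cost ℓ D (dec (T+1) τ s e a w) s e)
      _ ≤ ∑ t : Fin (m+1), q ℓ D ε₀ L T s e a w (t : ℕ) * (u ℓ D T s e a w (t : ℕ) + Ec) :=
          Finset.sum_le_sum fun t _ => inner t
      _ = (∑ t : Fin (m+1), q ℓ D ε₀ L T s e a w (t : ℕ) * u ℓ D T s e a w (t : ℕ)) +
            (∑ t : Fin (m+1), q ℓ D ε₀ L T s e a w (t : ℕ)) * Ec := by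
          rw [Finset.sum_mul, ← Finset.sum_add_distrib]
          exact Finset.sum_congr rfl fun t _ => by ring
      _ ≤ (B ℓ D (T+1) s e a w + 16 * L * w * K1 / ε₀) + 1 * Ec := by
          rw [hqsum]
          exact add_le_add hmean le_rfl
      _ ≤ _ := by
          rw [hEc, one_mul]
          push_cast
          ring_nf
          linarith [le_refl (0:ℝ)]


lemma wsum_full (D : Fin n → Fin m × ℝ) (F : Fin m × ℝ → ℝ) :
    wsum D 0 m F = ∑ i, F (D i) := by
  unfold wsum
  refine Finset.sum_congr rfl fun i _ => ?_
  rw [if_pos ⟨Nat.zero_le _, ((D i).1).2⟩]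

lemma cnt_full (D : Fin n → Fin m × ℝ) : cnt D 0 m = n := by
  unfold cnt
  rw [wsum_full]
  simp

/-- Integral of a function against a finite combination of Dirac measures. -/
lemma integral_sum_dirac {α : Type*} [MeasurableSpace α] [MeasurableSingletonClass α]
    {ι : Type*} [Fintype ι] (c : ι → ℝ) (hc : ∀ i, 0 ≤ c i) (g : ι → α) (F : α → ℝ) :
    (∫ x, F x ∂(∑ i : ι, ENNReal.ofReal (c i) • Measure.dirac (g i))) =
      ∑ i : ι, c i * F (g i) := by
  have hint : ∀ i : ι, Integrable F (ENNReal.ofReal (c i) • Measure.dirac (g i)) := by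
    intro i
    have hsub : {x | ¬ F x = F (g i)} ⊆ {g i}ᶜ := fun x hx hxg =>
      hx (by rw [Set.mem_singleton_iff.1 hxg])
    have h0 : (ENNReal.ofReal (c i) • Measure.dirac (g i)) {x | ¬ F x = F (g i)} = 0 := by
      refine measure_mono_null hsub ?_
      rw [Measure.smul_apply,
        Measure.dirac_apply' _ (MeasurableSet.compl (measurableSet_singleton _))]
      simp
    have hae : F =ᵐ[ENNReal.ofReal (c i) • Measure.dirac (g i)] (fun _ => F (g i)) :=
      MeasureTheory.ae_iff.2 h0
    haveI : IsFiniteMeasure (ENNReal.ofReal (c i) • Measure.dirac (g i)) := by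
      constructor
      rw [Measure.smul_apply, smul_eq_mul]
      exact ENNReal.mul_lt_top ENNReal.ofReal_lt_top (by simp)
    exact (integrable_const (F (g i))).congr hae.symm
  rw [MeasureTheory.integral_finset_sum_measure (fun i _ => hint i)]
  refine Finset.sum_congr rfl fun i _ => ?_
  rw [integral_smul_measure, integral_dirac, ENNReal.toReal_ofReal (hc i), smul_eq_mul]

lemma sum_dirac_apply {α : Type*} [MeasurableSpace α] {ι : Type*} [Fintype ι]
    (c : ι → ENNReal) (g : ι → α) (S : Set α) :
    (∑ i : ι, c i • Measure.dirac (g i)) S = ∑ i : ι, c i * Measure.dirac (g i) S := by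
  rw [Measure.finset_sum_apply]
  exact Finset.sum_congr rfl fun i _ => by rw [Measure.smul_apply, smul_eq_mul]


lemma bw_le_one (D : Fin n → Fin m × ℝ) (i : Fin n) (s e : ℕ) : bw D i s e ≤ 1 := by
  unfold bw; split <;> norm_num

lemma two_pow_T {x : ℝ} (hx : 0 < x) : x ≤ (2:ℝ) ^ (max 1 ⌈Real.logb 2 x⌉₊) := by
  rcases le_or_gt x 1 with h1 | h1
  · have h2 : ((2:ℝ))^(1:ℕ) ≤ (2:ℝ)^(max 1 ⌈Real.logb 2 x⌉₊) :=
      pow_le_pow_right₀ (by norm_num) (le_max_left _ _)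
    rw [pow_one] at h2
    linarith
  · have hlb : Real.logb 2 x ≤ ((max 1 ⌈Real.logb 2 x⌉₊ : ℕ) : ℝ) := by
      refine (Nat.le_ceil _).trans ?_
      exact_mod_cast Nat.cast_le.2 (le_max_right 1 _)
    calc x = (2:ℝ) ^ (Real.logb 2 x) := (Real.rpow_logb (by norm_num) (by norm_num) hx).symm
      _ ≤ (2:ℝ) ^ (((max 1 ⌈Real.logb 2 x⌉₊ : ℕ)) : ℝ) :=
          Real.rpow_le_rpow_of_exponent_le (by norm_num) hlb
      _ = (2:ℝ) ^ (max 1 ⌈Real.logb 2 x⌉₊) := Real.rpow_natCast 2 _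

lemma T_sq {x : ℝ} (hx : 0 < x) :
    ((max 1 ⌈Real.logb 2 x⌉₊ : ℕ) : ℝ)^2 ≤ 5 * (1 + Real.log x ^ 2) := by
  have hlog2 : (0:ℝ) < Real.log 2 := Real.log_pos (by norm_num)
  rcases lt_or_ge x 2 with h2 | h2
  · have hle : Real.logb 2 x ≤ 1 := by
      rw [Real.logb, div_le_one hlog2]
      exact Real.log_le_log hx h2.le
    have hceil : ⌈Real.logb 2 x⌉₊ ≤ 1 := by
      refine Nat.ceil_le.2 ?_
      simpa using hle
    have hT : max 1 ⌈Real.logb 2 x⌉₊ = 1 := by omega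
    rw [hT]
    push_cast
    nlinarith [sq_nonneg (Real.log x)]
  · have hl2 : Real.log 2 ≤ Real.log x := Real.log_le_log (by norm_num) h2
    have hlb1 : 1 ≤ Real.logb 2 x := by
      rw [Real.logb, le_div_iff₀ hlog2, one_mul]
      exact hl2
    have hc : (⌈Real.logb 2 x⌉₊ : ℝ) < Real.logb 2 x + 1 :=
      Nat.ceil_lt_add_one (by linarith)
    have hT : ((max 1 ⌈Real.logb 2 x⌉₊ : ℕ) : ℝ) ≤ Real.logb 2 x + 1 := by
      rw [Nat.cast_max]
      refine max_le (by push_cast; linarith) (by linarith)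
    have hTpos : (0:ℝ) ≤ ((max 1 ⌈Real.logb 2 x⌉₊ : ℕ) : ℝ) := Nat.cast_nonneg _
    set T : ℝ := ((max 1 ⌈Real.logb 2 x⌉₊ : ℕ) : ℝ)
    set l := Real.log x
    have hTl2 : T * Real.log 2 ≤ l + Real.log 2 := by
      have h3 := mul_le_mul_of_nonneg_right hT hlog2.le
      rw [add_mul, Real.logb, div_mul_cancel₀ _ hlog2.ne', one_mul] at h3
      exact h3
    have hsq1 : (T * Real.log 2) * (T * Real.log 2) ≤ (l + Real.log 2) * (l + Real.log 2) :=
      mul_self_le_mul_self (by positivity) hTl2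
    have hsq : T^2 * (Real.log 2)^2 ≤ 2*l^2 + 2*(Real.log 2)^2 := by
      nlinarith [sq_nonneg (l - Real.log 2)]
    have hc2 : (0.48:ℝ) < (Real.log 2)^2 := by
      nlinarith [Real.log_two_gt_d9]
    nlinarith [hsq, hc2, sq_nonneg l]

lemma err_arith {L x G Q K1 p t : ℝ} (hL : 0 < L) (hx : 0 < x) (hG : (0.69:ℝ) < G)
    (hQ : 1 ≤ Q) (hK : 0 ≤ K1) (hp : p ≤ 1/x) (ht2 : t^2 ≤ 5*Q) (hK4 : K1 ≤ 4*G) :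
    L * p + 16 * t^2 * L * K1 / x ≤ 1000 * L * G * Q / x := by
  have h1 : t^2 * K1 ≤ (5*Q) * (4*G) :=
    mul_le_mul ht2 hK4 hK (by linarith)
  have h2 : 16*L*(t^2*K1) ≤ 16*L*((5*Q)*(4*G)) :=
    mul_le_mul_of_nonneg_left h1 (by positivity)
  have hGQ : (1:ℝ) ≤ 2*(G*Q) := by nlinarith
  have h3 : L*1 ≤ L*(2*(G*Q)) := mul_le_mul_of_nonneg_left hGQ hL.le
  have h4 : (0:ℝ) ≤ L*(G*Q) := by nlinarith
  have hkey : L + 16*t^2*L*K1 ≤ 1000*L*G*Q := by nlinarith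
  have hLp : L*p ≤ L*(1/x) := mul_le_mul_of_nonneg_left hp hL.le
  calc L * p + 16 * t^2 * L * K1 / x
      ≤ L * (1/x) + 16 * t^2 * L * K1 / x := by linarith
    _ = (L + 16 * t^2 * L * K1) / x := by ring
    _ ≤ (1000 * L * G * Q) / x := by gcongr
    _ = 1000 * L * G * Q / x := rfl

end
end DPIR

set_option maxHeartbeats 2000000 in
/-- **Theorem 3 (Upper Bound for Totally Ordered Sets).** There is a universal constant
`C > 0` such that for `X = {1,…,m}` (here `Fin m`) with `m ≥ 2`, every `L`-Lipschitz
loss `ℓ`, every `n ≥ 1` and `ε ∈ (0,1]`, there is an `ε`-DP isotonic-regression mechanism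
with expected excess empirical risk at most `C · L · log m · (1 + log²(εn)) / (εn)`. -/
theorem dp_isotonic_regression_total_order_upper_bound :
    ∃ C : ℝ, 0 < C ∧
      ∀ m : ℕ, 2 ≤ m →
        ∀ (ℓ : ℝ → ℝ → ℝ) (L : ℝ), IsLipschitzLoss ℓ L →
        ∀ n : ℕ, 1 ≤ n →
        ∀ ε : ℝ, ε ∈ Set.Ioc (0 : ℝ) 1 →
        ∃ M : (Fin n → Fin m × ℝ) → Measure (Fin m → ℝ),
          IsIsoRegAlg M ∧
          IsDP NeighborDS M ε 0 ∧
          ∀ D : Fin n → Fin m × ℝ, IsDataset D →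
            (∫ f, empRisk ℓ f D ∂(M D)) - optRisk ℓ D ≤
              C * L * Real.log m * (1 + Real.log (ε * n) ^ 2) / (ε * n) := by
  classical
  refine ⟨1000, by norm_num, ?_⟩
  intro m hm ℓ L hℓ n hn ε hε
  obtain ⟨hε0, hε1⟩ := hε
  have hL0 : 0 ≤ L := DPIR.lip_nonneg hℓ
  have hm0 : 0 < m := by omega
  have hn0 : (0:ℝ) < n := by exact_mod_cast hn
  have hx : (0:ℝ) < ε * n := by positivity
  haveI hne : Nonempty {g : Fin m → ℝ // IsMonotone01 g} :=
    ⟨⟨fun _ => 0, monotone_const, fun _ => by norm_num⟩⟩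
  rcases eq_or_lt_of_le hL0 with hLz | hLpos
  · -- degenerate case L = 0
    obtain rfl : L = 0 := hLz.symm
    refine ⟨fun _ => Measure.dirac (fun _ => (1:ℝ)/2), ?_, ?_, ?_⟩
    · intro D hD
      refine ⟨inferInstance, Measure.dirac_apply_of_mem ?_⟩
      exact ⟨monotone_const, fun _ => by norm_num⟩
    · intro D D' hN S hS
      have h1 : (1:ENNReal) ≤ ENNReal.ofReal (Real.exp ε) := by
        rw [show (1:ENNReal) = ENNReal.ofReal 1 by simp]
        exact ENNReal.ofReal_le_ofReal (Real.one_le_exp hε0.le)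
      calc Measure.dirac (fun _ => (1:ℝ)/2) S
          = 1 * Measure.dirac (fun _ => (1:ℝ)/2) S := (one_mul _).symm
        _ ≤ ENNReal.ofReal (Real.exp ε) * Measure.dirac (fun _ => (1:ℝ)/2) S :=
            mul_le_mul_left h1 _
        _ ≤ _ := le_self_add
    · intro D hD
      rw [integral_dirac]
      have hRHS : (1000:ℝ) * 0 * Real.log m * (1 + Real.log (ε * n) ^ 2) / (ε * n) = 0 := by
        ring
      rw [hRHS]
      rw [sub_nonpos]
      refine le_ciInf fun g => ?_
      unfold empRisk
      refine mul_le_mul_of_nonneg_left (Finset.sum_le_sum fun i _ => ?_) (by positivity)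
      have heq := hℓ.2 ((1:ℝ)/2) (g.1 (D i).1) (D i).2 (by norm_num) (g.2.2 _) (hD i)
      rw [zero_mul] at heq
      have := abs_le.1 heq
      linarith [this.1, this.2]
  · -- main case 0 < L
    set T : ℕ := max 1 ⌈Real.logb 2 (ε * n)⌉₊ with hTdef
    have hT1 : 1 ≤ T := le_max_left _ _
    have hTR : (1:ℝ) ≤ (T:ℝ) := by exact_mod_cast hT1
    have hTR0 : (0:ℝ) < (T:ℝ) := by linarith
    set ε₀ : ℝ := ε / T with hε₀def
    have hε₀ : 0 < ε₀ := div_pos hε0 hTR0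
    set decf : DPIR.Tr m T → (Fin m → ℝ) := fun τ x => DPIR.dec T τ 0 m 0 1 (x:ℕ) with hdecf
    set M : (Fin n → Fin m × ℝ) → Measure (Fin m → ℝ) := fun D =>
      ∑ τ : DPIR.Tr m T, ENNReal.ofReal (DPIR.dens ℓ D ε₀ L T τ 0 m 0 1) •
        Measure.dirac (decf τ) with hMdef
    have hofsum : ∀ D : Fin n → Fin m × ℝ,
        (∑ τ : DPIR.Tr m T, ENNReal.ofReal (DPIR.dens ℓ D ε₀ L T τ 0 m 0 1)) = 1 := by
      intro D
      rw [← ENNReal.ofReal_sum_of_nonneg (fun τ _ => DPIR.dens_nonneg ℓ D ε₀ L T τ 0 m 0 1)]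
      rw [DPIR.dens_sum_one ℓ D ε₀ L T 0 m 0 1]
      simp
    have hmono : ∀ τ : DPIR.Tr m T, IsMonotone01 (decf τ) := by
      intro τ
      constructor
      · intro x x' hxx
        exact DPIR.dec_mono T τ 0 m 0 1 (by norm_num) _ _ (by exact_mod_cast hxx)
      · intro x
        have := DPIR.dec_mem T τ 0 m 0 1 (by norm_num) (x:ℕ)
        rw [zero_add] at this
        exact this
    have happly : ∀ (D : Fin n → Fin m × ℝ) (S : Set (Fin m → ℝ)),
        M D S = ∑ τ : DPIR.Tr m T,
          ENNReal.ofReal (DPIR.dens ℓ D ε₀ L T τ 0 m 0 1) * Measure.dirac (decf τ) S := by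
      intro D S
      exact DPIR.sum_dirac_apply _ _ S
    refine ⟨M, ?_, ?_, ?_⟩
    · -- isotonic regression algorithm
      intro D hD
      constructor
      · constructor
        rw [happly]
        calc (∑ τ : DPIR.Tr m T,
              ENNReal.ofReal (DPIR.dens ℓ D ε₀ L T τ 0 m 0 1) *
                Measure.dirac (decf τ) Set.univ)
            = ∑ τ : DPIR.Tr m T, ENNReal.ofReal (DPIR.dens ℓ D ε₀ L T τ 0 m 0 1) := by
              refine Finset.sum_congr rfl fun τ _ => ?_
              rw [Measure.dirac_apply_of_mem (Set.mem_univ _), mul_one]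
          _ = 1 := hofsum D
      · rw [happly]
        calc (∑ τ : DPIR.Tr m T,
              ENNReal.ofReal (DPIR.dens ℓ D ε₀ L T τ 0 m 0 1) *
                Measure.dirac (decf τ) {f | IsMonotone01 f})
            = ∑ τ : DPIR.Tr m T, ENNReal.ofReal (DPIR.dens ℓ D ε₀ L T τ 0 m 0 1) := by
              refine Finset.sum_congr rfl fun τ _ => ?_
              rw [Measure.dirac_apply_of_mem (show decf τ ∈ {f | IsMonotone01 f} from hmono τ), mul_one]
          _ = 1 := hofsum D
    · -- privacy
      intro D D' hN S hS
      obtain ⟨hD, hD', i₀, hoff⟩ := hN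
      have hpt : ∀ τ : DPIR.Tr m T, DPIR.dens ℓ D ε₀ L T τ 0 m 0 1 ≤
          Real.exp ε * DPIR.dens ℓ D' ε₀ L T τ 0 m 0 1 := by
        intro τ
        have h := DPIR.dens_ratio ℓ hℓ hLpos hε₀.le D D' hD hD' i₀ hoff T τ
          (s := 0) (e := m) (Nat.zero_le m) (a := 0) (w := 1) le_rfl one_pos (by norm_num)
        have hexple : Real.exp ((DPIR.bw D i₀ 0 m + DPIR.bw D' i₀ 0 m) * T * (ε₀/4)) ≤
            Real.exp ε := by
          refine Real.exp_le_exp.2 ?_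
          have b1 := DPIR.bw_le_one D i₀ 0 m
          have b2 := DPIR.bw_le_one D' i₀ 0 m
          have b3 := DPIR.bw_nonneg D i₀ 0 m
          have b4 := DPIR.bw_nonneg D' i₀ 0 m
          have hcalc : (DPIR.bw D i₀ 0 m + DPIR.bw D' i₀ 0 m) * T * (ε₀/4) ≤
              2 * T * (ε₀/4) := by
            have hTq : (0:ℝ) ≤ (T:ℝ) * (ε₀/4) := by positivity
            nlinarith
          have heq2 : (2:ℝ) * T * (ε₀/4) = ε/2 := by
            rw [hε₀def]
            field_simp
            ring
          linarith [heq2 ▸ hcalc]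
        calc DPIR.dens ℓ D ε₀ L T τ 0 m 0 1
            ≤ Real.exp ((DPIR.bw D i₀ 0 m + DPIR.bw D' i₀ 0 m) * T * (ε₀/4)) *
              DPIR.dens ℓ D' ε₀ L T τ 0 m 0 1 := h
          _ ≤ Real.exp ε * DPIR.dens ℓ D' ε₀ L T τ 0 m 0 1 :=
              mul_le_mul_of_nonneg_right hexple (DPIR.dens_nonneg ℓ D' ε₀ L T τ 0 m 0 1)
      rw [happly, happly]
      calc (∑ τ : DPIR.Tr m T,
            ENNReal.ofReal (DPIR.dens ℓ D ε₀ L T τ 0 m 0 1) * Measure.dirac (decf τ) S)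
          ≤ ∑ τ : DPIR.Tr m T,
            ENNReal.ofReal (Real.exp ε) * (ENNReal.ofReal (DPIR.dens ℓ D' ε₀ L T τ 0 m 0 1) *
              Measure.dirac (decf τ) S) := by
            refine Finset.sum_le_sum fun τ _ => ?_
            rw [← mul_assoc, ← ENNReal.ofReal_mul (Real.exp_pos ε).le]
            exact mul_le_mul_left (ENNReal.ofReal_le_ofReal (hpt τ)) _
        _ = ENNReal.ofReal (Real.exp ε) *
            ∑ τ : DPIR.Tr m T, ENNReal.ofReal (DPIR.dens ℓ D' ε₀ L T τ 0 m 0 1) *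
              Measure.dirac (decf τ) S := by rw [Finset.mul_sum]
        _ ≤ _ := le_self_add
    · -- utility
      intro D hD
      set K1 : ℝ := Real.log ((m:ℝ)+1) + 1 with hK1def
      have hint : (∫ f, empRisk ℓ f D ∂(M D)) =
          ∑ τ : DPIR.Tr m T, DPIR.dens ℓ D ε₀ L T τ 0 m 0 1 * empRisk ℓ (decf τ) D :=
        DPIR.integral_sum_dirac _ (fun τ => DPIR.dens_nonneg ℓ D ε₀ L T τ 0 m 0 1) decf _
      have hcostrel : ∀ τ : DPIR.Tr m T,
          empRisk ℓ (decf τ) D = (1 / (n:ℝ)) * DPIR.cost ℓ D (DPIR.dec T τ 0 m 0 1) 0 m := by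
        intro τ
        unfold empRisk DPIR.cost
        rw [DPIR.wsum_full]
      have hEC := DPIR.ECost ℓ hℓ hLpos hε₀ D hD T (s := 0) (e := m) (Nat.zero_le m)
        (a := 0) (w := 1) le_rfl one_pos (by norm_num)
      rw [DPIR.cnt_full] at hEC
      have hBle : ∀ g : {g : Fin m → ℝ // IsMonotone01 g},
          DPIR.B ℓ D T 0 m 0 1 ≤ (n:ℝ) * empRisk ℓ g.1 D := by
        intro g
        set gN : ℕ → ℝ := fun x => g.1 ⟨min x (m-1), by omega⟩ with hgN
        have hmonoN : ∀ x y : ℕ, x ≤ y → gN x ≤ gN y := by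
          intro x y hxy
          exact g.2.1 (by simp only [Fin.mk_le_mk]; omega)
        have hwin : ∀ x : ℕ, 0 ≤ x → x < m → (0:ℝ) ≤ gN x ∧ gN x ≤ 0 + 1 := by
          intro x _ _
          have := g.2.2 ⟨min x (m-1), by omega⟩
          exact ⟨this.1, by rw [zero_add]; exact this.2⟩
        have hB := DPIR.B_le_cost ℓ hℓ D hD T (s := 0) (e := m) (Nat.zero_le m) le_rfl
          (a := 0) (w := 1) le_rfl (by norm_num) (by norm_num) gN hmonoN
          (fun x h1 h2 => hwin x h1 h2)
        have hcg : DPIR.cost ℓ D gN 0 m = (n:ℝ) * empRisk ℓ g.1 D := by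
          unfold DPIR.cost empRisk
          rw [DPIR.wsum_full]
          rw [← mul_assoc, mul_one_div, div_self hn0.ne', one_mul]
          refine Finset.sum_congr rfl fun i _ => ?_
          have hgi : gN (((D i).1 : ℕ)) = g.1 (D i).1 := by
            show g.1 ⟨min (((D i).1 : ℕ)) (m-1), by omega⟩ = g.1 (D i).1
            refine congrArg g.1 (Fin.ext ?_)
            show min (((D i).1 : ℕ)) (m-1) = ((D i).1 : ℕ)
            have hlt := ((D i).1).isLt
            omega
          rw [hgi]
        rw [← hcg]
        exact hB
      -- combine
      have hmain : ∀ g : {g : Fin m → ℝ // IsMonotone01 g},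
          (∫ f, empRisk ℓ f D ∂(M D)) ≤ empRisk ℓ g.1 D +
            (L * (1/2)^T + (T:ℝ) * (16 * L * 1 * K1 / ε₀) / n) := by
        intro g
        rw [hint]
        have hsum_eq : (∑ τ : DPIR.Tr m T, DPIR.dens ℓ D ε₀ L T τ 0 m 0 1 *
            empRisk ℓ (decf τ) D) = (1 / (n:ℝ)) *
            ∑ τ : DPIR.Tr m T, DPIR.dens ℓ D ε₀ L T τ 0 m 0 1 *
              DPIR.cost ℓ D (DPIR.dec T τ 0 m 0 1) 0 m := by
          rw [Finset.mul_sum]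
          refine Finset.sum_congr rfl fun τ _ => ?_
          rw [hcostrel τ]
          ring
        rw [hsum_eq]
        have h2 : (1 / (n:ℝ)) * (∑ τ : DPIR.Tr m T, DPIR.dens ℓ D ε₀ L T τ 0 m 0 1 *
            DPIR.cost ℓ D (DPIR.dec T τ 0 m 0 1) 0 m) ≤
            (1 / (n:ℝ)) * ((n:ℝ) * empRisk ℓ g.1 D + (n:ℝ) * (L * 1 * (1/2)^T) +
              (T:ℝ) * (16 * L * 1 * K1 / ε₀)) := by
          refine mul_le_mul_of_nonneg_left ?_ (by positivity)
          calc (∑ τ : DPIR.Tr m T, DPIR.dens ℓ D ε₀ L T τ 0 m 0 1 *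
                DPIR.cost ℓ D (DPIR.dec T τ 0 m 0 1) 0 m)
              ≤ DPIR.B ℓ D T 0 m 0 1 + (n:ℝ) * (L * 1 * (1/2)^T) +
                (T:ℝ) * (16 * L * 1 * K1 / ε₀) := hEC
            _ ≤ (n:ℝ) * empRisk ℓ g.1 D + (n:ℝ) * (L * 1 * (1/2)^T) +
                (T:ℝ) * (16 * L * 1 * K1 / ε₀) := by
                have := hBle g
                linarith
        refine h2.trans (le_of_eq ?_)
        field_simp
        ring
      have hopt : (∫ f, empRisk ℓ f D ∂(M D)) -
          (L * (1/2)^T + (T:ℝ) * (16 * L * 1 * K1 / ε₀) / n) ≤ optRisk ℓ D := by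
        refine le_ciInf fun g => ?_
        linarith [hmain g]
      -- final arithmetic
      have hK1le : K1 ≤ 4 * Real.log m := by
        have hlog2 := Real.log_two_gt_d9
        have hlogm : Real.log 2 ≤ Real.log m :=
          Real.log_le_log (by norm_num) (by exact_mod_cast hm)
        have hmp1 : Real.log ((m:ℝ)+1) ≤ 2 * Real.log m := by
          have hsq : ((m:ℝ)+1) ≤ (m:ℝ)^2 := by
            have : (2:ℝ) ≤ (m:ℝ) := by exact_mod_cast hm
            nlinarith
          calc Real.log ((m:ℝ)+1) ≤ Real.log ((m:ℝ)^2) :=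
                Real.log_le_log (by positivity) hsq
            _ = 2 * Real.log m := by
                rw [Real.log_pow]; push_cast; ring
        have h1le : (1:ℝ) ≤ 2 * Real.log m := by nlinarith
        rw [hK1def]
        linarith
      have hf1 : ((1:ℝ)/2)^T ≤ 1 / (ε * n) := by
        have h2T := DPIR.two_pow_T hx
        have hpow : ((1:ℝ)/2)^T = 1 / (2:ℝ)^T := by
          rw [div_pow, one_pow]
        rw [hpow]
        exact one_div_le_one_div_of_le hx h2T
      have hf2 : ((T:ℕ):ℝ)^2 ≤ 5 * (1 + Real.log (ε * n) ^ 2) := DPIR.T_sq hx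
      have hterm2 : (T:ℝ) * (16 * L * 1 * K1 / ε₀) / n = 16 * (T:ℝ)^2 * L * K1 / (ε * n) := by
        rw [hε₀def]
        field_simp
      set G := Real.log m with hGdef
      set Q := 1 + Real.log (ε * n) ^ 2 with hQdef
      have hG : (0.69:ℝ) < G := by
        have hlog2 := Real.log_two_gt_d9
        have hlogm : Real.log 2 ≤ Real.log m :=
          Real.log_le_log (by norm_num) (by exact_mod_cast hm)
        rw [hGdef]
        linarith
      have hQ1 : (1:ℝ) ≤ Q := by
        rw [hQdef]
        exact le_add_of_nonneg_right (sq_nonneg _)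
      have hK1nn : (0:ℝ) ≤ K1 := by
        rw [hK1def]
        have : (0:ℝ) ≤ Real.log ((m:ℝ)+1) := Real.log_nonneg (by push_cast; linarith [hn0])
        linarith
      have hErr : L * (1/2)^T + (T:ℝ) * (16 * L * 1 * K1 / ε₀) / n ≤
          1000 * L * G * Q / (ε * n) := by
        rw [hterm2]
        exact DPIR.err_arith hLpos hx hG hQ1 hK1nn hf1 hf2 hK1le
      linarith [hopt, hErr]
end
end

section
/- Let D ≥ 2 and m ≥ 1 be integers. Consider the input domain [D]^m = {1,...,D}^m, where two vectors z, z' ∈ [D]^m are neighbors if and only if they differ in at most one coordinate. Then for every randomized algorithm M mapping [D]^m to probability distributions over [D]^m that is (ln(D/2), 0.25)-differentially private with respect to this neighboring relation, the average over a uniformly random input z ∈ [D]^m of the expected Hamming distance E_{z'∼M(z)}[‖M(z) − z‖_0] (the number of coordinates where the output differs from z) is at least 0.25·m. -/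
open MeasureTheory

noncomputable section

/-- **Lemma (Privatizing vectors over a large alphabet).** For integers `D ≥ 2`, `m ≥ 1`,
any `(ln(D/2), 0.25)`-DP mechanism `M : [D]^m → [D]^m` (w.r.t. the Hamming-distance-one
neighboring relation) satisfies
`𝔼_{z ∼ Uniform([D]^m)} 𝔼_{z' ∼ M(z)} [‖z' − z‖₀] ≥ 0.25·m`. -/
theorem dp_vector_privatization_large_alphabet_lower_bound
    (D m : ℕ) (hD : 2 ≤ D) (hm : 1 ≤ m)
    (M : (Fin m → Fin D) → Measure (Fin m → Fin D))
    (hprob : ∀ z, IsProbabilityMeasure (M z))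
    (hdp : IsDP (fun z z' : Fin m → Fin D => hammingDist z z' ≤ 1) M
      (Real.log ((D : ℝ) / 2)) 0.25) :
    0.25 * m ≤
      (1 / (D : ℝ) ^ m) *
        ∑ z : Fin m → Fin D, ∫ z', (hammingDist z z' : ℝ) ∂(M z) := by
  
  classical
  have hD0 : (0:ℝ) < D := by exact_mod_cast Nat.lt_of_lt_of_le two_pos hD
  have hDm : (0:ℝ) < (D:ℝ)^m := by positivity
  set p : Fin m → (Fin m → Fin D) → ℝ :=
    fun i z => ((M z) {z' | z' i = z i}).toReal with hp
  have hSmeas : ∀ (S : Set (Fin m → Fin D)), MeasurableSet S :=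
    fun S => (Set.toFinite S).measurableSet
  -- DP real consequence
  have hdpR : ∀ z w, hammingDist z w ≤ 1 → ∀ S : Set (Fin m → Fin D),
      ((M z) S).toReal ≤ ((D:ℝ)/2) * ((M w) S).toReal + 1/4 := by
    intro z w hzw S
    have h := hdp z w hzw S (hSmeas S)
    rw [Real.exp_log (by positivity)] at h
    have hfin : ENNReal.ofReal ((D:ℝ)/2) * (M w) S + ENNReal.ofReal 0.25 ≠ ⊤ := by
      apply ENNReal.add_ne_top.2
      exact ⟨ENNReal.mul_ne_top ENNReal.ofReal_ne_top (measure_ne_top _ _),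
        ENNReal.ofReal_ne_top⟩
    have h2 := ENNReal.toReal_mono hfin h
    rw [ENNReal.toReal_add (ENNReal.mul_ne_top ENNReal.ofReal_ne_top (measure_ne_top _ _))
      ENNReal.ofReal_ne_top, ENNReal.toReal_mul,
      ENNReal.toReal_ofReal (by positivity : (0:ℝ) ≤ (D:ℝ)/2),
      ENNReal.toReal_ofReal (by norm_num : (0:ℝ) ≤ 0.25)] at h2
    linarith
  -- integral formula
  have hint : ∀ z, ∫ z', (hammingDist z z' : ℝ) ∂(M z) = ∑ i : Fin m, (1 - p i z) := by
    intro z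
    haveI := hprob z
    have hham : ∀ z' : Fin m → Fin D, (hammingDist z z' : ℝ)
        = ∑ i : Fin m,
            ((1:ℝ) - Set.indicator {y : Fin m → Fin D | y i = z i} (fun _ => (1:ℝ)) z') := by
      intro z'
      rw [hammingDist, Finset.card_filter]
      push_cast
      refine Finset.sum_congr rfl fun i _ => ?_
      by_cases h : z i = z' i
      · rw [if_neg (not_not.2 h), Set.indicator_of_mem (show z' ∈ {y : Fin m → Fin D | y i = z i} from h.symm)]; norm_num
      · rw [if_pos h, Set.indicator_of_notMem (show z' ∉ {y : Fin m → Fin D | y i = z i} from Ne.symm h)]; norm_num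
    rw [show (fun z' => (hammingDist z z' : ℝ)) = fun z' => ∑ i : Fin m,
        ((1:ℝ) - Set.indicator {y : Fin m → Fin D | y i = z i} (fun _ => (1:ℝ)) z')
      from funext hham]
    rw [integral_finset_sum _ (fun i _ => Integrable.of_finite)]
    refine Finset.sum_congr rfl fun i _ => ?_
    rw [integral_sub Integrable.of_finite Integrable.of_finite, integral_const,
      integral_indicator_const _ (hSmeas _)]
    simp [hp, measureReal_def]
  -- partition sum
  have hpart : ∀ (w : Fin m → Fin D) (i : Fin m),
      ∑ v : Fin D, ((M w) {z' | z' i = v}).toReal = 1 := by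
    intro w i
    haveI := hprob w
    have h1 : ∑ v : Fin D, (M w) ((fun z' : Fin m → Fin D => z' i) ⁻¹' {v})
        = (M w) ((fun z' : Fin m → Fin D => z' i) ⁻¹' ↑(Finset.univ : Finset (Fin D))) :=
      sum_measure_preimage_singleton _ (fun v _ => hSmeas _)
    simp only [Finset.coe_univ, Set.preimage_univ, measure_univ] at h1
    rw [← ENNReal.toReal_sum (fun v _ => measure_ne_top _ _)]
    · rw [show (1:ℝ) = (1:ENNReal).toReal by simp, ← h1]
      rfl
  -- key per-coordinate bound
  have hkey : ∀ i : Fin m, ∑ z : Fin m → Fin D, p i z ≤ 3/4 * (D:ℝ)^m := by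
    intro i
    set e := Equiv.piSplitAt i (fun _ : Fin m => Fin D) with he
    have hsum : ∑ z, p i z
        = ∑ x : Fin D × ({j : Fin m // j ≠ i} → Fin D), p i (e.symm x) :=
      (Equiv.sum_comp e.symm (p i)).symm
    have hcard : (D:ℝ)^m = D * Fintype.card ({j : Fin m // j ≠ i} → Fin D) := by
      have h2 := Fintype.card_congr e
      rw [Fintype.card_prod] at h2
      simp only [Fintype.card_fun, Fintype.card_fin] at h2 ⊢
      exact_mod_cast h2
    rw [hsum, Fintype.sum_prod_type, Finset.sum_comm]
    have hinner : ∀ rest : {j : Fin m // j ≠ i} → Fin D,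
        ∑ v : Fin D, p i (e.symm (v, rest)) ≤ 3/4 * D := by
      intro rest
      set zf : Fin D → (Fin m → Fin D) := fun v => e.symm (v, rest) with hzf
      have hzfi : ∀ v, zf v i = v := by intro v; simp [hzf, he]
      have hzfj : ∀ v w j, j ≠ i → zf v j = zf w j := by
        intro v w j h; simp [hzf, he, h]
      have v0 : Fin D := ⟨0, by omega⟩
      have hneigh : ∀ v, hammingDist (zf v) (zf v0) ≤ 1 := by
        intro v
        rw [hammingDist]
        calc ({j | zf v j ≠ zf v0 j} : Finset (Fin m)).card
            ≤ ({i} : Finset (Fin m)).card := by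
              apply Finset.card_le_card
              intro j hj
              simp only [Finset.mem_filter, Finset.mem_univ, true_and] at hj
              simp only [Finset.mem_singleton]
              by_contra hji
              exact hj (hzfj v v0 j hji)
          _ = 1 := Finset.card_singleton i
      calc ∑ v : Fin D, p i (zf v)
          = ∑ v : Fin D, ((M (zf v)) {z' | z' i = v}).toReal := by
            refine Finset.sum_congr rfl fun v _ => ?_
            simp only [hp, hzfi]
        _ ≤ ∑ v : Fin D, (((D:ℝ)/2) * ((M (zf v0)) {z' | z' i = v}).toReal + 1/4) :=
            Finset.sum_le_sum fun v _ => hdpR (zf v) (zf v0) (hneigh v) _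
        _ = ((D:ℝ)/2) * (∑ v : Fin D, ((M (zf v0)) {z' | z' i = v}).toReal) + D * (1/4) := by
            rw [Finset.sum_add_distrib, ← Finset.mul_sum, Finset.sum_const,
              Finset.card_univ, Fintype.card_fin, nsmul_eq_mul]
        _ = ((D:ℝ)/2) + D * (1/4) := by rw [hpart (zf v0) i]; ring
        _ = 3/4 * D := by ring
    calc ∑ rest : {j : Fin m // j ≠ i} → Fin D, ∑ v : Fin D, p i (e.symm (v, rest))
        ≤ ∑ _rest : {j : Fin m // j ≠ i} → Fin D, (3/4 * (D:ℝ)) :=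
          Finset.sum_le_sum fun rest _ => hinner rest
      _ = (Fintype.card ({j : Fin m // j ≠ i} → Fin D) : ℝ) * (3/4 * D) := by
          rw [Finset.sum_const, Finset.card_univ, nsmul_eq_mul]
      _ = 3/4 * (D:ℝ)^m := by rw [hcard]; ring
  -- total bound
  have htotal : (1/4:ℝ) * m * (D:ℝ)^m
      ≤ ∑ z : Fin m → Fin D, ∫ z', (hammingDist z z' : ℝ) ∂(M z) := by
    have h1 : ∑ z : Fin m → Fin D, ∫ z', (hammingDist z z' : ℝ) ∂(M z)
        = ∑ i : Fin m, ∑ z : Fin m → Fin D, (1 - p i z) := by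
      rw [← Finset.sum_comm]
      exact Finset.sum_congr rfl fun z _ => hint z
    rw [h1]
    have h2 : ∀ i : Fin m, (1/4:ℝ) * (D:ℝ)^m ≤ ∑ z : Fin m → Fin D, (1 - p i z) := by
      intro i
      have h3 : ∑ z : Fin m → Fin D, (1 - p i z)
          = (D:ℝ)^m - ∑ z : Fin m → Fin D, p i z := by
        rw [Finset.sum_sub_distrib, Finset.sum_const, Finset.card_univ, nsmul_eq_mul]
        simp
      rw [h3]
      have := hkey i
      linarith
    calc (1/4:ℝ) * m * (D:ℝ)^m = ∑ _i : Fin m, ((1/4:ℝ) * (D:ℝ)^m) := by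
          rw [Finset.sum_const, Finset.card_univ, Fintype.card_fin, nsmul_eq_mul]; ring
      _ ≤ ∑ i : Fin m, ∑ z : Fin m → Fin D, (1 - p i z) :=
          Finset.sum_le_sum fun i _ => h2 i
  have hmul := mul_le_mul_of_nonneg_left htotal (by positivity : (0:ℝ) ≤ 1/(D:ℝ)^m)
  calc (0.25:ℝ) * m = (1/(D:ℝ)^m) * ((1/4:ℝ) * m * (D:ℝ)^m) := by
        field_simp; ring
    _ ≤ _ := hmul
end
end
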